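/- arXiv:math/0512196 — 6 statements merged into one kernel-verified Lean document; each statement's English description precedes it below -/
import Mathlib

section
/- If a pointed normed cone K has a sub-invariant norm, then 0 = e, and for every α∈(0,1) the neutral element e is the only element of K(α) having finite norm. -/
open Filter Topology

/-- If a pointed normed cone `K` (a pointed convex cone whose
(extended-valued) metric is homogeneous at the origin `o`, the norm being
`‖x‖ = edist x o`) has a sub-invariant norm (`edist (x + h) x ≤ edist h o` for all
`x, h`), then the origin coincides with the neutral element, and for every
`α ∈ (0,1)` the neutral element is the only `α`-stable element with finite norm.
Here the Lean `0 : K` denotes the paper's neutral element `e`, and `o : K` denotes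
the paper's origin `𝟎`. -/
theorem origin_eq_neutral_and_alphaStable_trivial_of_subinvariant_norm
    {K : Type*} [EMetricSpace K] [CompleteSpace K] [SecondCountableTopology K]
    [AddCommMonoid K] [SMul ℝ K]
    (hadd_cont : Continuous fun p : K × K => p.1 + p.2)
    (hsmul_cont : ContinuousOn (fun p : ℝ × K => p.1 • p.2)
      (Set.Ioi (0 : ℝ) ×ˢ (Set.univ : Set K)))
    (hsmul_add : ∀ a : ℝ, 0 < a → ∀ x y : K, a • (x + y) = a • x + a • y)
    (hsmul_assoc : ∀ a b : ℝ, 0 < a → 0 < b → ∀ x : K, a • (b • x) = (a * b) • x)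
    (hone_smul : ∀ x : K, (1 : ℝ) • x = x)
    (hsmul_e : ∀ a : ℝ, 0 < a → a • (0 : K) = (0 : K))
    (o : K)
    (horigin : ∀ x : K, x ≠ 0 →
      Tendsto (fun a : ℝ => a • x) (𝓝[>] (0 : ℝ)) (𝓝 o))
    (horigin_unique : ∀ o' : K, (∀ x : K, x ≠ 0 →
      Tendsto (fun a : ℝ => a • x) (𝓝[>] (0 : ℝ)) (𝓝 o')) → o' = o)
    (hhom : ∀ a : ℝ, 0 < a → ∀ x : K, edist (a • x) o = ENNReal.ofReal a * edist x o)
    (hsub : ∀ x h : K, edist (x + h) x ≤ edist h o) :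
    o = (0 : K) ∧
      ∀ α : ℝ, 0 < α → α < 1 → ∀ z : K, edist z o ≠ ⊤ →
        (∀ a b : ℝ, 0 < a → 0 < b →
          (a ^ (1 / α)) • z + (b ^ (1 / α)) • z = ((a + b) ^ (1 / α)) • z) →
        z = 0 := by
  -- Part 1: o = 0
  have part1 : o = (0 : K) := by
    by_cases hK : ∀ x : K, x = 0
    · exact (horigin_unique 0 (fun x hx => absurd (hK x) hx)).symm
    · push_neg at hK
      obtain ⟨y, hy⟩ := hK
      have hy_t := horigin y hy
      -- finiteness of edist y o
      have hfin : edist y o ≠ ⊤ := by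
        rw [EMetric.tendsto_nhds] at hy_t
        obtain ⟨a, ha1, ha0⟩ := ((hy_t 1 (by norm_num)).and self_mem_nhdsWithin).exists
        rw [hhom a ha0 y] at ha1
        intro htop
        rw [htop, ENNReal.mul_top (ENNReal.ofReal_pos.mpr ha0).ne'] at ha1
        exact (lt_irrefl _ (ha1.trans (by norm_num)))
      -- x + a•y → x
      have key : ∀ x : K, x + o = x := by
        intro x
        have h1 : Tendsto (fun a : ℝ => x + a • y) (𝓝[>] (0:ℝ)) (𝓝 (x + o)) :=
          (hadd_cont.tendsto (x, o)).comp (tendsto_const_nhds.prodMk_nhds hy_t)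
        have h2 : Tendsto (fun a : ℝ => x + a • y) (𝓝[>] (0:ℝ)) (𝓝 x) := by
          rw [EMetric.tendsto_nhds]
          intro ε hε
          have hbound : Tendsto (fun a : ℝ => ENNReal.ofReal a * edist y o)
              (𝓝[>] (0:ℝ)) (𝓝 0) := by
            have : Tendsto (fun a : ℝ => ENNReal.ofReal a) (𝓝[>] (0:ℝ)) (𝓝 0) := by
              have := (ENNReal.continuous_ofReal.tendsto 0).mono_left
                (nhdsWithin_le_nhds : 𝓝[>] (0:ℝ) ≤ 𝓝 0)
              simpa using this
            simpa using ENNReal.Tendsto.mul_const this (Or.inr hfin)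
          filter_upwards [hbound (Iio_mem_nhds hε),
            self_mem_nhdsWithin] with a hlt ha0
          calc edist (x + a • y) x ≤ edist (a • y) o := hsub x (a • y)
            _ = ENNReal.ofReal a * edist y o := hhom a ha0 y
            _ < ε := hlt
        exact tendsto_nhds_unique h1 h2
      have := key 0
      rwa [zero_add] at this
  refine ⟨part1, ?_⟩
  intro α hα0 hα1 z hzfin hstable
  have h11 := hstable 1 1 one_pos one_pos
  rw [Real.one_rpow, hone_smul] at h11
  -- z + z = 2^(1/α) • z
  have hconst : (1:ℝ) + 1 = 2 := by norm_num
  rw [hconst] at h11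
  have hexp : (1:ℝ) < 1 / α := (one_lt_div hα0).mpr hα1
  have h2pos : (0:ℝ) < 2 ^ (1/α) := Real.rpow_pos_of_pos (by norm_num) _
  have hnorm : ENNReal.ofReal (2 ^ (1/α)) * edist z o ≤ 2 * edist z o := by
    calc ENNReal.ofReal (2 ^ (1/α)) * edist z o
        = edist ((2 ^ (1/α) : ℝ) • z) o := (hhom _ h2pos z).symm
      _ = edist (z + z) o := by rw [h11]
      _ ≤ edist (z + z) z + edist z o := edist_triangle _ _ _
      _ ≤ edist z o + edist z o := add_le_add_left (hsub z z) _
      _ = 2 * edist z o := (two_mul _).symm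
  have hlt2 : (2 : ENNReal) < ENNReal.ofReal (2 ^ (1/α)) := by
    have : (2:ℝ) < 2 ^ (1/α) := by
      calc (2:ℝ) = 2 ^ (1:ℝ) := (Real.rpow_one 2).symm
        _ < 2 ^ (1/α) := Real.rpow_lt_rpow_left_iff (by norm_num) |>.mpr hexp
    calc (2 : ENNReal) = ENNReal.ofReal 2 := by simp
      _ < ENNReal.ofReal (2 ^ (1/α)) := ENNReal.ofReal_lt_ofReal_iff_of_nonneg (by norm_num) |>.mpr this
  have hz0 : edist z o = 0 := by
    by_contra hz
    have : 2 * edist z o < ENNReal.ofReal (2 ^ (1/α)) * edist z o := by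
      rw [mul_comm 2, mul_comm (ENNReal.ofReal _)]; exact ENNReal.mul_lt_mul_right hz hzfin hlt2
    exact absurd hnorm (not_le.mpr this)
  have : z = o := by rwa [edist_eq_zero] at hz0
  rw [this, part1]
end

section
/- A convex cone K with a metric d can be isometrically embedded into a Banach space — i.e. there exist a Banach space B and an injection I: K → B such that I(a·x + b·y) = a·I(x) + b·I(y) for all a,b>0 and x,y∈K, and d(x,y) = ‖I(x) − I(y)‖ for all x,y∈K — if and only if the second distributivity law holds and d is homogeneous (d(a·x, a·y) = a·d(x,y) for all a>0, x,y∈K) and invariant (d(x+z, y+z) = d(x,y) for all x,y,z∈K). -/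
open Filter Topology

universe u

structure ConeHyp (K : Type u) [MetricSpace K] [AddCommMonoid K] [SMul ℝ K] : Prop where
  hsmul_add : ∀ a : ℝ, 0 < a → ∀ x y : K, a • (x + y) = a • x + a • y
  hsmul_assoc : ∀ a b : ℝ, 0 < a → 0 < b → ∀ x : K, a • (b • x) = (a * b) • x
  hone_smul : ∀ x : K, (1 : ℝ) • x = x
  hsmul_e : ∀ a : ℝ, 0 < a → a • (0 : K) = (0 : K)
  hadd_smul : ∀ a b : ℝ, 0 < a → 0 < b → ∀ x : K, (a + b) • x = a • x + b • x
  hhomog : ∀ a : ℝ, 0 < a → ∀ x y : K, dist (a • x) (a • y) = a * dist x y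
  hinvar : ∀ x y z : K, dist (x + z) (y + z) = dist x y

namespace ConeHyp

variable {K : Type u} [MetricSpace K] [AddCommMonoid K] [SMul ℝ K]

theorem cancel (h : ConeHyp K) {x y z : K} (e : x + z = y + z) : x = y := by
  have h1 := h.hinvar x y z
  rw [e, dist_self] at h1
  exact dist_eq_zero.mp h1.symm

/-- The Grothendieck-group setoid on `K × K`. -/
def st (h : ConeHyp K) : Setoid (K × K) :=
  ⟨fun p q => p.1 + q.2 = q.1 + p.2, by
    refine ⟨fun p => rfl, fun {p q} e => e.symm, fun {p q r} e1 e2 => ?_⟩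
    apply h.cancel (z := q.2)
    calc p.1 + r.2 + q.2 = p.1 + q.2 + r.2 := by abel_nf
      _ = q.1 + p.2 + r.2 := by rw [e1]
      _ = q.1 + r.2 + p.2 := by abel_nf
      _ = r.1 + q.2 + p.2 := by rw [e2]
      _ = r.1 + p.2 + q.2 := by abel_nf⟩

/-- The Grothendieck group of the cone. -/
def G (h : ConeHyp K) : Type u := Quotient h.st

variable (h : ConeHyp K)

def qmk (p : K × K) : h.G := Quotient.mk h.st p

theorem qmk_eq_qmk {p q : K × K} : h.qmk p = h.qmk q ↔ p.1 + q.2 = q.1 + p.2 := by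
  constructor
  · exact fun e => Quotient.exact e
  · exact fun e => Quotient.sound e

theorem gind {motive : h.G → Prop} (hm : ∀ p, motive (h.qmk p)) : ∀ g, motive g :=
  fun g => Quotient.inductionOn g hm

def gadd : h.G → h.G → h.G := Quotient.map₂ (fun p q => (p.1 + q.1, p.2 + q.2)) (by
    intro p q e1 r s e2
    have e1' : p.1 + q.2 = q.1 + p.2 := e1
    have e2' : r.1 + s.2 = s.1 + r.2 := e2
    show p.1 + r.1 + (q.2 + s.2) = q.1 + s.1 + (p.2 + r.2)
    calc p.1 + r.1 + (q.2 + s.2) = (p.1 + q.2) + (r.1 + s.2) := by abel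
      _ = (q.1 + p.2) + (s.1 + r.2) := by rw [e1', e2']
      _ = q.1 + s.1 + (p.2 + r.2) := by abel)

def gneg : h.G → h.G := Quotient.map (fun p => (p.2, p.1)) (by
    intro p q e
    have e' : p.1 + q.2 = q.1 + p.2 := e
    show p.2 + q.1 = q.2 + p.1
    rw [add_comm p.2 q.1, add_comm q.2 p.1]
    exact e'.symm)

theorem gadd_qmk (p q : K × K) : h.gadd (h.qmk p) (h.qmk q) = h.qmk (p.1 + q.1, p.2 + q.2) := rfl
theorem gneg_qmk (p : K × K) : h.gneg (h.qmk p) = h.qmk (p.2, p.1) := rfl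

def gnsmul : ℕ → h.G → h.G := fun n g => Nat.rec (h.qmk (0, 0)) (fun _ ih => h.gadd ih g) n

def gzsmul : ℤ → h.G → h.G := fun z g =>
  match z with
  | Int.ofNat n => h.gnsmul n g
  | Int.negSucc n => h.gneg (h.gnsmul (n + 1) g)

instance : AddCommGroup h.G where
  add := h.gadd
  zero := h.qmk (0, 0)
  neg := h.gneg
  add_assoc := by
    refine h.gind fun p => h.gind fun q => h.gind fun r => ?_
    show h.gadd (h.gadd _ _) _ = h.gadd _ (h.gadd _ _)
    rw [gadd_qmk, gadd_qmk, gadd_qmk, gadd_qmk, qmk_eq_qmk]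
    dsimp; abel
  zero_add := by
    refine h.gind fun p => ?_
    show h.gadd (h.qmk (0,0)) _ = _
    rw [gadd_qmk, qmk_eq_qmk]
    dsimp; abel
  add_zero := by
    refine h.gind fun p => ?_
    show h.gadd _ (h.qmk (0,0)) = _
    rw [gadd_qmk, qmk_eq_qmk]
    dsimp; abel
  add_comm := by
    refine h.gind fun p => h.gind fun q => ?_
    show h.gadd _ _ = h.gadd _ _
    rw [gadd_qmk, gadd_qmk, qmk_eq_qmk]
    dsimp; abel
  neg_add_cancel := by
    refine h.gind fun p => ?_
    show h.gadd (h.gneg _) _ = h.qmk (0,0)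
    rw [gneg_qmk, gadd_qmk, qmk_eq_qmk]
    dsimp; abel
  nsmul := h.gnsmul
  nsmul_zero := fun _ => rfl
  nsmul_succ := fun _ _ => rfl
  zsmul := h.gzsmul
  zsmul_zero' := fun _ => rfl
  zsmul_succ' := fun _ _ => rfl
  zsmul_neg' := fun _ _ => rfl

theorem qmk_add (p q : K × K) : h.qmk p + h.qmk q = h.qmk (p.1 + q.1, p.2 + q.2) := rfl
theorem qmk_neg (p : K × K) : -h.qmk p = h.qmk (p.2, p.1) := rfl
theorem zero_def : (0 : h.G) = h.qmk (0, 0) := rfl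


noncomputable def gsmulFun (a : ℝ) (p : K × K) : K × K :=
  if 0 < a then (a • p.1, a • p.2) else if a < 0 then ((-a) • p.2, (-a) • p.1) else (0, 0)

theorem gsmulFun_pos {a : ℝ} (ha : 0 < a) (p : K × K) :
    gsmulFun a p = (a • p.1, a • p.2) := if_pos ha

theorem gsmulFun_neg {a : ℝ} (ha : a < 0) (p : K × K) :
    gsmulFun a p = ((-a) • p.2, (-a) • p.1) := by
  rw [gsmulFun, if_neg (by linarith), if_pos ha]

theorem gsmulFun_zero (p : K × K) : gsmulFun (0 : ℝ) p = (0, 0) := by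
  rw [gsmulFun, if_neg (lt_irrefl 0), if_neg (lt_irrefl 0)]

noncomputable def gsmul (a : ℝ) : h.G → h.G := Quotient.map (gsmulFun a) (by
  intro p q e
  have e' : p.1 + q.2 = q.1 + p.2 := e
  rcases lt_trichotomy a 0 with ha | ha | ha
  · rw [gsmulFun_neg ha p, gsmulFun_neg ha q]
    have hp : (0:ℝ) < -a := by linarith
    show (-a) • p.2 + (-a) • q.1 = (-a) • q.2 + (-a) • p.1
    rw [← h.hsmul_add _ hp, ← h.hsmul_add _ hp, add_comm p.2 q.1, add_comm q.2 p.1, e']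
  · subst ha
    rw [gsmulFun_zero, gsmulFun_zero]
  · rw [gsmulFun_pos ha p, gsmulFun_pos ha q]
    show a • p.1 + a • q.2 = a • q.1 + a • p.2
    rw [← h.hsmul_add _ ha, ← h.hsmul_add _ ha, e'])

noncomputable instance : SMul ℝ h.G := ⟨h.gsmul⟩

theorem gsmul_qmk (a : ℝ) (p : K × K) : a • h.qmk p = h.qmk (gsmulFun a p) := rfl

theorem gsmul_qmk_pos {a : ℝ} (ha : 0 < a) (p : K × K) :
    a • h.qmk p = h.qmk (a • p.1, a • p.2) := by
  rw [gsmul_qmk, gsmulFun_pos ha]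

theorem gsmul_qmk_neg {a : ℝ} (ha : a < 0) (p : K × K) :
    a • h.qmk p = h.qmk ((-a) • p.2, (-a) • p.1) := by
  rw [gsmul_qmk, gsmulFun_neg ha]

theorem gsmul_qmk_zero (p : K × K) : (0 : ℝ) • h.qmk p = h.qmk (0, 0) := by
  rw [gsmul_qmk, gsmulFun_zero]

theorem gneg_smul (a : ℝ) (g : h.G) : (-a) • g = -(a • g) := by
  induction g using h.gind with
  | hm p =>
    rcases lt_trichotomy a 0 with ha | ha | ha
    · rw [gsmul_qmk_neg h ha, gsmul_qmk_pos h (by linarith : (0:ℝ) < -a), qmk_neg]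
    · subst ha
      rw [neg_zero, gsmul_qmk_zero, qmk_neg]
    · rw [gsmul_qmk_pos h ha, gsmul_qmk_neg h (by linarith : -a < 0), neg_neg, qmk_neg]

theorem gadd_smul_pos {a b : ℝ} (ha : 0 < a) (hb : 0 < b) (g : h.G) :
    (a + b) • g = a • g + b • g := by
  induction g using h.gind with
  | hm p =>
    rw [gsmul_qmk_pos h ha, gsmul_qmk_pos h hb, gsmul_qmk_pos h (by linarith : (0:ℝ) < a + b),
      qmk_add]
    dsimp
    rw [h.hadd_smul a b ha hb, h.hadd_smul a b ha hb]

theorem gzero_smul (g : h.G) : (0 : ℝ) • g = 0 := by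
  induction g using h.gind with
  | hm p => rw [gsmul_qmk_zero]; rfl

theorem gadd_smul_mix {a b : ℝ} (ha : 0 < a) (hb : b < 0) (g : h.G) :
    (a + b) • g = a • g + b • g := by
  rcases lt_trichotomy (a + b) 0 with hab | hab | hab
  · have key : (-b) • g = (-(a + b)) • g + a • g := by
      rw [show (-b : ℝ) = -(a+b) + a by ring]
      exact h.gadd_smul_pos (by linarith) ha g
    rw [gneg_smul, gneg_smul] at key
    have : b • g = (a + b) • g - a • g := by
      have := congrArg Neg.neg key
      rw [neg_neg, neg_add, neg_neg] at this
      rw [this]; abel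
    rw [this]; abel
  · rw [hab, gzero_smul]
    have hb' : b = -a := by linarith
    rw [hb', gneg_smul]; abel
  · have key : (a + b) • g + (-b) • g = a • g := by
      rw [← h.gadd_smul_pos hab (by linarith : (0:ℝ) < -b) g]
      ring_nf
    rw [gneg_smul] at key
    have : (a + b) • g = a • g + b • g := by
      rw [← key]; abel
    exact this

theorem gadd_smul (a b : ℝ) (g : h.G) : (a + b) • g = a • g + b • g := by
  rcases lt_trichotomy a 0 with ha | ha | ha
  · rcases lt_trichotomy b 0 with hb | hb | hb
    · have key : (-(a + b)) • g = (-a) • g + (-b) • g := by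
        rw [show (-(a+b) : ℝ) = -a + -b by ring]
        exact h.gadd_smul_pos (by linarith) (by linarith) g
      rw [gneg_smul, gneg_smul, gneg_smul, ← neg_add] at key
      exact neg_injective key
    · subst hb; rw [add_zero, gzero_smul, add_zero]
    · rw [add_comm a b, add_comm (a • g) (b • g)]
      exact h.gadd_smul_mix hb ha g
  · subst ha; rw [zero_add, gzero_smul, zero_add]
  · rcases lt_trichotomy b 0 with hb | hb | hb
    · exact h.gadd_smul_mix ha hb g
    · subst hb; rw [add_zero, gzero_smul, add_zero]
    · exact h.gadd_smul_pos ha hb g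


theorem gsmul_gzero (a : ℝ) : a • (0 : h.G) = 0 := by
  show a • h.qmk (0, 0) = h.qmk (0, 0)
  rcases lt_trichotomy a 0 with ha | ha | ha
  · rw [gsmul_qmk_neg h ha]
    dsimp
    rw [h.hsmul_e (-a) (by linarith)]
  · subst ha; rw [gsmul_qmk_zero]
  · rw [gsmul_qmk_pos h ha]
    dsimp
    rw [h.hsmul_e a ha]

theorem gmul_smul (a b : ℝ) (g : h.G) : (a * b) • g = a • (b • g) := by
  induction g using h.gind with
  | hm p =>
    rcases lt_trichotomy a 0 with ha | ha | ha
    · rcases lt_trichotomy b 0 with hb | hb | hb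
      · have hab : 0 < a * b := mul_pos_of_neg_of_neg ha hb
        rw [gsmul_qmk_neg h hb, gsmul_qmk_neg h ha, gsmul_qmk_pos h hab]
        dsimp
        rw [h.hsmul_assoc (-a) (-b) (by linarith) (by linarith),
          h.hsmul_assoc (-a) (-b) (by linarith) (by linarith)]
        norm_num
      · subst hb; rw [mul_zero, gzero_smul, gsmul_gzero]
      · have hab : a * b < 0 := mul_neg_of_neg_of_pos ha hb
        rw [gsmul_qmk_pos h hb, gsmul_qmk_neg h ha, gsmul_qmk_neg h hab]
        dsimp
        rw [h.hsmul_assoc (-a) b (by linarith) hb, h.hsmul_assoc (-a) b (by linarith) hb]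
        norm_num
    · subst ha; rw [zero_mul, gzero_smul, gzero_smul]
    · rcases lt_trichotomy b 0 with hb | hb | hb
      · have hab : a * b < 0 := mul_neg_of_pos_of_neg ha hb
        rw [gsmul_qmk_neg h hb, gsmul_qmk_pos h ha, gsmul_qmk_neg h hab]
        dsimp
        rw [h.hsmul_assoc a (-b) ha (by linarith), h.hsmul_assoc a (-b) ha (by linarith)]
        norm_num
      · subst hb; rw [mul_zero, gzero_smul, gsmul_gzero]
      · have hab : 0 < a * b := mul_pos ha hb
        rw [gsmul_qmk_pos h hb, gsmul_qmk_pos h ha, gsmul_qmk_pos h hab]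
        dsimp
        rw [h.hsmul_assoc a b ha hb, h.hsmul_assoc a b ha hb]

theorem gsmul_gadd (a : ℝ) (g g' : h.G) : a • (g + g') = a • g + a • g' := by
  induction g using h.gind with
  | hm p =>
    induction g' using h.gind with
    | hm q =>
      rcases lt_trichotomy a 0 with ha | ha | ha
      · rw [qmk_add, gsmul_qmk_neg h ha, gsmul_qmk_neg h ha, gsmul_qmk_neg h ha, qmk_add]
        dsimp
        rw [h.hsmul_add (-a) (by linarith), h.hsmul_add (-a) (by linarith)]
      · subst ha
        rw [gsmul_qmk_zero, qmk_add, gsmul_qmk_zero, gsmul_qmk_zero, qmk_add]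
        dsimp
        rw [qmk_eq_qmk]
        dsimp
        abel
      · rw [qmk_add, gsmul_qmk_pos h ha, gsmul_qmk_pos h ha, gsmul_qmk_pos h ha, qmk_add]
        dsimp
        rw [h.hsmul_add a ha, h.hsmul_add a ha]

theorem gone_smul (g : h.G) : (1 : ℝ) • g = g := by
  induction g using h.gind with
  | hm p =>
    rw [gsmul_qmk_pos h one_pos, h.hone_smul, h.hone_smul]

noncomputable instance : Module ℝ h.G where
  one_smul := h.gone_smul
  mul_smul := h.gmul_smul
  smul_zero := h.gsmul_gzero
  smul_add := h.gsmul_gadd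
  add_smul := h.gadd_smul
  zero_smul := h.gzero_smul

def gnorm : h.G → ℝ := Quotient.lift (fun p => dist p.1 p.2) (by
  intro p q e
  have e' : p.1 + q.2 = q.1 + p.2 := e
  calc dist p.1 p.2 = dist (p.1 + q.2) (p.2 + q.2) := (h.hinvar p.1 p.2 q.2).symm
    _ = dist (q.1 + p.2) (p.2 + q.2) := by rw [e']
    _ = dist (q.1 + p.2) (q.2 + p.2) := by rw [add_comm p.2 q.2]
    _ = dist q.1 q.2 := h.hinvar q.1 q.2 p.2)

theorem gnorm_qmk (p : K × K) : h.gnorm (h.qmk p) = dist p.1 p.2 := rfl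

noncomputable instance : NormedAddCommGroup h.G :=
  AddGroupNorm.toNormedAddCommGroup
    { toFun := h.gnorm
      map_zero' := by rw [zero_def, gnorm_qmk]; exact dist_self 0
      add_le' := by
        refine h.gind fun p => h.gind fun q => ?_
        rw [qmk_add, gnorm_qmk, gnorm_qmk, gnorm_qmk]
        dsimp
        calc dist (p.1 + q.1) (p.2 + q.2)
            ≤ dist (p.1 + q.1) (p.2 + q.1) + dist (p.2 + q.1) (p.2 + q.2) := dist_triangle _ _ _
          _ = dist p.1 p.2 + dist q.1 q.2 := by
              rw [h.hinvar p.1 p.2 q.1, add_comm p.2 q.1, add_comm p.2 q.2,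
                h.hinvar q.1 q.2 p.2]
      neg' := by
        refine h.gind fun p => ?_
        rw [qmk_neg, gnorm_qmk, gnorm_qmk]
        exact dist_comm p.2 p.1
      eq_zero_of_map_eq_zero' := by
        refine h.gind fun p => ?_
        intro hp
        have hp' : dist p.1 p.2 = 0 := hp
        have hpp : p.1 = p.2 := dist_eq_zero.mp hp' 
        exact Quotient.sound (show p.1 + 0 = 0 + p.2 by rw [add_zero, zero_add, hpp]) }

theorem gnorm_eq (g : h.G) : ‖g‖ = h.gnorm g := rfl

noncomputable instance : NormedSpace ℝ h.G where
  norm_smul_le := by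
    intro a g
    induction g using h.gind with
    | hm p =>
      rcases lt_trichotomy a 0 with ha | ha | ha
      · rw [gsmul_qmk_neg h ha, gnorm_eq, gnorm_eq, gnorm_qmk, gnorm_qmk]
        dsimp
        rw [h.hhomog (-a) (by linarith), dist_comm p.2 p.1, abs_of_neg ha]
      · subst ha
        rw [gsmul_qmk_zero, gnorm_eq, gnorm_qmk]
        simp [dist_self]
      · rw [gsmul_qmk_pos h ha, gnorm_eq, gnorm_eq, gnorm_qmk, gnorm_qmk]
        dsimp
        rw [h.hhomog a ha, abs_of_pos ha]

end ConeHyp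

/-- A convex cone `K` with metric `d` can be isometrically embedded into
a Banach space (via an injection `I` with `I (a•x + b•y) = a•I x + b•I y` for `a,b>0`
and `dist x y = ‖I x − I y‖`) if and only if the second distributivity law holds and
the metric is homogeneous (`dist (a•x) (a•y) = a * dist x y` for `a>0`) and invariant
(`dist (x+z) (y+z) = dist x y`). -/
theorem embeddable_into_banach_iff
    {K : Type u} [MetricSpace K] [PolishSpace K] [AddCommMonoid K] [SMul ℝ K]
    (hadd_cont : Continuous fun p : K × K => p.1 + p.2)
    (hsmul_cont : ContinuousOn (fun p : ℝ × K => p.1 • p.2)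
      (Set.Ioi (0 : ℝ) ×ˢ (Set.univ : Set K)))
    (hsmul_add : ∀ a : ℝ, 0 < a → ∀ x y : K, a • (x + y) = a • x + a • y)
    (hsmul_assoc : ∀ a b : ℝ, 0 < a → 0 < b → ∀ x : K, a • (b • x) = (a * b) • x)
    (hone_smul : ∀ x : K, (1 : ℝ) • x = x)
    (hsmul_e : ∀ a : ℝ, 0 < a → a • (0 : K) = (0 : K)) :
    (∃ (B : Type u) (_ : NormedAddCommGroup B) (_ : NormedSpace ℝ B)
        (_ : CompleteSpace B) (I : K → B),
        Function.Injective I ∧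
        (∀ a b : ℝ, 0 < a → 0 < b → ∀ x y : K,
          I (a • x + b • y) = a • I x + b • I y) ∧
        (∀ x y : K, dist x y = ‖I x - I y‖)) ↔
      ((∀ a b : ℝ, 0 < a → 0 < b → ∀ x : K, (a + b) • x = a • x + b • x) ∧
       (∀ a : ℝ, 0 < a → ∀ x y : K, dist (a • x) (a • y) = a * dist x y) ∧
       (∀ x y z : K, dist (x + z) (y + z) = dist x y)) := by
  constructor
  · rintro ⟨B, _, _, _, I, hinj, hlin, hdist⟩
    -- I sends 0 to 0 and is "affine"; first, `I 0 = 0`.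
    have hI0 : I (0 : K) = 0 := by
      have h2 := hlin 1 1 one_pos one_pos 0 0
      rw [hone_smul, add_zero, one_smul] at h2
      have h3 : I (0 : K) + 0 = I (0 : K) + I (0 : K) := by rw [add_zero]; exact h2
      exact (add_left_cancel h3).symm
    have hIsmul : ∀ a : ℝ, 0 < a → ∀ x : K, I (a • x) = a • I x := by
      intro a ha x
      have := hlin a 1 ha one_pos x 0
      rw [hone_smul, add_zero, hI0, smul_zero, add_zero] at this
      exact this
    have hIadd : ∀ x y : K, I (x + y) = I x + I y := by
      intro x y
      have h2 := hlin 1 1 one_pos one_pos x y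
      rw [hone_smul, hone_smul, one_smul, one_smul] at h2
      exact h2
    refine ⟨fun a b ha hb x => ?_, fun a ha x y => ?_, fun x y z => ?_⟩
    · apply hinj
      rw [hIadd, hIsmul (a + b) (by linarith), hIsmul a ha, hIsmul b hb, add_smul]
    · rw [hdist, hdist, hIsmul a ha, hIsmul a ha, ← smul_sub, norm_smul,
        Real.norm_eq_abs, abs_of_pos ha]
    · rw [hdist, hdist, hIadd, hIadd]
      congr 1
      abel
  · rintro ⟨hd, hh, hi⟩
    let h : ConeHyp K := ⟨hsmul_add, hsmul_assoc, hone_smul, hsmul_e, hd, hh, hi⟩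
    refine ⟨UniformSpace.Completion h.G, inferInstance, inferInstance, inferInstance,
      fun x => UniformSpace.Completion.toComplₗᵢ (𝕜 := ℝ) (h.qmk (x, 0)), ?_, ?_, ?_⟩
    · intro x y hxy
      have h1 : h.qmk (x, 0) = h.qmk (y, 0) :=
        (UniformSpace.Completion.toComplₗᵢ (𝕜 := ℝ) (E := h.G)).injective hxy
      have h2 : x + 0 = y + 0 := Quotient.exact h1
      rwa [add_zero, add_zero] at h2
    · intro a b ha hb x y
      have hG : h.qmk (a • x + b • y, 0) = a • h.qmk (x, 0) + b • h.qmk (y, 0) := by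
        rw [ConeHyp.gsmul_qmk_pos h ha, ConeHyp.gsmul_qmk_pos h hb, ConeHyp.qmk_add]
        dsimp
        rw [h.hsmul_e a ha, h.hsmul_e b hb, add_zero]
      dsimp only
      rw [hG, map_add, map_smul, map_smul]
    · intro x y
      dsimp only
      rw [← map_sub, LinearIsometry.norm_map]
      have hsub : h.qmk (x, 0) - h.qmk (y, 0) = h.qmk (x + 0, 0 + y) := by
        rw [sub_eq_add_neg, ConeHyp.qmk_neg, ConeHyp.qmk_add]
      rw [hsub, ConeHyp.gnorm_eq, ConeHyp.gnorm_qmk]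
      dsimp
      rw [add_zero, zero_add]
end

section
/- Let K be a normed cone whose norm is sub-invariant and let α∈(0,1). Let Γ_k be the partial sums of i.i.d. mean-1 exponential random variables and ε_k i.i.d. random elements on the unit sphere S of K independent of (Γ_k). Then the partial sums S_n = ∑_{k=1}^{n} Γ_k^{−1/α}·ε_k converge almost surely in K, and the series converges absolutely: ∑_{k≥1} ‖Γ_k^{−1/α}·ε_k‖ < ∞ almost surely. -/
open Filter Topology MeasureTheory ProbabilityTheory

/-- Let `K` be a normed cone (pointed convex cone with extended metric
homogeneous at the origin `o`, the norm being `‖x‖ = edist x o`) whose norm is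
sub-invariant, and let `α ∈ (0,1)`.  Let `Γ_k` be the partial sums of i.i.d. mean-1
exponential random variables `ζ_k`, and let `ε_k` be i.i.d. random elements on the unit
sphere `S = {x : edist x o = 1}` of `K`, independent of the sequence `(ζ_k)`.  Then the
partial sums `S_n = ∑_{k=1}^n Γ_k^{-1/α} • ε_k` converge almost surely in `K`, and the
series converges absolutely: `∑_{k≥1} ‖Γ_k^{-1/α} • ε_k‖ < ∞` almost surely.
Here the Lean `0 : K` is the paper's neutral element `e` and `o : K` the origin. -/
theorem lepage_series_converges_of_subinvariant_norm
    {K : Type*} [EMetricSpace K] [CompleteSpace K] [SecondCountableTopology K]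
    [AddCommMonoid K] [SMul ℝ K] [MeasurableSpace K] [BorelSpace K]
    (hadd_cont : Continuous fun p : K × K => p.1 + p.2)
    (hsmul_cont : ContinuousOn (fun p : ℝ × K => p.1 • p.2)
      (Set.Ioi (0 : ℝ) ×ˢ (Set.univ : Set K)))
    (hsmul_add : ∀ a : ℝ, 0 < a → ∀ x y : K, a • (x + y) = a • x + a • y)
    (hsmul_assoc : ∀ a b : ℝ, 0 < a → 0 < b → ∀ x : K, a • (b • x) = (a * b) • x)
    (hone_smul : ∀ x : K, (1 : ℝ) • x = x)
    (hsmul_e : ∀ a : ℝ, 0 < a → a • (0 : K) = (0 : K))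
    (o : K)
    (horigin : ∀ x : K, x ≠ 0 →
      Tendsto (fun a : ℝ => a • x) (𝓝[>] (0 : ℝ)) (𝓝 o))
    (hhom : ∀ a : ℝ, 0 < a → ∀ x : K, edist (a • x) o = ENNReal.ofReal a * edist x o)
    (hsub : ∀ x h : K, edist (x + h) x ≤ edist h o)
    (α : ℝ) (hα0 : 0 < α) (hα1 : α < 1)
    {Ω : Type*} [MeasurableSpace Ω] (μ : Measure Ω) [IsProbabilityMeasure μ]
    (ζ : ℕ → Ω → ℝ) (hζmeas : ∀ k, Measurable (ζ k))
    (hζindep : iIndepFun ζ μ)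
    (hζexp : ∀ k, ∀ t : ℝ, μ {ω | ζ k ω ≤ t} = ENNReal.ofReal (1 - Real.exp (-t)))
    (ε : ℕ → Ω → K) (hεmeas : ∀ k, Measurable (ε k))
    (hεsphere : ∀ k ω, edist (ε k ω) o = 1)
    (hεid : ∀ k, μ.map (ε k) = μ.map (ε 0))
    (hεindep : iIndepFun ε μ)
    (hζε : IndepFun (fun ω => fun k => ζ k ω) (fun ω => fun k => ε k ω) μ) :
    ∀ᵐ ω ∂μ,
      (∃ L : K, Tendsto (fun n : ℕ => ∑ k ∈ Finset.range n,
          ((∑ i ∈ Finset.range (k + 1), ζ i ω) ^ (-(1 / α))) • ε k ω)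
        atTop (𝓝 L)) ∧
      (∑' k : ℕ,
          edist (((∑ i ∈ Finset.range (k + 1), ζ i ω) ^ (-(1 / α))) • ε k ω) o) ≠ ⊤ := by

  -- the truncation function
  set q : ℝ → ℝ := fun x => min (max x 0) 1 with hq
  have hqmeas : Measurable q := (measurable_id.max measurable_const).min measurable_const
  -- the ζ k are identically distributed
  have hmap : ∀ k, μ.map (ζ k) = μ.map (ζ 0) := by
    intro k
    have h1 : IsProbabilityMeasure (μ.map (ζ k)) :=
      Measure.isProbabilityMeasure_map (hζmeas k).aemeasurable
    have h0 : IsProbabilityMeasure (μ.map (ζ 0)) :=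
      Measure.isProbabilityMeasure_map (hζmeas 0).aemeasurable
    refine MeasureTheory.Measure.ext_of_Iic _ _ (fun t => ?_)
    rw [Measure.map_apply (hζmeas k) measurableSet_Iic,
        Measure.map_apply (hζmeas 0) measurableSet_Iic]
    have e1 : ζ k ⁻¹' Set.Iic t = {ω | ζ k ω ≤ t} := rfl
    have e0 : ζ 0 ⁻¹' Set.Iic t = {ω | ζ 0 ω ≤ t} := rfl
    rw [e1, e0, hζexp k t, hζexp 0 t]
  have hident : ∀ k, IdentDistrib (ζ k) (ζ 0) μ μ :=
    fun k => ⟨(hζmeas k).aemeasurable, (hζmeas 0).aemeasurable, hmap k⟩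
  -- the truncated variables
  set η : ℕ → Ω → ℝ := fun k => q ∘ ζ k with hη
  have hηmeas : ∀ k, Measurable (η k) := fun k => hqmeas.comp (hζmeas k)
  have hη0 : ∀ k ω, 0 ≤ η k ω := fun k ω => le_min (le_max_right _ _) zero_le_one
  have hη1 : ∀ k ω, η k ω ≤ 1 := fun k ω => min_le_right _ _
  have hηint : Integrable (η 0) μ := by
    refine (integrable_const (1 : ℝ)).mono' (hηmeas 0).aestronglyMeasurable ?_
    filter_upwards with ω
    rw [Real.norm_eq_abs, abs_of_nonneg (hη0 0 ω)]
    exact hη1 0 ω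
  have hηindep : Pairwise (Function.onFun (IndepFun · · μ) η) := by
    intro i j hij
    exact (hζindep.comp (fun _ => q) (fun _ => hqmeas)).indepFun hij
  have hηident : ∀ k, IdentDistrib (η k) (η 0) μ μ :=
    fun k => (hident k).comp hqmeas
  -- positivity of the mean of η 0
  set m : ℝ := ∫ ω, η 0 ω ∂μ with hm
  have hmpos : 0 < m := by
    rw [hm, MeasureTheory.integral_pos_iff_support_of_nonneg (fun ω => hη0 0 ω) hηint]
    have hsubset : {ω | 1 < ζ 0 ω} ⊆ Function.support (η 0) := by
      intro ω hω
      have : η 0 ω = 1 := by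
        simp only [hη, hq, Function.comp_apply]
        rw [max_eq_left (by linarith [Set.mem_setOf_eq ▸ hω] : (0:ℝ) ≤ ζ 0 ω)]
        exact min_eq_right (le_of_lt hω)
      simp [Function.mem_support, this]
    refine lt_of_lt_of_le ?_ (measure_mono hsubset)
    have hc : {ω | 1 < ζ 0 ω} = {ω | ζ 0 ω ≤ 1}ᶜ := by
      ext ω; simp [not_le]
    rw [hc, measure_compl (measurableSet_le (hζmeas 0) measurable_const) (measure_ne_top μ _),
        measure_univ, hζexp 0 1]
    rw [tsub_pos_iff_lt]
    refine lt_of_lt_of_le (ENNReal.ofReal_lt_one.mpr ?_) le_rfl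
    have := Real.exp_pos (-1)
    linarith
  -- strong law of large numbers for η
  have hSLLN := strong_law_ae_real η hηint hηindep hηident
  -- a.s. all ζ k are positive
  have hpos : ∀ᵐ ω ∂μ, ∀ k, 0 < ζ k ω := by
    rw [ae_all_iff]
    intro k
    have : {ω | ¬ 0 < ζ k ω} = {ω | ζ k ω ≤ 0} := by ext ω; simp [not_lt]
    rw [ae_iff, this, hζexp k 0]
    simp
  filter_upwards [hSLLN, hpos] with ω hT hP
  -- notation
  set g : ℕ → ℝ := fun k => ∑ i ∈ Finset.range (k + 1), ζ i ω with hg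
  have hgpos : ∀ k, 0 < g k :=
    fun k => Finset.sum_pos (fun i _ => hP i) (Finset.nonempty_range_add_one)
  set c : ℕ → ℝ := fun k => g k ^ (-(1 / α)) with hc
  have hcpos : ∀ k, 0 < c k := fun k => Real.rpow_pos_of_pos (hgpos k) _
  -- summability of c
  have hp1 : 1 < 1 / α := by rw [lt_div_iff₀ hα0]; linarith
  have hcsum : Summable c := by
    have hev : ∀ᶠ n in atTop, m / 2 ≤ (∑ i ∈ Finset.range n, η i ω) / n :=
      hT.eventually (eventually_ge_nhds (half_lt_self hmpos))
    obtain ⟨N, hN⟩ := eventually_atTop.mp hev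
    -- lower bound for g
    have hglow : ∀ k, N ≤ k → m / 2 * (k + 1) ≤ g k := by
      intro k hk
      have h1 := hN (k + 1) (le_trans hk (Nat.le_succ k))
      push_cast at h1
      have h2 : (0:ℝ) < (k:ℝ) + 1 := by positivity
      have h3 : m / 2 * ((k:ℝ) + 1) ≤ ∑ i ∈ Finset.range (k + 1), η i ω := by
        rw [le_div_iff₀ h2] at h1
        linarith
      refine le_trans h3 (Finset.sum_le_sum fun i _ => ?_)
      have hzi := hP i
      simp only [hη, hq, Function.comp_apply]
      calc min (max (ζ i ω) 0) 1 ≤ max (ζ i ω) 0 := min_le_left _ _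
        _ = ζ i ω := max_eq_left hzi.le
    -- the comparison series
    set B : ℕ → ℝ := fun j => (m / 2 * ((j:ℝ) + 1)) ^ (-(1 / α)) with hB
    have hBsum : Summable B := by
      have h1 : Summable (fun n : ℕ => (n:ℝ) ^ (-(1 / α))) :=
        Real.summable_nat_rpow.mpr (by linarith)
      have h2 : Summable (fun n : ℕ => ((n + 1 : ℕ) : ℝ) ^ (-(1 / α))) :=
        (summable_nat_add_iff 1).mpr h1
      have h3 : Summable (fun n : ℕ => ((n:ℝ) + 1) ^ (-(1 / α))) := by
        refine h2.congr fun n => ?_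
        push_cast
        ring_nf
      have h4 := h3.mul_left ((m / 2) ^ (-(1 / α)))
      refine h4.congr fun n => ?_
      show (m / 2) ^ (-(1 / α)) * ((n:ℝ) + 1) ^ (-(1 / α)) = (m / 2 * ((n:ℝ) + 1)) ^ (-(1 / α))
      rw [Real.mul_rpow (by linarith : (0:ℝ) ≤ m / 2) (by positivity : (0:ℝ) ≤ (n:ℝ) + 1)]
    -- compare c with B eventually
    have hcB : ∀ k, N ≤ k → c k ≤ B k := by
      intro k hk
      rw [hc, hB]
      exact Real.rpow_le_rpow_of_nonpos (by positivity) (hglow k hk) (by linarith)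
    refine (summable_nat_add_iff N).mp ?_
    refine Summable.of_nonneg_of_le (fun n => (hcpos (n + N)).le)
      (fun n => hcB (n + N) (Nat.le_add_left N n)) ?_
    exact (summable_nat_add_iff N).mpr hBsum
  -- the norms of the terms
  have hnorm : ∀ k, edist (c k • ε k ω) o = ENNReal.ofReal (c k) := by
    intro k
    rw [hhom _ (hcpos k), hεsphere, mul_one]
  have htsum : (∑' k, ENNReal.ofReal (c k)) ≠ ⊤ := by
    rw [← ENNReal.ofReal_tsum_of_nonneg (fun k => (hcpos k).le) hcsum]
    exact ENNReal.ofReal_ne_top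
  constructor
  · -- Cauchy, hence convergent
    have hCauchy : CauchySeq (fun n : ℕ => ∑ k ∈ Finset.range n, c k • ε k ω) := by
      refine cauchySeq_of_edist_le_of_tsum_ne_top (fun k => ENNReal.ofReal (c k))
        (fun n => ?_) htsum
      rw [edist_comm, Finset.sum_range_succ]
      exact le_trans (hsub _ _) (le_of_eq (hnorm n))
    exact cauchySeq_tendsto_of_complete hCauchy
  · convert htsum using 1
    exact tsum_congr hnorm
end

section
/- Let K be a convex cone with involution ⋆ and let K̃ be a separating sub-semigroup of characters on K generating the Borel σ-algebra of K. Let ξ and η be independent K-valued random elements such that ξ+η is proper. Then E[χ(ξ)] ≠ 0 and E[χ(η)] ≠ 0 for every χ∈K̃; and if moreover ξ and ξ+η are both SαS with the same characteristic exponent α, then η is SαS with characteristic exponent α. -/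
open Filter Topology MeasureTheory Set ComplexConjugate

noncomputable section

namespace SaS13


/-- A (nowhere-vanishing or everywhere-vanishing) dichotomy for multiplicative
functions on `(0, ∞)`. -/
lemma mult_zero_all {u : ℝ → ℂ} (hmul : ∀ s t : ℝ, 0 < s → 0 < t → u s * u t = u (s + t))
    {t₀ : ℝ} (ht₀ : 0 < t₀) (h0 : u t₀ = 0) : ∀ t : ℝ, 0 < t → u t = 0 := by
  have hhalf : ∀ n : ℕ, u (t₀ / 2 ^ n) = 0 := by
    intro n
    induction n with
    | zero => simpa using h0
    | succ n ih =>
      have h2 : (0:ℝ) < t₀ / 2 ^ (n+1) := by positivity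
      have hsum : t₀ / 2 ^ (n+1) + t₀ / 2 ^ (n+1) = t₀ / 2 ^ n := by ring
      have := hmul _ _ h2 h2
      rw [hsum, ih] at this
      exact mul_self_eq_zero.mp this
  intro t ht
  obtain ⟨n, hn⟩ : ∃ n : ℕ, t₀ / 2 ^ n < t := by
    obtain ⟨n, hn⟩ := pow_unbounded_of_one_lt (t₀ / t) (by norm_num : (1:ℝ) < 2)
    refine ⟨n, ?_⟩
    rw [div_lt_iff₀ (by positivity)]
    calc t₀ = (t₀ / t) * t := by field_simp
    _ < 2 ^ n * t := by
        exact mul_lt_mul_of_pos_right hn ht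
    _ = t * 2 ^ n := by ring
  have h2 : 0 < t - t₀ / 2 ^ n := sub_pos.2 hn
  have := hmul (t₀ / 2 ^ n) (t - t₀ / 2 ^ n) (by positivity) h2
  rw [hhalf n, zero_mul] at this
  have h3 : t₀ / 2 ^ n + (t - t₀ / 2 ^ n) = t := by ring
  rw [h3] at this
  exact this.symm

lemma integrable_of_bounded {X : Type*} [MeasurableSpace X] {ν : Measure X}
    [IsProbabilityMeasure ν] {E : Type*} [NormedAddCommGroup E] {f : X → E}
    (hf : AEStronglyMeasurable f ν) {C : ℝ} (hC : ∀ x, ‖f x‖ ≤ C) : Integrable f ν :=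
  Integrable.mono' (integrable_const C) hf (Eventually.of_forall hC)

lemma norm_integral_le_one {X : Type*} [MeasurableSpace X] {ν : Measure X}
    [IsProbabilityMeasure ν] {f : X → ℂ} (hf : ∀ x, ‖f x‖ ≤ 1) :
    ‖∫ x, f x ∂ν‖ ≤ 1 := by
  calc ‖∫ x, f x ∂ν‖ ≤ ∫ x, ‖f x‖ ∂ν := norm_integral_le_integral_norm f
  _ ≤ ∫ _x, (1:ℝ) ∂ν := by
      refine integral_mono_of_nonneg (Eventually.of_forall (fun x => norm_nonneg _))
        (integrable_const 1) (Eventually.of_forall hf)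
  _ = 1 := by simp

/-- Key quantitative estimate: for unit-disc valued `A`, `B`, the "mixed" integral
`∫ A conj B` is close to `(∫ A) conj (∫ B)` provided `‖∫ A‖` is close to `1`. -/
lemma key_estimate {X : Type*} [MeasurableSpace X] (ν : Measure X) [IsProbabilityMeasure ν]
    {A B : X → ℂ} (hA : Measurable A) (hB : Measurable B)
    (hA1 : ∀ x, ‖A x‖ ≤ 1) (hB1 : ∀ x, ‖B x‖ ≤ 1) :
    ‖(∫ x, A x * conj (B x) ∂ν) - (∫ x, A x ∂ν) * conj (∫ x, B x ∂ν)‖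
      ≤ 1/4 + 4 * (1 - ‖∫ x, A x ∂ν‖^2) := by
  set c := ∫ x, A x ∂ν with hc
  have hintA : Integrable A ν := integrable_of_bounded hA.aestronglyMeasurable hA1
  have hintB : Integrable B ν := integrable_of_bounded hB.aestronglyMeasurable hB1
  have hmeasAB : Measurable fun x => A x * conj (B x) := hA.mul (continuous_star.measurable.comp hB)
  have hintAB : Integrable (fun x => A x * conj (B x)) ν := by
    refine integrable_of_bounded hmeasAB.aestronglyMeasurable (C := 1) (fun x => ?_)
    rw [norm_mul]
    calc ‖A x‖ * ‖conj (B x)‖ ≤ 1 * 1 := by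
          refine mul_le_mul (hA1 x) ?_ (norm_nonneg _) zero_le_one
          rw [RCLike.norm_conj]; exact hB1 x
    _ = 1 := by norm_num
  have hintcB : Integrable (fun x => c * conj (B x)) ν := by
    refine Integrable.const_mul ?_ c
    exact integrable_of_bounded (continuous_star.measurable.comp hB).aestronglyMeasurable
      (C := 1) (fun x => by rw [RCLike.norm_conj]; exact hB1 x)
  -- step 1 : rewrite the difference as a single integral
  have step1 : (∫ x, A x * conj (B x) ∂ν) - c * conj (∫ x, B x ∂ν)
      = ∫ x, (A x - c) * conj (B x) ∂ν := by
    rw [← integral_conj]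
    rw [← integral_const_mul]
    rw [← integral_sub hintAB hintcB]
    congr 1
    funext x
    ring
  rw [step1]
  -- step 2-3 : bound by the integral of 1/4 + 4‖A x - c‖²
  have hptwise : ∀ x, ‖(A x - c) * conj (B x)‖ ≤ 1/4 + 4 * ‖A x - c‖^2 := by
    intro x
    have h1 : ‖(A x - c) * conj (B x)‖ ≤ ‖A x - c‖ := by
      rw [norm_mul, RCLike.norm_conj]
      exact mul_le_of_le_one_right (norm_nonneg _) (hB1 x)
    rcases le_or_gt ‖A x - c‖ (1/4) with h | h
    · nlinarith [sq_nonneg (‖A x - c‖)]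
    · nlinarith [norm_nonneg (A x - c)]
  have hint2 : Integrable (fun x => ‖A x - c‖^2) ν := by
    refine integrable_of_bounded ?_ (C := 4) (fun x => ?_)
    · exact ((hA.sub_const c).norm.pow_const 2).aestronglyMeasurable
    · have : ‖A x - c‖ ≤ 2 := by
        calc ‖A x - c‖ ≤ ‖A x‖ + ‖c‖ := norm_sub_le _ _
        _ ≤ 1 + 1 := add_le_add (hA1 x) (norm_integral_le_one hA1)
        _ = 2 := by norm_num
      have h0 := norm_nonneg (A x - c)
      rw [Real.norm_eq_abs, abs_of_nonneg (by positivity)]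
      nlinarith
  have step2 : ‖∫ x, (A x - c) * conj (B x) ∂ν‖ ≤ 1/4 + 4 * ∫ x, ‖A x - c‖^2 ∂ν := by
    calc ‖∫ x, (A x - c) * conj (B x) ∂ν‖ ≤ ∫ x, ‖(A x - c) * conj (B x)‖ ∂ν :=
          norm_integral_le_integral_norm _
    _ ≤ ∫ x, (1/4 + 4 * ‖A x - c‖^2) ∂ν := by
        refine integral_mono_of_nonneg (Eventually.of_forall fun x => norm_nonneg _)
          ?_ (Eventually.of_forall hptwise)
        exact (integrable_const (1/4)).add (hint2.const_mul 4)
    _ = 1/4 + 4 * ∫ x, ‖A x - c‖^2 ∂ν := by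
        rw [integral_add (integrable_const (1/4)) (hint2.const_mul 4),
          integral_const_mul]
        simp
  -- step 5 : variance bound
  have hvar : ∫ x, ‖A x - c‖^2 ∂ν ≤ 1 - ‖c‖^2 := by
    have hexp : ∀ x, ‖A x - c‖^2
        = Complex.normSq (A x) + Complex.normSq c - 2 * (A x * conj c).re := by
      intro x
      rw [Complex.sq_norm, Complex.normSq_sub]
    have hintnsA : Integrable (fun x => Complex.normSq (A x)) ν := by
      refine integrable_of_bounded (Complex.continuous_normSq.measurable.comp hA).aestronglyMeasurable
        (C := 1) (fun x => ?_)
      rw [Real.norm_eq_abs, abs_of_nonneg (Complex.normSq_nonneg _),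
        ← Complex.sq_norm]
      nlinarith [hA1 x, norm_nonneg (A x)]
    have hintre : Integrable (fun x => (A x * conj c).re) ν := by
      refine integrable_of_bounded ?_ (C := ‖c‖) (fun x => ?_)
      · exact (Complex.measurable_re.comp (hA.mul_const (conj c))).aestronglyMeasurable
      · rw [Real.norm_eq_abs]
        calc |(A x * conj c).re| ≤ ‖A x * conj c‖ := Complex.abs_re_le_norm _
        _ = ‖A x * conj c‖ := rfl
        _ ≤ 1 * ‖c‖ := by
            rw [norm_mul, RCLike.norm_conj]
            exact mul_le_mul_of_nonneg_right (hA1 x) (norm_nonneg _)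
        _ = ‖c‖ := one_mul _
    have hre : ∫ x, (A x * conj c).re ∂ν = Complex.normSq c := by
      have h1 : ∫ x, (A x * conj c).re ∂ν = (∫ x, A x * conj c ∂ν).re := by
        exact integral_re (hintA.mul_const (conj c))
      rw [h1, integral_mul_const, ← hc, Complex.mul_conj]
      simp
    have hnsA : ∫ x, Complex.normSq (A x) ∂ν ≤ 1 := by
      calc ∫ x, Complex.normSq (A x) ∂ν ≤ ∫ _x, (1:ℝ) ∂ν := by
            refine integral_mono hintnsA (integrable_const 1) (fun x => ?_)
            rw [← Complex.sq_norm]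
            nlinarith [hA1 x, norm_nonneg (A x)]
      _ = 1 := by simp
    have : ∫ x, ‖A x - c‖^2 ∂ν
        = (∫ x, Complex.normSq (A x) ∂ν) + Complex.normSq c - 2 * Complex.normSq c := by
      simp_rw [hexp]
      have i1 : Integrable (fun x => Complex.normSq (A x) + Complex.normSq c) ν :=
        hintnsA.add (integrable_const _)
      have i2 : Integrable (fun x => 2 * (A x * conj c).re) ν := hintre.const_mul 2
      rw [integral_sub i1 i2, integral_add hintnsA (integrable_const _), integral_const_mul, hre]
      simp
    rw [this]
    have : ‖c‖^2 = Complex.normSq c := by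
      rw [Complex.sq_norm]
    nlinarith [hnsA]
  calc ‖∫ x, (A x - c) * conj (B x) ∂ν‖ ≤ 1/4 + 4 * ∫ x, ‖A x - c‖^2 ∂ν := step2
  _ ≤ 1/4 + 4 * (1 - ‖c‖^2) := by nlinarith [hvar]



lemma cont_integrable {X : Type*} [TopologicalSpace X] [CompactSpace X] [MeasurableSpace X]
    [OpensMeasurableSpace X] {E : Type*} [NormedAddCommGroup E] [SecondCountableTopology E] (f : C(X, E))
    (ω : Measure X) [IsProbabilityMeasure ω] : Integrable (fun x => f x) ω := by
  refine Integrable.mono' (integrable_const ‖f‖) f.continuous.aestronglyMeasurable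
    (Eventually.of_forall fun x => f.norm_coe_le_norm x)

/-- Two probability measures on a compact metric space agreeing on all real continuous
functions agree. -/
lemma ext_of_integral_continuous {X : Type*} [MetricSpace X] [CompactSpace X] [MeasurableSpace X]
    [BorelSpace X] (ω₁ ω₂ : Measure X) [IsProbabilityMeasure ω₁] [IsProbabilityMeasure ω₂]
    (h : ∀ f : C(X, ℝ), ∫ x, f x ∂ω₁ = ∫ x, f x ∂ω₂) : ω₁ = ω₂ := by
  have hclosed : ∀ s : Set X, IsClosed s → ω₁ s = ω₂ s := by
    intro s hs
    rcases eq_empty_or_nonempty s with rfl | hne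
    · simp
    set g : ℕ → X → ℝ := fun n x => max 0 (1 - n * Metric.infDist x s) with hg
    have hgcont : ∀ n, Continuous (g n) := by
      intro n
      exact continuous_const.max (continuous_const.sub
        (continuous_const.mul (Metric.continuous_infDist_pt s)))
    have hgbd : ∀ n x, ‖g n x‖ ≤ 1 := by
      intro n x
      rw [Real.norm_eq_abs, abs_le]
      constructor
      · linarith [le_max_left (0:ℝ) (1 - n * Metric.infDist x s)]
      · have h1 : (1 : ℝ) - n * Metric.infDist x s ≤ 1 := by
          have := Metric.infDist_nonneg (x := x) (s := s)
          nlinarith [Nat.cast_nonneg (α := ℝ) n]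
        exact max_le zero_le_one h1
    have hgtend : ∀ x, Tendsto (fun n => g n x) atTop
        (𝓝 (s.indicator (fun _ => (1:ℝ)) x)) := by
      intro x
      by_cases hx : x ∈ s
      · have : ∀ n, g n x = 1 := by
          intro n
          simp [hg, Metric.infDist_zero_of_mem hx]
        rw [indicator_of_mem hx]
        simpa [this] using tendsto_const_nhds
      · have hd : 0 < Metric.infDist x s :=
          (IsClosed.notMem_iff_infDist_pos hs hne).mp hx
        have hev : ∀ᶠ n in atTop, g n x = 0 := by
          have : ∀ᶠ (n : ℕ) in atTop, (1:ℝ) / Metric.infDist x s ≤ n :=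
            tendsto_natCast_atTop_atTop.eventually_ge_atTop _
          filter_upwards [this] with n hn
          have : (1:ℝ) ≤ n * Metric.infDist x s := by
            rw [div_le_iff₀ hd] at hn
            linarith
          simp only [hg]
          rw [max_eq_left]
          linarith
        rw [indicator_of_notMem hx]
        exact Tendsto.congr' (hev.mono fun n hn => hn.symm) tendsto_const_nhds
    have hlim : ∀ (ω : Measure X), IsProbabilityMeasure ω →
        Tendsto (fun n => ∫ x, g n x ∂ω) atTop (𝓝 ((ω s).toReal)) := by
      intro ω hω
      have := tendsto_integral_of_dominated_convergence (μ := ω)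
        (F := fun n x => g n x) (f := fun x => s.indicator (fun _ => (1:ℝ)) x)
        (bound := fun _ => 1)
        (fun n => (hgcont n).measurable.aestronglyMeasurable)
        (integrable_const 1)
        (fun n => Eventually.of_forall (hgbd n))
        (Eventually.of_forall hgtend)
      have hind : ∫ x, s.indicator (fun _ => (1:ℝ)) x ∂ω = (ω s).toReal := by
        have : s.indicator (fun _ => (1:ℝ)) = s.indicator 1 := rfl
        rw [this, integral_indicator_one hs.measurableSet]; rfl
      rwa [hind] at this
    have h1 := hlim ω₁ inferInstance
    have h2 := hlim ω₂ inferInstance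
    have heq : ∀ n, ∫ x, g n x ∂ω₁ = ∫ x, g n x ∂ω₂ := fun n => h ⟨g n, hgcont n⟩
    have : (ω₁ s).toReal = (ω₂ s).toReal := by
      refine tendsto_nhds_unique ?_ h2
      exact h1.congr heq
    exact (ENNReal.toReal_eq_toReal_iff' (measure_ne_top ω₁ s) (measure_ne_top ω₂ s)).mp this
  refine ext_of_generate_finite {s : Set X | IsClosed s} ?_ ?_ (fun s hs => hclosed s hs) ?_
  · rw [BorelSpace.measurable_eq (α := X), borel_eq_generateFrom_isClosed]
  · intro s hs t ht _
    exact hs.inter ht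
  · simp

/-- Two probability measures on a compact metric space agreeing on a separating
star subalgebra of `C(X, ℂ)` agree. -/
lemma ext_of_starSubalgebra {X : Type*} [MetricSpace X] [CompactSpace X] [MeasurableSpace X]
    [BorelSpace X] (St : StarSubalgebra ℂ C(X, ℂ)) (hsep : St.SeparatesPoints)
    (ω₁ ω₂ : Measure X) [IsProbabilityMeasure ω₁] [IsProbabilityMeasure ω₂]
    (h : ∀ f ∈ St, ∫ x, f x ∂ω₁ = ∫ x, f x ∂ω₂) : ω₁ = ω₂ := by
  have hdense := ContinuousMap.starSubalgebra_topologicalClosure_eq_top_of_separatesPoints St hsep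
  have hall : ∀ f : C(X, ℂ), ∫ x, f x ∂ω₁ = ∫ x, f x ∂ω₂ := by
    intro f
    have hf : f ∈ closure (St : Set C(X, ℂ)) := by
      have : f ∈ St.topologicalClosure := by rw [hdense]; trivial
      exact this
    by_contra hne
    set D := ‖(∫ x, f x ∂ω₁) - ∫ x, f x ∂ω₂‖ with hD
    have hDpos : 0 < D := by
      rw [hD, norm_pos_iff]
      exact sub_ne_zero.mpr hne
    obtain ⟨g, hgSt, hgd⟩ := Metric.mem_closure_iff.mp hf (D/4) (by linarith)
    have hbound : ∀ (ω : Measure X), IsProbabilityMeasure ω →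
        ‖(∫ x, f x ∂ω) - ∫ x, g x ∂ω‖ ≤ D/4 := by
      intro ω hω
      rw [← integral_sub (cont_integrable f ω) (cont_integrable g ω)]
      calc ‖∫ x, (f x - g x) ∂ω‖ ≤ ∫ x, ‖f x - g x‖ ∂ω := norm_integral_le_integral_norm _
      _ ≤ ∫ _x, D/4 ∂ω := by
          refine integral_mono_of_nonneg (Eventually.of_forall fun x => norm_nonneg _)
            (integrable_const _) (Eventually.of_forall fun x => ?_)
          calc ‖f x - g x‖ = dist (f x) (g x) := (dist_eq_norm _ _).symm
          _ ≤ dist f g := ContinuousMap.dist_apply_le_dist x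
          _ ≤ D/4 := le_of_lt hgd
      _ = D/4 := by simp
    have hgeq := h g hgSt
    have : D ≤ D/4 + D/4 := by
      calc D = ‖((∫ x, f x ∂ω₁) - ∫ x, g x ∂ω₁) - ((∫ x, f x ∂ω₂) - ∫ x, g x ∂ω₂)‖ := by
            rw [hD]; congr 1; rw [hgeq]; ring
      _ ≤ ‖(∫ x, f x ∂ω₁) - ∫ x, g x ∂ω₁‖ + ‖(∫ x, f x ∂ω₂) - ∫ x, g x ∂ω₂‖ :=
            norm_sub_le _ _
      _ ≤ D/4 + D/4 := add_le_add (hbound ω₁ inferInstance) (hbound ω₂ inferInstance)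
    linarith
  refine ext_of_integral_continuous ω₁ ω₂ (fun f => ?_)
  have := hall ⟨fun x => (f x : ℂ), Complex.continuous_ofReal.comp f.continuous⟩
  simp only [ContinuousMap.coe_mk] at this
  rw [show (∫ x, ((f x : ℝ) : ℂ) ∂ω₁) = ((∫ x, f x ∂ω₁ : ℝ) : ℂ) from integral_ofReal,
    show (∫ x, ((f x : ℝ) : ℂ) ∂ω₂) = ((∫ x, f x ∂ω₂ : ℝ) : ℂ) from integral_ofReal] at this
  exact_mod_cast this




lemma cont_integrable' {X : Type*} [TopologicalSpace X] [CompactSpace X] [MeasurableSpace X]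
    [OpensMeasurableSpace X] {E : Type*} [NormedAddCommGroup E] [SecondCountableTopology E]
    (f : C(X, E)) (ω : Measure X) [IsProbabilityMeasure ω] : Integrable (fun x => f x) ω :=
  Integrable.mono' (integrable_const ‖f‖) f.continuous.aestronglyMeasurable
    (Eventually.of_forall fun x => f.norm_coe_le_norm x)

/-- Probability measures with identical mixed "moments" over a multiplicative family of
unit-disc-valued functions generating the σ-algebra agree. -/
lemma ext_of_moments {K : Type*} [MeasurableSpace K] (Kt : Set (K → ℂ))
    (hKt_one : (fun _ : K => (1 : ℂ)) ∈ Kt)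
    (hKt_mul : ∀ χ₁ ∈ Kt, ∀ χ₂ ∈ Kt, (fun x => χ₁ x * χ₂ x) ∈ Kt)
    (hmeas : ∀ χ ∈ Kt, Measurable χ)
    (hbd : ∀ χ ∈ Kt, ∀ x, ‖χ x‖ ≤ 1)
    (hgen : (⨆ χ ∈ Kt, MeasurableSpace.comap χ inferInstance)
      = (inferInstance : MeasurableSpace K))
    (β₁ β₂ : Measure K) [IsProbabilityMeasure β₁] [IsProbabilityMeasure β₂]
    (H : ∀ A ∈ Kt, ∀ B ∈ Kt,
      ∫ x, A x * conj (B x) ∂β₁ = ∫ x, A x * conj (B x) ∂β₂) : β₁ = β₂ := by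
  classical
  have hgen2 : (inferInstance : MeasurableSpace K)
      = MeasurableSpace.generateFrom
        (piiUnionInter (fun χ : K → ℂ =>
          {s | MeasurableSet[MeasurableSpace.comap χ inferInstance] s}) Kt) := by
    rw [generateFrom_piiUnionInter_measurableSet
      (fun χ : K → ℂ => MeasurableSpace.comap χ inferInstance) Kt]
    exact hgen.symm
  refine ext_of_generate_finite _ hgen2
    (isPiSystem_piiUnionInter
      (fun χ : K → ℂ => {s | MeasurableSet[MeasurableSpace.comap χ inferInstance] s})
      (fun χ => fun s hs t ht _ => by
        simp only [Set.mem_setOf_eq] at hs ht ⊢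
        exact MeasurableSet.inter hs ht) Kt) ?_ (by simp)
  rintro t ⟨p, hpKt, sets, hsets, rfl⟩
  have hchoice : ∀ i : ↥p, ∃ B : Set ℂ, MeasurableSet B ∧ (i : K → ℂ) ⁻¹' B = sets i :=
    fun i => MeasurableSpace.measurableSet_comap.mp (hsets i i.2)
  choose Bs hBmeas hBpre using hchoice
  -- the compact polydisc
  let D : Type _ := {z : ℂ // z ∈ Metric.closedBall (0:ℂ) 1}
  haveI : CompactSpace D := isCompact_iff_compactSpace.mp (isCompact_closedBall _ _)
  let Φ : K → (↥p → D) := fun x i => ⟨(i : K → ℂ) x, by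
    simpa [Metric.mem_closedBall, dist_zero_right] using hbd _ (hpKt i.2) x⟩
  have hΦmeas : Measurable Φ := measurable_pi_lambda _ (fun i =>
    Measurable.subtype_mk (hmeas _ (hpKt i.2)))
  set ω₁ := Measure.map Φ β₁ with hω₁
  set ω₂ := Measure.map Φ β₂ with hω₂
  haveI : IsProbabilityMeasure ω₁ := Measure.isProbabilityMeasure_map hΦmeas.aemeasurable
  haveI : IsProbabilityMeasure ω₂ := Measure.isProbabilityMeasure_map hΦmeas.aemeasurable
  -- coordinate functions and the star subalgebra they generate
  let coordC : ↥p → C(↥p → D, ℂ) := fun i =>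
    ⟨fun z => (z i : ℂ), (continuous_subtype_val.comp (continuous_apply i))⟩
  let G : Set C(↥p → D, ℂ) := {g | ∃ i, g = coordC i ∨ g = star (coordC i)}
  have hGstar : ∀ g ∈ G, star g ∈ G := by
    rintro g ⟨i, hg | hg⟩
    · exact ⟨i, Or.inr (by rw [hg])⟩
    · exact ⟨i, Or.inl (by rw [hg, star_star])⟩
  have hstar : ∀ f ∈ Algebra.adjoin ℂ G, star f ∈ Algebra.adjoin ℂ G := by
    intro f hf
    induction hf using Algebra.adjoin_induction with
    | mem g hg => exact Algebra.subset_adjoin (hGstar g hg)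
    | algebraMap r =>
        have : star (algebraMap ℂ C(↥p → D, ℂ) r) = algebraMap ℂ C(↥p → D, ℂ) (conj r) := by
          ext z
          simp [ContinuousMap.star_apply]
        rw [this]
        exact Subalgebra.algebraMap_mem _ _
    | add f g hf hg ihf ihg => rw [star_add]; exact Subalgebra.add_mem _ ihf ihg
    | mul f g hf hg ihf ihg =>
        rw [star_mul, mul_comm]
        exact Subalgebra.mul_mem _ ihf ihg
  let St : StarSubalgebra ℂ C(↥p → D, ℂ) :=
    { toSubalgebra := Algebra.adjoin ℂ G
      star_mem' := fun hf => hstar _ hf }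
  have hsepSt : St.SeparatesPoints := by
    intro z w hzw
    obtain ⟨i, hi⟩ := Function.ne_iff.mp hzw
    refine ⟨fun v => (v i : ℂ), ⟨coordC i, ?_, rfl⟩, ?_⟩
    · exact Algebra.subset_adjoin ⟨i, Or.inl rfl⟩
    · exact fun hc => hi (Subtype.coe_injective hc)
  -- equality of integrals on the subalgebra
  have hQall : ∀ g ∈ Submonoid.closure G,
      ∃ A ∈ Kt, ∃ B ∈ Kt, ∀ x : K, g (Φ x) = A x * conj (B x) := by
    intro g hg
    induction hg using Submonoid.closure_induction with
    | mem g hgG =>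
        obtain ⟨i, hg | hg⟩ := hgG
        · refine ⟨(i : K → ℂ), hpKt i.2, (fun _ => 1), hKt_one, fun x => ?_⟩
          rw [hg]
          simp [coordC, Φ]
        · refine ⟨(fun _ => 1), hKt_one, (i : K → ℂ), hpKt i.2, fun x => ?_⟩
          rw [hg]
          simp [coordC, Φ, ContinuousMap.star_apply]
    | one => exact ⟨_, hKt_one, _, hKt_one, fun x => by simp⟩
    | mul g₁ g₂ hg₁ hg₂ ih₁ ih₂ =>
        obtain ⟨A₁, hA₁, B₁, hB₁, hv₁⟩ := ih₁
        obtain ⟨A₂, hA₂, B₂, hB₂, hv₂⟩ := ih₂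
        refine ⟨_, hKt_mul _ hA₁ _ hA₂, _, hKt_mul _ hB₁ _ hB₂, fun x => ?_⟩
        simp only [ContinuousMap.mul_apply, hv₁ x, hv₂ x, map_mul]
        ring
  have hmem_int : ∀ f ∈ St, ∫ z, f z ∂ω₁ = ∫ z, f z ∂ω₂ := by
    intro f hf
    have hf' : f ∈ Submodule.span ℂ ((Submonoid.closure G : Submonoid C(↥p → D, ℂ)) : Set _) := by
      rw [← Algebra.adjoin_eq_span]
      exact hf
    clear hf
    induction hf' using Submodule.span_induction with
    | mem g hg =>
        obtain ⟨A, hA, B, hB, hv⟩ := hQall g hg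
        rw [hω₁, hω₂, integral_map hΦmeas.aemeasurable g.continuous.aestronglyMeasurable,
          integral_map hΦmeas.aemeasurable g.continuous.aestronglyMeasurable]
        simp_rw [hv]
        exact H A hA B hB
    | zero => simp
    | add f g hf hg ihf ihg =>
        simp only [ContinuousMap.add_apply]
        rw [integral_add (cont_integrable' f ω₁) (cont_integrable' g ω₁),
          integral_add (cont_integrable' f ω₂) (cont_integrable' g ω₂), ihf, ihg]
    | smul c f hf ih =>
        simp only [ContinuousMap.smul_apply]
        rw [integral_smul, integral_smul, ih]
  have hωeq : ω₁ = ω₂ := ext_of_starSubalgebra St hsepSt ω₁ ω₂ hmem_int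
  -- conclude for the π-system set
  have hS : MeasurableSet (⋂ i : ↥p, (fun z : ↥p → D => (z i : ℂ)) ⁻¹' (Bs i)) := by
    refine MeasurableSet.iInter (fun i => ?_)
    exact (measurable_subtype_coe.comp (measurable_pi_apply i)) (hBmeas i)
  have hpre : Φ ⁻¹' (⋂ i : ↥p, (fun z : ↥p → D => (z i : ℂ)) ⁻¹' (Bs i)) = ⋂ x ∈ p, sets x := by
    ext x
    simp only [mem_preimage, mem_iInter]
    constructor
    · intro hx i hi
      have h1 := hx ⟨i, hi⟩
      rw [← hBpre ⟨i, hi⟩]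
      exact h1
    · intro hx i
      have h1 := hx i.1 i.2
      rw [← hBpre i] at h1
      exact h1
  rw [← hpre, ← Measure.map_apply hΦmeas hS, ← Measure.map_apply hΦmeas hS, ← hω₁, ← hω₂, hωeq]



end SaS13

section Main

open Filter Topology MeasureTheory

/-- A character on the semigroup `K` with involution `inv`: a map into the closed unit
disk of `ℂ` with `χ e = 1` (Lean's `0 : K` is the neutral element `e`), multiplicative,
and intertwining the involution with complex conjugation. -/
def IsChar {K : Type*} [AddCommMonoid K] (inv : K → K) (χ : K → ℂ) : Prop :=
  (∀ x : K, ‖χ x‖ ≤ 1) ∧ χ 0 = 1 ∧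
    (∀ x y : K, χ (x + y) = χ x * χ y) ∧
    ∀ x : K, χ (inv x) = (starRingEnd ℂ) (χ x)

/-- Let `K` be a convex cone with involution `inv` and let `Kt` be a
separating sub-semigroup of characters on `K` generating the Borel σ-algebra of `K`.
Let `ξ` and `η` be independent `K`-valued random elements such that `ξ + η` is proper
(non-trivial, with non-vanishing Laplace transform).  Then `E[χ(ξ)] ≠ 0` and
`E[χ(η)] ≠ 0` for every `χ ∈ Kt`; and if moreover `ξ` and `ξ + η` are both strictly
`α`-stable with the same exponent `α`, then `η` is strictly `α`-stable. -/
theorem summands_of_proper_are_proper_and_SaS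
    {K : Type*} [MetricSpace K] [PolishSpace K] [AddCommMonoid K] [SMul ℝ K]
    [MeasurableSpace K] [BorelSpace K]
    (hadd_cont : Continuous fun p : K × K => p.1 + p.2)
    (hsmul_cont : ContinuousOn (fun p : ℝ × K => p.1 • p.2)
      (Set.Ioi (0 : ℝ) ×ˢ (Set.univ : Set K)))
    (hsmul_add : ∀ a : ℝ, 0 < a → ∀ x y : K, a • (x + y) = a • x + a • y)
    (hsmul_assoc : ∀ a b : ℝ, 0 < a → 0 < b → ∀ x : K, a • (b • x) = (a * b) • x)
    (hone_smul : ∀ x : K, (1 : ℝ) • x = x)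
    (hsmul_e : ∀ a : ℝ, 0 < a → a • (0 : K) = (0 : K))
    (inv : K → K)
    (hinv_cont : Continuous inv)
    (hinv_add : ∀ x y : K, inv (x + y) = inv x + inv y)
    (hinv_invol : ∀ x : K, inv (inv x) = x)
    (hinv_smul : ∀ a : ℝ, 0 < a → ∀ x : K, inv (a • x) = a • inv x)
    (Kt : Set (K → ℂ))
    (hKt_char : ∀ χ ∈ Kt, IsChar inv χ)
    (hKt_one : (fun _ : K => (1 : ℂ)) ∈ Kt)
    (hKt_mul : ∀ χ₁ ∈ Kt, ∀ χ₂ ∈ Kt, (fun x => χ₁ x * χ₂ x) ∈ Kt)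
    (hsep : ∀ x y : K, x ≠ y → ∃ χ ∈ Kt, χ x ≠ χ y)
    (hgen : (⨆ χ ∈ Kt, MeasurableSpace.comap χ inferInstance)
      = (inferInstance : MeasurableSpace K))
    {Ω : Type*} [MeasurableSpace Ω] (μ : Measure Ω) [IsProbabilityMeasure μ]
    (ξ η : Ω → K) (hξmeas : Measurable ξ) (hηmeas : Measurable η)
    (hindep : ProbabilityTheory.IndepFun ξ η μ)
    (hnontriv : μ {ω | ξ ω + η ω = (0 : K)} < 1)
    (hproper : ∀ χ ∈ Kt, ∫ ω, χ (ξ ω + η ω) ∂μ ≠ 0)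
    (α : ℝ) (hα : α ≠ 0) :
    (∀ χ ∈ Kt, ∫ ω, χ (ξ ω) ∂μ ≠ 0) ∧ (∀ χ ∈ Kt, ∫ ω, χ (η ω) ∂μ ≠ 0) ∧
    ((∀ a b : ℝ, 0 < a → 0 < b →
        Measure.map (fun p : K × K => (a ^ (1 / α)) • p.1 + (b ^ (1 / α)) • p.2)
            ((μ.map ξ).prod (μ.map ξ)) =
          Measure.map (fun x : K => ((a + b) ^ (1 / α)) • x) (μ.map ξ)) →
      (∀ a b : ℝ, 0 < a → 0 < b →
        Measure.map (fun p : K × K => (a ^ (1 / α)) • p.1 + (b ^ (1 / α)) • p.2)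
            ((μ.map (fun ω => ξ ω + η ω)).prod (μ.map (fun ω => ξ ω + η ω))) =
          Measure.map (fun x : K => ((a + b) ^ (1 / α)) • x)
            (μ.map (fun ω => ξ ω + η ω))) →
      ∀ a b : ℝ, 0 < a → 0 < b →
        Measure.map (fun p : K × K => (a ^ (1 / α)) • p.1 + (b ^ (1 / α)) • p.2)
            ((μ.map η).prod (μ.map η)) =
          Measure.map (fun x : K => ((a + b) ^ (1 / α)) • x) (μ.map η)) := by
  classical
  have hζmeas : Measurable (fun ω => ξ ω + η ω) :=
    hadd_cont.measurable.comp (hξmeas.prodMk hηmeas)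
  haveI hPξ : IsProbabilityMeasure (μ.map ξ) := Measure.isProbabilityMeasure_map hξmeas.aemeasurable
  haveI hPη : IsProbabilityMeasure (μ.map η) := Measure.isProbabilityMeasure_map hηmeas.aemeasurable
  haveI hPζ : IsProbabilityMeasure (μ.map (fun ω => ξ ω + η ω)) :=
    Measure.isProbabilityMeasure_map hζmeas.aemeasurable
  have hχmeas : ∀ χ ∈ Kt, Measurable χ := by
    intro χ hχ
    have hle : MeasurableSpace.comap χ inferInstance
        ≤ (⨆ χ ∈ Kt, MeasurableSpace.comap χ inferInstance) :=
      le_iSup₂ (f := fun (χ : K → ℂ) (_ : χ ∈ Kt) =>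
        MeasurableSpace.comap χ inferInstance) χ hχ
    rw [hgen] at hle
    exact measurable_iff_comap_le.mpr hle
  have hsmulc : ∀ c : ℝ, 0 < c → Continuous (fun x : K => c • x) := by
    intro c hc
    exact hsmul_cont.comp_continuous (continuous_const.prodMk continuous_id)
      (fun x => Set.mem_prod.2 ⟨Set.mem_Ioi.mpr hc, Set.mem_univ _⟩)
  have hsplit : ∀ (φ₁ φ₂ : K → ℂ), Measurable φ₁ → Measurable φ₂ →
      ∫ ω, φ₁ (ξ ω) * φ₂ (η ω) ∂μ = (∫ ω, φ₁ (ξ ω) ∂μ) * ∫ ω, φ₂ (η ω) ∂μ := by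
    intro φ₁ φ₂ h1 h2
    have hmap := (ProbabilityTheory.indepFun_iff_map_prod_eq_prod_map_map
      hξmeas.aemeasurable hηmeas.aemeasurable).mp hindep
    have hpair : Measurable fun ω => (ξ ω, η ω) := hξmeas.prodMk hηmeas
    have e1 : ∫ ω, φ₁ (ξ ω) * φ₂ (η ω) ∂μ
        = ∫ q, φ₁ q.1 * φ₂ q.2 ∂(μ.map fun ω => (ξ ω, η ω)) :=
      (integral_map hpair.aemeasurable
        (((h1.comp measurable_fst).mul (h2.comp measurable_snd)).aestronglyMeasurable)).symm
    rw [e1, hmap, integral_prod_mul,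
      integral_map hξmeas.aemeasurable h1.aestronglyMeasurable,
      integral_map hηmeas.aemeasurable h2.aestronglyMeasurable]
  have hmapscale : ∀ (ν : Measure K) (ψ : K → ℂ), Measurable ψ → ∀ c : ℝ, 0 < c →
      ∫ y, ψ y ∂(Measure.map (fun x : K => c • x) ν) = ∫ x, ψ (c • x) ∂ν := by
    intro ν ψ hψ c hc
    rw [integral_map ((hsmulc c hc).measurable).aemeasurable hψ.aestronglyMeasurable]
  have hmapint : ∀ (ν : Measure K), IsProbabilityMeasure ν → ∀ (ψ : K → ℂ), Measurable ψ →
      (∀ x y : K, ψ (x + y) = ψ x * ψ y) →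
      ∀ a b : ℝ, 0 < a → 0 < b →
      ∫ y, ψ y ∂(Measure.map (fun p : K × K =>
          (a ^ (1/α)) • p.1 + (b ^ (1/α)) • p.2) (ν.prod ν))
        = (∫ x, ψ ((a ^ (1/α)) • x) ∂ν) * ∫ x, ψ ((b ^ (1/α)) • x) ∂ν := by
    intro ν hν ψ hψ hmul a b ha hb
    have hca : (0:ℝ) < a ^ (1/α) := Real.rpow_pos_of_pos ha _
    have hcb : (0:ℝ) < b ^ (1/α) := Real.rpow_pos_of_pos hb _
    have hFc : Continuous (fun p : K × K => (a ^ (1/α)) • p.1 + (b ^ (1/α)) • p.2) :=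
      hadd_cont.comp ((((hsmulc _ hca).comp continuous_fst)).prodMk
        ((hsmulc _ hcb).comp continuous_snd))
    rw [integral_map hFc.measurable.aemeasurable hψ.aestronglyMeasurable]
    have hpt : ∀ p : K × K, ψ ((a ^ (1/α)) • p.1 + (b ^ (1/α)) • p.2)
        = ψ ((a ^ (1/α)) • p.1) * ψ ((b ^ (1/α)) • p.2) := fun p => hmul _ _
    simp_rw [hpt]
    exact integral_prod_mul (fun x : K => ψ ((a ^ (1/α)) • x)) (fun x : K => ψ ((b ^ (1/α)) • x))
  have hstab : ∀ (ν : Measure K), IsProbabilityMeasure ν →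
      (∀ a b : ℝ, 0 < a → 0 < b →
        Measure.map (fun p : K × K => (a ^ (1 / α)) • p.1 + (b ^ (1 / α)) • p.2) (ν.prod ν) =
          Measure.map (fun x : K => ((a + b) ^ (1 / α)) • x) ν) →
      ∀ (ψ : K → ℂ), Measurable ψ → (∀ x y : K, ψ (x + y) = ψ x * ψ y) →
      ∀ a b : ℝ, 0 < a → 0 < b →
      (∫ x, ψ ((a ^ (1/α)) • x) ∂ν) * (∫ x, ψ ((b ^ (1/α)) • x) ∂ν)
        = ∫ x, ψ (((a + b) ^ (1/α)) • x) ∂ν := by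
    intro ν hν hSaS ψ hψ hmul a b ha hb
    rw [← hmapint ν hν ψ hψ hmul a b ha hb, hSaS a b ha hb,
      hmapscale ν ψ hψ _ (Real.rpow_pos_of_pos (by linarith) _)]
  have hfg : ∀ (ψ : K → ℂ), Measurable ψ → (∀ x y : K, ψ (x + y) = ψ x * ψ y) →
      ∀ t : ℝ, 0 < t →
      ∫ x, ψ ((t ^ (1/α)) • x) ∂(μ.map (fun ω => ξ ω + η ω))
        = (∫ x, ψ ((t ^ (1/α)) • x) ∂(μ.map ξ)) * ∫ x, ψ ((t ^ (1/α)) • x) ∂(μ.map η) := by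
    intro ψ hψ hmul t ht
    have hct : (0:ℝ) < t ^ (1/α) := Real.rpow_pos_of_pos ht _
    have hcomp : Measurable fun x : K => ψ ((t ^ (1/α)) • x) :=
      hψ.comp (hsmulc _ hct).measurable
    rw [integral_map hζmeas.aemeasurable hcomp.aestronglyMeasurable,
      integral_map hξmeas.aemeasurable hcomp.aestronglyMeasurable,
      integral_map hηmeas.aemeasurable hcomp.aestronglyMeasurable]
    have hpt : ∀ ω, ψ ((t ^ (1/α)) • (ξ ω + η ω))
        = ψ ((t ^ (1/α)) • ξ ω) * ψ ((t ^ (1/α)) • η ω) := by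
      intro ω
      rw [hsmul_add _ hct, hmul]
    simp_rw [hpt]
    exact hsplit _ _ hcomp hcomp
  have hχbd : ∀ χ ∈ Kt, ∀ x, ‖χ x‖ ≤ 1 := fun χ hχ x => by
    exact (hKt_char χ hχ).1 x
  have hχmul : ∀ χ ∈ Kt, ∀ x y : K, χ (x + y) = χ x * χ y := fun χ hχ => (hKt_char χ hχ).2.2.1
  have hfactor : ∀ χ ∈ Kt,
      ∫ ω, χ (ξ ω + η ω) ∂μ = (∫ ω, χ (ξ ω) ∂μ) * ∫ ω, χ (η ω) ∂μ := by
    intro χ hχ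
    have hpt : ∀ ω, χ (ξ ω + η ω) = χ (ξ ω) * χ (η ω) := fun ω => hχmul χ hχ _ _
    simp_rw [hpt]
    exact hsplit χ χ (hχmeas χ hχ) (hχmeas χ hχ)
  refine ⟨fun χ hχ h0 => hproper χ hχ (by rw [hfactor χ hχ, h0, zero_mul]),
    fun χ hχ h0 => hproper χ hχ (by rw [hfactor χ hχ, h0, mul_zero]), ?_⟩
  intro hξSaS hζSaS a b ha hb
  -- goodness of mixed characters
  have hgood : ∀ A ∈ Kt, ∀ B ∈ Kt,
      Measurable (fun x : K => A x * (starRingEnd ℂ) (B x))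
      ∧ (∀ x : K, ‖A x * (starRingEnd ℂ) (B x)‖ ≤ 1)
      ∧ (∀ x y : K, A (x+y) * (starRingEnd ℂ) (B (x+y))
          = (A x * (starRingEnd ℂ) (B x)) * (A y * (starRingEnd ℂ) (B y))) := by
    intro A hA B hB
    refine ⟨(hχmeas A hA).mul (continuous_star.measurable.comp (hχmeas B hB)), fun x => ?_,
      fun x y => ?_⟩
    · rw [norm_mul, RCLike.norm_conj]
      calc ‖A x‖ * ‖B x‖ ≤ 1 * 1 :=
          mul_le_mul (hχbd A hA x) (hχbd B hB x) (norm_nonneg _) zero_le_one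
      _ = 1 := by norm_num
    · rw [hχmul A hA, hχmul B hB, map_mul]
      ring
  -- multiplicativity of the Laplace transforms of ζ and ξ in the "mass" parameter
  have HmultH : ∀ (ψ : K → ℂ), Measurable ψ → (∀ x y : K, ψ (x + y) = ψ x * ψ y) →
      ∀ s t : ℝ, 0 < s → 0 < t →
      (∫ x, ψ ((s ^ (1/α)) • x) ∂(μ.map (fun ω => ξ ω + η ω)))
        * (∫ x, ψ ((t ^ (1/α)) • x) ∂(μ.map (fun ω => ξ ω + η ω)))
      = ∫ x, ψ (((s + t) ^ (1/α)) • x) ∂(μ.map (fun ω => ξ ω + η ω)) :=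
    fun ψ h1 h3 s t hs ht => hstab _ hPζ hζSaS ψ h1 h3 s t hs ht
  have HmultF : ∀ (ψ : K → ℂ), Measurable ψ → (∀ x y : K, ψ (x + y) = ψ x * ψ y) →
      ∀ s t : ℝ, 0 < s → 0 < t →
      (∫ x, ψ ((s ^ (1/α)) • x) ∂(μ.map ξ)) * (∫ x, ψ ((t ^ (1/α)) • x) ∂(μ.map ξ))
      = ∫ x, ψ (((s + t) ^ (1/α)) • x) ∂(μ.map ξ) :=
    fun ψ h1 h3 s t hs ht => hstab _ hPξ hξSaS ψ h1 h3 s t hs ht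
  -- characters have nonvanishing ζ-Laplace transform at every scale
  have hHχne : ∀ χ ∈ Kt, ∀ t : ℝ, 0 < t →
      (∫ x, χ ((t ^ (1/α)) • x) ∂(μ.map (fun ω => ξ ω + η ω))) ≠ 0 := by
    intro χ hχ t ht h0
    have hall := SaS13.mult_zero_all
      (u := fun t => ∫ x, χ ((t ^ (1/α)) • x) ∂(μ.map (fun ω => ξ ω + η ω)))
      (fun s t hs ht => HmultH χ (hχmeas χ hχ) (hχmul χ hχ) s t hs ht) ht h0
    have h1 := hall 1 one_pos
    have e1 : (∫ x, χ (((1:ℝ) ^ (1/α)) • x) ∂(μ.map (fun ω => ξ ω + η ω)))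
        = ∫ ω, χ (ξ ω + η ω) ∂μ := by
      have hpt : ∀ x : K, χ (((1:ℝ) ^ (1/α)) • x) = χ x := fun x => by
        rw [Real.one_rpow, hone_smul]
      simp_rw [hpt]
      exact integral_map hζmeas.aemeasurable (hχmeas χ hχ).aestronglyMeasurable
    exact hproper χ hχ (by rw [← e1]; exact h1)
  -- the norms of character transforms at dyadic scales increase to values near 1
  have hrA : ∀ A ∈ Kt,
      Monotone (fun n : ℕ => ‖∫ x, A ((((1:ℝ)/2) ^ n ) ^ (1/α) • x)
          ∂(μ.map (fun ω => ξ ω + η ω))‖)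
      ∧ ∃ n : ℕ, (99/100 : ℝ)
          < ‖∫ x, A ((((1:ℝ)/2) ^ n ) ^ (1/α) • x) ∂(μ.map (fun ω => ξ ω + η ω))‖ := by
    intro A hA
    set r : ℕ → ℝ := fun n => ‖∫ x, A ((((1:ℝ)/2) ^ n ) ^ (1/α) • x)
        ∂(μ.map (fun ω => ξ ω + η ω))‖ with hrdef
    have hrec : ∀ n : ℕ, r (n+1) ^ 2 = r n := by
      intro n
      have hp : (0:ℝ) < ((1:ℝ)/2) ^ (n+1) := by positivity
      have h1 := HmultH A (hχmeas A hA) (hχmul A hA) _ _ hp hp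
      rw [show ((1:ℝ)/2) ^ (n+1) + ((1:ℝ)/2) ^ (n+1) = ((1:ℝ)/2) ^ n by ring] at h1
      rw [hrdef]
      simp only
      rw [← h1, norm_mul, sq]
    have hle1 : ∀ n, r n ≤ 1 := by
      intro n
      exact SaS13.norm_integral_le_one (fun x => hχbd A hA _)
    have hpos : ∀ n, 0 < r n := by
      intro n
      rw [hrdef]
      simp only
      rw [norm_pos_iff]
      exact hHχne A hA _ (by positivity)
    have hmono : Monotone r := by
      refine monotone_nat_of_le_succ (fun n => ?_)
      nlinarith [hrec n, hle1 (n+1), hpos (n+1)]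
    refine ⟨hmono, ?_⟩
    by_contra hcon
    push_neg at hcon
    have hpow : ∀ n, r 0 = r n ^ (2 ^ n) := by
      intro n
      induction n with
      | zero => simp
      | succ n ih =>
          rw [ih, ← hrec n, ← pow_mul]
          congr 1
          ring
    have hbound : ∀ n : ℕ, r 0 ≤ (99/100:ℝ) ^ n := by
      intro n
      calc r 0 = r n ^ (2 ^ n) := hpow n
      _ ≤ (99/100:ℝ) ^ (2 ^ n) := pow_le_pow_left₀ (hpos n).le (hcon n) _
      _ ≤ (99/100:ℝ) ^ n :=
          pow_le_pow_of_le_one (by norm_num) (by norm_num) (Nat.le_of_lt (Nat.lt_two_pow_self))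
    have h0 : Tendsto (fun n : ℕ => (99/100:ℝ) ^ n) atTop (𝓝 0) :=
      tendsto_pow_atTop_nhds_zero_of_lt_one (by norm_num) (by norm_num)
    have : r 0 ≤ 0 := ge_of_tendsto h0 (Eventually.of_forall hbound)
    exact absurd this (not_le.mpr (hpos 0))
  -- mixed transforms of ζ are nonvanishing at every scale
  have hmixed : ∀ A ∈ Kt, ∀ B ∈ Kt, ∀ s : ℝ, 0 < s →
      (∫ x, (A ((s ^ (1/α)) • x) * (starRingEnd ℂ) (B ((s ^ (1/α)) • x)))
        ∂(μ.map (fun ω => ξ ω + η ω))) ≠ 0 := by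
    intro A hA B hB
    obtain ⟨hψm, hψb, hψmul⟩ := hgood A hA B hB
    obtain ⟨monoA, nA, hnA⟩ := hrA A hA
    obtain ⟨monoB, nB, hnB⟩ := hrA B hB
    have hA99 : (99/100:ℝ) < ‖∫ x, A ((((1:ℝ)/2) ^ (max nA nB)) ^ (1/α) • x)
        ∂(μ.map (fun ω => ξ ω + η ω))‖ := lt_of_lt_of_le hnA (monoA (le_max_left _ _))
    have hB99 : (99/100:ℝ) < ‖∫ x, B ((((1:ℝ)/2) ^ (max nA nB)) ^ (1/α) • x)
        ∂(μ.map (fun ω => ξ ω + η ω))‖ := lt_of_lt_of_le hnB (monoB (le_max_right _ _))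
    set t : ℝ := ((1:ℝ)/2) ^ (max nA nB) with htdef
    have htpos : 0 < t := by positivity
    have hct : (0:ℝ) < t ^ (1/α) := Real.rpow_pos_of_pos htpos _
    set ν : Measure K := Measure.map (fun x : K => (t ^ (1/α)) • x)
      (μ.map (fun ω => ξ ω + η ω)) with hνdef
    haveI : IsProbabilityMeasure ν :=
      Measure.isProbabilityMeasure_map (hsmulc _ hct).measurable.aemeasurable
    have eψ : ∫ x, (A ((t ^ (1/α)) • x) * (starRingEnd ℂ) (B ((t ^ (1/α)) • x)))
        ∂(μ.map (fun ω => ξ ω + η ω)) = ∫ x, A x * (starRingEnd ℂ) (B x) ∂ν :=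
      (hmapscale _ _ hψm _ hct).symm
    have eA : ∫ x, A ((t ^ (1/α)) • x) ∂(μ.map (fun ω => ξ ω + η ω)) = ∫ x, A x ∂ν :=
      (hmapscale _ _ (hχmeas A hA) _ hct).symm
    have eB : ∫ x, B ((t ^ (1/α)) • x) ∂(μ.map (fun ω => ξ ω + η ω)) = ∫ x, B x ∂ν :=
      (hmapscale _ _ (hχmeas B hB) _ hct).symm
    have hest := SaS13.key_estimate ν (hχmeas A hA) (hχmeas B hB) (hχbd A hA) (hχbd B hB)
    have hAle : ‖∫ x, A x ∂ν‖ ≤ 1 := SaS13.norm_integral_le_one (hχbd A hA)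
    have hBle : ‖∫ x, B x ∂ν‖ ≤ 1 := SaS13.norm_integral_le_one (hχbd B hB)
    have hA99' : (99/100:ℝ) < ‖∫ x, A x ∂ν‖ := by rw [← eA]; exact hA99
    have hB99' : (99/100:ℝ) < ‖∫ x, B x ∂ν‖ := by rw [← eB]; exact hB99
    have hne : (∫ x, (A ((t ^ (1/α)) • x) * (starRingEnd ℂ) (B ((t ^ (1/α)) • x)))
        ∂(μ.map (fun ω => ξ ω + η ω))) ≠ 0 := by
      intro h0
      rw [eψ] at h0
      rw [h0, zero_sub, norm_neg, norm_mul, RCLike.norm_conj] at hest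
      nlinarith [hest, hA99', hB99', hAle, hBle]
    intro s hs h0
    have hall := SaS13.mult_zero_all
      (u := fun s => ∫ x, (A ((s ^ (1/α)) • x) * (starRingEnd ℂ) (B ((s ^ (1/α)) • x)))
        ∂(μ.map (fun ω => ξ ω + η ω)))
      (fun u v hu hv => HmultH _ hψm hψmul u v hu hv) hs h0
    exact hne (hall t htpos)
  -- ξ-transforms of mixed characters are nonvanishing
  have hFne : ∀ A ∈ Kt, ∀ B ∈ Kt, ∀ s : ℝ, 0 < s →
      (∫ x, (A ((s ^ (1/α)) • x) * (starRingEnd ℂ) (B ((s ^ (1/α)) • x)))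
        ∂(μ.map ξ)) ≠ 0 := by
    intro A hA B hB s hs h0
    obtain ⟨hψm, hψb, hψmul⟩ := hgood A hA B hB
    refine hmixed A hA B hB s hs ?_
    rw [hfg _ hψm hψmul s hs]
    rw [h0, zero_mul]
  -- multiplicativity of the η-transform
  have hGmult : ∀ A ∈ Kt, ∀ B ∈ Kt,
      (∫ x, (A ((a ^ (1/α)) • x) * (starRingEnd ℂ) (B ((a ^ (1/α)) • x))) ∂(μ.map η))
        * (∫ x, (A ((b ^ (1/α)) • x) * (starRingEnd ℂ) (B ((b ^ (1/α)) • x))) ∂(μ.map η))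
      = ∫ x, (A (((a + b) ^ (1/α)) • x) * (starRingEnd ℂ) (B (((a + b) ^ (1/α)) • x)))
          ∂(μ.map η) := by
    intro A hA B hB
    obtain ⟨hψm, hψb, hψmul⟩ := hgood A hA B hB
    have e := HmultH _ hψm hψmul a b ha hb
    rw [hfg _ hψm hψmul a ha, hfg _ hψm hψmul b hb,
      hfg _ hψm hψmul (a+b) (by linarith)] at e
    have eF := HmultF _ hψm hψmul a b ha hb
    have hFab := hFne A hA B hB (a+b) (by linarith)
    refine mul_left_cancel₀ hFab ?_
    calc (∫ x, (A ((a+b) ^ (1/α) • x) * (starRingEnd ℂ) (B ((a+b) ^ (1/α) • x))) ∂(μ.map ξ))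
          * ((∫ x, (A (a ^ (1/α) • x) * (starRingEnd ℂ) (B (a ^ (1/α) • x))) ∂(μ.map η))
            * (∫ x, (A (b ^ (1/α) • x) * (starRingEnd ℂ) (B (b ^ (1/α) • x))) ∂(μ.map η)))
        = ((∫ x, (A (a ^ (1/α) • x) * (starRingEnd ℂ) (B (a ^ (1/α) • x))) ∂(μ.map ξ))
            * (∫ x, (A (b ^ (1/α) • x) * (starRingEnd ℂ) (B (b ^ (1/α) • x))) ∂(μ.map ξ)))
          * ((∫ x, (A (a ^ (1/α) • x) * (starRingEnd ℂ) (B (a ^ (1/α) • x))) ∂(μ.map η))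
            * (∫ x, (A (b ^ (1/α) • x) * (starRingEnd ℂ) (B (b ^ (1/α) • x))) ∂(μ.map η))) := by
          rw [eF]
    _ = _ := by rw [← e]; ring
  -- conclude via the moment-extension lemma
  haveI : IsProbabilityMeasure (Measure.map (fun p : K × K =>
      (a ^ (1 / α)) • p.1 + (b ^ (1 / α)) • p.2) ((μ.map η).prod (μ.map η))) := by
    refine Measure.isProbabilityMeasure_map (Continuous.measurable ?_).aemeasurable
    exact hadd_cont.comp ((((hsmulc _ (Real.rpow_pos_of_pos ha _)).comp continuous_fst)).prodMk
      ((hsmulc _ (Real.rpow_pos_of_pos hb _)).comp continuous_snd))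
  haveI : IsProbabilityMeasure (Measure.map (fun x : K =>
      ((a + b) ^ (1 / α)) • x) (μ.map η)) :=
    Measure.isProbabilityMeasure_map
      (hsmulc _ (Real.rpow_pos_of_pos (by linarith) _)).measurable.aemeasurable
  refine SaS13.ext_of_moments Kt hKt_one hKt_mul hχmeas hχbd hgen _ _ ?_
  intro A hA B hB
  obtain ⟨hψm, hψb, hψmul⟩ := hgood A hA B hB
  rw [hmapint (μ.map η) hPη _ hψm hψmul a b ha hb,
    hmapscale (μ.map η) _ hψm _ (Real.rpow_pos_of_pos (by linarith : (0:ℝ) < a + b) _)]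
  exact hGmult A hA B hB

end Main
end
end

section
/- Assume Conditions (C) and (E). Then for every proper SαS random element ξ in K with characteristic exponent α, one has α > 0 if and only if the neutral element coincides with the origin, e = 0. -/
open Filter Topology MeasureTheory

/-- A semicontinuous `[0,1]`-valued character (the modulus part in Condition (C)). -/
def IsModChar {K : Type*} [TopologicalSpace K] [AddCommMonoid K] (inv : K → K)
    (χ' : K → ℝ) : Prop :=
  (∀ x : K, χ' x ∈ Set.Icc (0 : ℝ) 1) ∧ χ' 0 = 1 ∧
    (∀ x y : K, χ' (x + y) = χ' x * χ' y) ∧ (∀ x : K, χ' (inv x) = χ' x) ∧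
    (LowerSemicontinuous χ' ∨ UpperSemicontinuous χ')

/-- A continuous character with values in the unit circle (the argument part in
Condition (C)). -/
def IsArgChar {K : Type*} [TopologicalSpace K] [AddCommMonoid K] (inv : K → K)
    (χ'' : K → ℂ) : Prop :=
  (∀ x : K, ‖χ'' x‖ = 1) ∧ χ'' 0 = 1 ∧
    (∀ x y : K, χ'' (x + y) = χ'' x * χ'' y) ∧
    (∀ x : K, χ'' (inv x) = (starRingEnd ℂ) (χ'' x)) ∧ Continuous χ''

/-- Condition (C): `Kt` is a cone of characters (containing `1`, closed under pointwise
multiplication and under the rescalings `χ ↦ χ (a • ·)`, `a > 0`) such that every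
`χ ∈ Kt` factorises as the product of a semicontinuous `[0,1]`-valued character and a
continuous unit-circle-valued character, and `Kt` possesses a countable strictly
separating sub-family. -/
def ConditionC {K : Type*} [TopologicalSpace K] [AddCommMonoid K] [SMul ℝ K]
    (inv : K → K) (Kt : Set (K → ℂ)) : Prop :=
  (∀ χ ∈ Kt, IsChar inv χ) ∧
  ((fun _ : K => (1 : ℂ)) ∈ Kt) ∧
  (∀ χ₁ ∈ Kt, ∀ χ₂ ∈ Kt, (fun x => χ₁ x * χ₂ x) ∈ Kt) ∧
  (∀ a : ℝ, 0 < a → ∀ χ ∈ Kt, (fun x : K => χ (a • x)) ∈ Kt) ∧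
  (∀ χ ∈ Kt, ∃ (χ' : K → ℝ) (χ'' : K → ℂ), IsModChar inv χ' ∧ IsArgChar inv χ'' ∧
    ∀ x : K, χ x = (χ' x : ℂ) * χ'' x) ∧
  (∃ C : Set (K → ℂ), C ⊆ Kt ∧ C.Countable ∧ ∀ x y : K, x ≠ y →
    ∃ χ ∈ C, ∃ U ∈ 𝓝 x, ∃ V ∈ 𝓝 y, ∀ x' ∈ U, ∀ y' ∈ V, χ x' ≠ χ y')

open scoped Classical in
/-- Condition (E): `K` is pointed with origin `o` and, for every character `χ ∈ Kt` and
every `x ∈ E = K ∖ {o, e}`, `χ (s • x) → 1`, where `s ↓ 0` if `e = o` and `s → ∞`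
otherwise (Lean's `0 : K` is the neutral element `e`). -/
def ConditionE {K : Type*} [TopologicalSpace K] [AddCommMonoid K] [SMul ℝ K]
    (o : K) (Kt : Set (K → ℂ)) : Prop :=
  ∀ χ ∈ Kt, ∀ x : K, x ≠ o → x ≠ 0 →
    Filter.Tendsto (fun s : ℝ => χ (s • x))
      (if o = (0 : K) then nhdsWithin 0 (Set.Ioi 0) else Filter.atTop) (nhds 1)

section Aux

open Filter Topology MeasureTheory

private lemma aux_fixed_point {z L : ℂ}
    (h : Filter.Tendsto (fun m : ℕ => z ^ (m + 1)) Filter.atTop (𝓝 L)) : L = z * L := by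
  have h2 : Filter.Tendsto (fun m : ℕ => z ^ (m + 1 + 1)) Filter.atTop (𝓝 L) := by
    have := h.comp (tendsto_add_atTop_nat 1)
    exact this
  have h3 : Filter.Tendsto (fun m : ℕ => z * z ^ (m + 1)) Filter.atTop (𝓝 (z * L)) :=
    h.const_mul z
  have he : (fun m : ℕ => z ^ (m + 1 + 1)) = fun m : ℕ => z * z ^ (m + 1) := by
    funext m; ring
  exact tendsto_nhds_unique (he ▸ h2) h3

private lemma aux_eq_one_ae {Ω : Type*} [MeasurableSpace Ω] (μ : Measure Ω)
    [IsProbabilityMeasure μ] {f : Ω → ℂ} (hm : AEStronglyMeasurable f μ)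
    (hb : ∀ ω, ‖f ω‖ ≤ 1) (h1 : ∫ ω, f ω ∂μ = 1) : ∀ᵐ ω ∂μ, f ω = 1 := by
  have hint : Integrable f μ := ⟨hm, HasFiniteIntegral.of_bounded (C := 1) (.of_forall hb)⟩
  have hgint : Integrable (fun ω => 1 - (f ω).re) μ := (integrable_const 1).sub hint.re
  have hg0 : 0 ≤ fun ω => 1 - (f ω).re := by
    intro ω
    have h := Complex.re_le_norm (f ω)
    have := hb ω
    simp only [Pi.zero_apply]; linarith
  have hgzero : ∫ ω, (1 - (f ω).re) ∂μ = 0 := by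
    have h2 : ∫ ω, (f ω).re ∂μ = (∫ ω, f ω ∂μ).re := integral_re hint
    have h3 : ∫ ω, (1 - (f ω).re) ∂μ = (∫ ω, (1:ℝ) ∂μ) - ∫ ω, (f ω).re ∂μ :=
      integral_sub (integrable_const 1) hint.re
    rw [h3, h2, h1]; simp
  have := (integral_eq_zero_iff_of_nonneg hg0 hgint).mp hgzero
  refine this.mono fun ω hω => ?_
  have hre : (f ω).re = 1 := by
    have : (1 : ℝ) - (f ω).re = 0 := hω
    linarith
  have habs : ‖f ω‖ ≤ 1 := by exact hb ω
  have hsq : (f ω).re ^ 2 + (f ω).im ^ 2 ≤ 1 := by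
    have := Complex.sq_norm (f ω)
    have h2 : ‖f ω‖ ^ 2 ≤ 1 := by nlinarith [norm_nonneg (f ω)]
    rw [this, Complex.normSq_apply] at h2; nlinarith
  have him : (f ω).im = 0 := by nlinarith
  exact Complex.ext (by simp [hre]) (by simp [him])

end Aux

/-- Assume Conditions (C) and (E).  Then for every proper strictly
`α`-stable random element `ξ` in `K`, the characteristic exponent `α` is positive if
and only if the neutral element coincides with the origin (`(0 : K) = o` in Lean's
encoding, where `0` is the paper's `e` and `o` the paper's origin). -/
theorem SaS_exponent_positive_iff_neutral_eq_origin
    {K : Type*} [MetricSpace K] [PolishSpace K] [AddCommMonoid K] [SMul ℝ K]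
    [MeasurableSpace K] [BorelSpace K]
    (hadd_cont : Continuous fun p : K × K => p.1 + p.2)
    (hsmul_cont : ContinuousOn (fun p : ℝ × K => p.1 • p.2)
      (Set.Ioi (0 : ℝ) ×ˢ (Set.univ : Set K)))
    (hsmul_add : ∀ a : ℝ, 0 < a → ∀ x y : K, a • (x + y) = a • x + a • y)
    (hsmul_assoc : ∀ a b : ℝ, 0 < a → 0 < b → ∀ x : K, a • (b • x) = (a * b) • x)
    (hone_smul : ∀ x : K, (1 : ℝ) • x = x)
    (hsmul_e : ∀ a : ℝ, 0 < a → a • (0 : K) = (0 : K))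
    (inv : K → K)
    (hinv_cont : Continuous inv)
    (hinv_add : ∀ x y : K, inv (x + y) = inv x + inv y)
    (hinv_invol : ∀ x : K, inv (inv x) = x)
    (hinv_smul : ∀ a : ℝ, 0 < a → ∀ x : K, inv (a • x) = a • inv x)
    (o : K)
    (horigin : ∀ x : K, x ≠ 0 →
      Filter.Tendsto (fun a : ℝ => a • x) (nhdsWithin 0 (Set.Ioi 0)) (nhds o))
    (horigin_unique : ∀ o' : K, (∀ x : K, x ≠ 0 →
      Filter.Tendsto (fun a : ℝ => a • x) (nhdsWithin 0 (Set.Ioi 0)) (nhds o')) → o' = o)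
    (Kt : Set (K → ℂ)) (hC : ConditionC inv Kt) (hE : ConditionE o Kt)
    {Ω : Type*} [MeasurableSpace Ω] (μ : Measure Ω) [IsProbabilityMeasure μ]
    (ξ : Ω → K) (hξmeas : Measurable ξ)
    (hnontriv : μ {ω | ξ ω = (0 : K)} < 1)
    (hproper : ∀ χ ∈ Kt, ∫ ω, χ (ξ ω) ∂μ ≠ 0)
    (α : ℝ) (hα : α ≠ 0)
    (hSaS : ∀ a b : ℝ, 0 < a → 0 < b →
      Measure.map (fun p : K × K => (a ^ (1 / α)) • p.1 + (b ^ (1 / α)) • p.2)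
          ((μ.map ξ).prod (μ.map ξ)) =
        Measure.map (fun x : K => ((a + b) ^ (1 / α)) • x) (μ.map ξ)) :
    0 < α ↔ (0 : K) = o := by
  classical
  haveI hν : IsProbabilityMeasure (μ.map ξ) := Measure.isProbabilityMeasure_map hξmeas.aemeasurable
  -- characters are measurable
  have hχm : ∀ χ ∈ Kt, Measurable χ := by
    intro χ hχ
    obtain ⟨χ', χ'', hmod, harg, hfac⟩ := hC.2.2.2.2.1 χ hχ
    have h1 : Measurable χ' := hmod.2.2.2.2.elim (fun h => h.measurable) (fun h => h.measurable)
    have h2 : Measurable χ'' := harg.2.2.2.2.measurable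
    have he : χ = fun x => (χ' x : ℂ) * χ'' x := funext hfac
    rw [he]
    exact (Complex.measurable_ofReal.comp h1).mul h2
  -- boundedness of characters in norm
  have hbound : ∀ χ ∈ Kt, ∀ x : K, ‖χ x‖ ≤ 1 := by
    intro χ hχ x
    exact (hC.1 χ hχ).1 x
  -- scalar multiplication by a fixed positive scalar is continuous
  have hsmulc : ∀ a : ℝ, 0 < a → Continuous fun x : K => a • x := by
    intro a ha
    rw [continuous_iff_continuousAt]
    intro x
    have hmem : Set.Ioi (0:ℝ) ×ˢ (Set.univ : Set K) ∈ 𝓝 (a, x) :=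
      (isOpen_Ioi.prod isOpen_univ).mem_nhds ⟨ha, trivial⟩
    have h1 : ContinuousAt (fun p : ℝ × K => p.1 • p.2) (a, x) :=
      hsmul_cont.continuousAt hmem
    exact h1.comp ((continuous_const.prodMk continuous_id).continuousAt)
  -- t ↦ t • x is continuous on (0, ∞)
  have hsmulx : ∀ x : K, ContinuousOn (fun t : ℝ => t • x) (Set.Ioi 0) := by
    intro x
    have h1 : ContinuousOn (fun t : ℝ => ((t, x) : ℝ × K)) (Set.Ioi 0) :=
      (continuous_id.prodMk continuous_const).continuousOn
    exact hsmul_cont.comp h1 (fun t ht => ⟨ht, trivial⟩)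
  -- transfer integrals over the image measure
  have hμint : ∀ c : ℝ, 0 < c → ∀ χ ∈ Kt,
      ∫ x, χ (c • x) ∂(μ.map ξ) = ∫ ω, χ (c • ξ ω) ∂μ := by
    intro c hc χ hχ
    exact integral_map hξmeas.aemeasurable
      ((hχm χ hχ).comp (hsmulc c hc).measurable).aestronglyMeasurable
  -- the key multiplicative identity from strict stability
  have hkey : ∀ χ ∈ Kt, ∀ a b : ℝ, 0 < a → 0 < b →
      ∫ ω, χ (((a + b) ^ (1/α)) • ξ ω) ∂μ
        = (∫ ω, χ ((a ^ (1/α)) • ξ ω) ∂μ) * ∫ ω, χ ((b ^ (1/α)) • ξ ω) ∂μ := by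
    intro χ hχ a b ha hb
    have ha' : (0:ℝ) < a ^ (1/α) := Real.rpow_pos_of_pos ha _
    have hb' : (0:ℝ) < b ^ (1/α) := Real.rpow_pos_of_pos hb _
    have hc' : (0:ℝ) < (a + b) ^ (1/α) := Real.rpow_pos_of_pos (by linarith) _
    have hTm : Measurable (fun p : K × K => (a ^ (1/α)) • p.1 + (b ^ (1/α)) • p.2) := by
      have : Continuous (fun p : K × K => (a ^ (1/α)) • p.1 + (b ^ (1/α)) • p.2) := by
        have h1 : Continuous (fun p : K × K =>
            (((a ^ (1/α)) • p.1, (b ^ (1/α)) • p.2) : K × K)) :=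
          ((hsmulc _ ha').comp continuous_fst).prodMk ((hsmulc _ hb').comp continuous_snd)
        exact hadd_cont.comp h1
      exact this.measurable
    have hSm : Measurable (fun x : K => ((a + b) ^ (1/α)) • x) := (hsmulc _ hc').measurable
    have χm := hχm χ hχ
    calc ∫ ω, χ (((a + b) ^ (1/α)) • ξ ω) ∂μ
        = ∫ x, χ (((a + b) ^ (1/α)) • x) ∂(μ.map ξ) := (hμint _ hc' χ hχ).symm
      _ = ∫ y, χ y ∂((μ.map ξ).map (fun x : K => ((a + b) ^ (1/α)) • x)) :=
          (integral_map hSm.aemeasurable χm.aestronglyMeasurable).symm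
      _ = ∫ y, χ y ∂(((μ.map ξ).prod (μ.map ξ)).map
            (fun p : K × K => (a ^ (1/α)) • p.1 + (b ^ (1/α)) • p.2)) := by
          rw [hSaS a b ha hb]
      _ = ∫ p, χ ((a ^ (1/α)) • p.1 + (b ^ (1/α)) • p.2) ∂((μ.map ξ).prod (μ.map ξ)) :=
          integral_map hTm.aemeasurable χm.aestronglyMeasurable
      _ = ∫ p, χ ((a ^ (1/α)) • p.1) * χ ((b ^ (1/α)) • p.2) ∂((μ.map ξ).prod (μ.map ξ)) := by
          congr 1
          funext p
          exact (hC.1 χ hχ).2.2.1 _ _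
      _ = (∫ x, χ ((a ^ (1/α)) • x) ∂(μ.map ξ)) * ∫ y, χ ((b ^ (1/α)) • y) ∂(μ.map ξ) :=
          integral_prod_mul (fun x => χ ((a ^ (1/α)) • x)) (fun y => χ ((b ^ (1/α)) • y))
      _ = (∫ ω, χ ((a ^ (1/α)) • ξ ω) ∂μ) * ∫ ω, χ ((b ^ (1/α)) • ξ ω) ∂μ := by
          rw [hμint _ ha' χ hχ, hμint _ hb' χ hχ]
  -- powers
  have hpow : ∀ χ ∈ Kt, ∀ m : ℕ,
      ∫ ω, χ ((((m:ℝ) + 1) ^ (1/α)) • ξ ω) ∂μ = (∫ ω, χ (ξ ω) ∂μ) ^ (m + 1) := by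
    intro χ hχ m
    have hone : ∫ ω, χ (((1:ℝ) ^ (1/α)) • ξ ω) ∂μ = ∫ ω, χ (ξ ω) ∂μ := by
      congr 1
      funext ω
      rw [Real.one_rpow, hone_smul]
    induction m with
    | zero =>
        simpa using hone
    | succ n ih =>
        have hkn := hkey χ hχ ((n:ℝ) + 1) 1 (by positivity) one_pos
        have hcast : ((n:ℝ) + 1) + 1 = ((n + 1 : ℕ) : ℝ) + 1 := by push_cast; ring
        rw [hcast] at hkn
        rw [hkn, ih, hone]
        ring
  -- dominated convergence skeleton
  have hDCT : ∀ χ ∈ Kt, ∀ f : Ω → ℂ,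
      (∀ ω, Filter.Tendsto (fun m : ℕ => χ ((((m:ℝ) + 1) ^ (1/α)) • ξ ω))
        Filter.atTop (𝓝 (f ω))) →
      Filter.Tendsto (fun m : ℕ => (∫ ω, χ (ξ ω) ∂μ) ^ (m + 1)) Filter.atTop
        (𝓝 (∫ ω, f ω ∂μ)) := by
    intro χ hχ f hptw
    have hmeas : ∀ m : ℕ, AEStronglyMeasurable
        (fun ω => χ ((((m:ℝ) + 1) ^ (1/α)) • ξ ω)) μ := by
      intro m
      have hpos : (0:ℝ) < ((m:ℝ) + 1) ^ (1/α) := Real.rpow_pos_of_pos (by positivity) _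
      exact (((hχm χ hχ).comp (hsmulc _ hpos).measurable).comp hξmeas).aestronglyMeasurable
    have hbd : ∀ m : ℕ, ∀ᵐ ω ∂μ, ‖χ ((((m:ℝ) + 1) ^ (1/α)) • ξ ω)‖ ≤ 1 :=
      fun m => Filter.Eventually.of_forall fun ω => hbound χ hχ _
    have := tendsto_integral_of_dominated_convergence (fun _ => (1:ℝ)) hmeas
      (integrable_const 1) hbd (Filter.Eventually.of_forall hptw)
    exact (Filter.tendsto_congr fun m => hpow χ hχ m).mp this
  -- final contradiction machinery
  have hdone : (∀ χ ∈ Kt, ∫ ω, χ (ξ ω) ∂μ = 1) → False := by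
    intro hall
    obtain ⟨Cs, hCsub, hCcount, hCsep⟩ := hC.2.2.2.2.2
    have hae : ∀ᵐ ω ∂μ, ∀ χ (_ : χ ∈ Cs), χ (ξ ω) = 1 := by
      rw [ae_ball_iff hCcount]
      intro χ hχ
      exact aux_eq_one_ae μ ((hχm χ (hCsub hχ)).comp hξmeas).aestronglyMeasurable
        (fun ω => hbound χ (hCsub hχ) _) (hall χ (hCsub hχ))
    have hsub : ∀ ω, (∀ χ (_ : χ ∈ Cs), χ (ξ ω) = 1) → ξ ω = 0 := by
      intro ω h
      by_contra hne0
      obtain ⟨χ, hχ, U, hU, V, hV, hsep⟩ := hCsep (ξ ω) 0 hne0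
      exact hsep _ (mem_of_mem_nhds hU) 0 (mem_of_mem_nhds hV)
        (by rw [h χ hχ, (hC.1 χ (hCsub hχ)).2.1])
    have hae0 : ∀ᵐ ω ∂μ, ξ ω = 0 := hae.mono fun ω h => hsub ω h
    have hms : MeasurableSet {ω | ξ ω = (0:K)} := hξmeas (measurableSet_singleton 0)
    have h1 : μ {ω | ξ ω = (0:K)} = 1 := by
      rw [← prob_compl_eq_zero_iff hms]
      exact hae0
    rw [h1] at hnontriv
    exact lt_irrefl 1 hnontriv
  constructor
  · -- forward direction
    intro hαpos
    by_contra hne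
    have ho0 : ¬ o = (0:K) := fun h => hne h.symm
    -- there is a nonzero element
    have hx0 : ∃ x : K, x ≠ 0 := by
      by_contra h
      push_neg at h
      have huniv : {ω | ξ ω = (0:K)} = Set.univ := Set.eq_univ_of_forall fun ω => h (ξ ω)
      rw [huniv, measure_univ] at hnontriv
      exact lt_irrefl 1 hnontriv
    obtain ⟨x₀, hx₀⟩ := hx0
    -- positive scaling fixes the origin
    have hao : ∀ a : ℝ, 0 < a → a • o = o := by
      intro a ha
      have hmul : Filter.Tendsto (fun b : ℝ => a * b) (nhdsWithin 0 (Set.Ioi 0))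
          (nhdsWithin 0 (Set.Ioi 0)) := by
        rw [tendsto_nhdsWithin_iff]
        constructor
        · have h1 : Filter.Tendsto (fun b : ℝ => a * b) (𝓝 0) (𝓝 0) := by
            have h2 := (continuous_const.mul continuous_id : Continuous fun b : ℝ => a * b).tendsto (0:ℝ)
            have h3 : Filter.Tendsto (fun b : ℝ => a * b) (𝓝 0) (𝓝 (a * 0)) := h2
            simpa using h3
          exact h1.mono_left nhdsWithin_le_nhds
        · exact eventually_mem_nhdsWithin.mono fun b hb => mul_pos ha hb
      have h1 : Filter.Tendsto (fun b : ℝ => (a * b) • x₀) (nhdsWithin 0 (Set.Ioi 0)) (𝓝 o) :=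
        (horigin x₀ hx₀).comp hmul
      have h2 : Filter.Tendsto (fun b : ℝ => a • (b • x₀)) (nhdsWithin 0 (Set.Ioi 0))
          (𝓝 (a • o)) := ((hsmulc a ha).tendsto o).comp (horigin x₀ hx₀)
      have h3 : (fun b : ℝ => a • (b • x₀)) =ᶠ[nhdsWithin (0:ℝ) (Set.Ioi 0)]
          fun b : ℝ => (a * b) • x₀ :=
        eventually_mem_nhdsWithin.mono fun b hb => hsmul_assoc a b ha hb x₀
      exact tendsto_nhds_unique (h2.congr' h3) h1
    set s : Set Ω := ξ ⁻¹' {o} with hs_def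
    have hs : MeasurableSet s := hξmeas (measurableSet_singleton o)
    set p : ℝ := (μ s).toReal with hp_def
    have hp0 : 0 ≤ p := ENNReal.toReal_nonneg
    have hp1 : p ≤ 1 := by
      rw [hp_def]
      exact ENNReal.toReal_le_of_le_ofReal zero_le_one (by simpa using prob_le_one (μ := μ) (s := s))
    -- integral of the limiting function
    have hIf : ∀ χ : K → ℂ, ∫ ω, (if ξ ω = o then χ o else 1) ∂μ = 1 + (p:ℂ) * (χ o - 1) := by
      intro χ
      have he : (fun ω => if ξ ω = o then χ o else (1:ℂ))
          = fun ω => 1 + s.indicator (fun _ => χ o - 1) ω := by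
        funext ω
        by_cases h : ξ ω = o
        · have hmem : ω ∈ s := by simp [hs_def, h]
          simp [Set.indicator_of_mem hmem, h]
        · have hmem : ω ∉ s := by simp [hs_def, h]
          simp [Set.indicator_of_notMem hmem, h]
      rw [he, integral_add (integrable_const 1) ((integrable_const (χ o - 1)).indicator hs),
        integral_indicator_const (χ o - 1) hs, integral_const]
      simp [measure_univ, Complex.real_smul, hp_def, measureReal_def]
    -- the scaling sequence escapes to infinity
    have hscale : Filter.Tendsto (fun m : ℕ => ((m:ℝ) + 1) ^ (1/α)) Filter.atTop
        Filter.atTop :=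
      (tendsto_rpow_atTop (by positivity : (0:ℝ) < 1/α)).comp
        (tendsto_atTop_mono (fun m => le_add_of_nonneg_right zero_le_one)
          tendsto_natCast_atTop_atTop)
    -- the limit of powers
    have hLlim : ∀ χ ∈ Kt, Filter.Tendsto (fun m : ℕ => (∫ ω, χ (ξ ω) ∂μ) ^ (m + 1))
        Filter.atTop (𝓝 (1 + (p:ℂ) * (χ o - 1))) := by
      intro χ hχ
      have hptw : ∀ ω, Filter.Tendsto (fun m : ℕ => χ ((((m:ℝ) + 1) ^ (1/α)) • ξ ω))
          Filter.atTop (𝓝 (if ξ ω = o then χ o else 1)) := by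
        intro ω
        by_cases h1 : ξ ω = o
        · have he : ∀ m : ℕ, χ ((((m:ℝ) + 1) ^ (1/α)) • ξ ω) = χ o := by
            intro m
            rw [h1, hao _ (Real.rpow_pos_of_pos (by positivity) _)]
          simp only [he, if_pos h1]
          exact tendsto_const_nhds
        · rw [if_neg h1]
          by_cases h2 : ξ ω = 0
          · have he : ∀ m : ℕ, χ ((((m:ℝ) + 1) ^ (1/α)) • ξ ω) = 1 := by
              intro m
              rw [h2, hsmul_e _ (Real.rpow_pos_of_pos (by positivity) _), (hC.1 χ hχ).2.1]
            simp only [he]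
            exact tendsto_const_nhds
          · have hElim := hE χ hχ (ξ ω) h1 h2
            rw [if_neg ho0] at hElim
            exact hElim.comp hscale
      have := hDCT χ hχ _ hptw
      rwa [hIf χ] at this
    have hfix : ∀ χ ∈ Kt, (1 + (p:ℂ) * (χ o - 1))
        = (∫ ω, χ (ξ ω) ∂μ) * (1 + (p:ℂ) * (χ o - 1)) :=
      fun χ hχ => aux_fixed_point (hLlim χ hχ)
    -- a character separating 0 from o
    obtain ⟨Cs, hCsub, hCcount, hCsep⟩ := hC.2.2.2.2.2
    obtain ⟨χ₀, hχ₀C, U, hU, V, hV, hsep₀⟩ := hCsep 0 o hne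
    have hχ₀ : χ₀ ∈ Kt := hCsub hχ₀C
    have hχ₀o : χ₀ o ≠ 1 := by
      have h1 := hsep₀ 0 (mem_of_mem_nhds hU) o (mem_of_mem_nhds hV)
      rw [(hC.1 χ₀ hχ₀).2.1] at h1
      exact fun h => h1 h.symm
    have hd := hfix χ₀ hχ₀
    have hfactor : (1 + (p:ℂ) * (χ₀ o - 1)) * (1 - ∫ ω, χ₀ (ξ ω) ∂μ) = 0 := by
      linear_combination hd
    rcases mul_eq_zero.mp hfactor with hL0 | hz1'
    · -- the limit vanishes
      by_cases hT : ∃ x : K, x ≠ 0 ∧ x + x ≠ 0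
      · -- there is a non-2-torsion element: the argument character is 1 at the origin
        obtain ⟨x₁, hx₁, hxx⟩ := hT
        obtain ⟨χ', χ'', hmod, harg, hfac⟩ := hC.2.2.2.2.1 χ₀ hχ₀
        have hargo : χ'' o = 1 := by
          have hto : Filter.Tendsto (fun b : ℝ => χ'' (b • x₁)) (nhdsWithin 0 (Set.Ioi 0))
              (𝓝 (χ'' o)) := (harg.2.2.2.2.tendsto o).comp (horigin x₁ hx₁)
          have t1 : Filter.Tendsto (fun b : ℝ => χ'' (b • x₁) * χ'' (b • x₁))
              (nhdsWithin 0 (Set.Ioi 0)) (𝓝 (χ'' o * χ'' o)) := hto.mul hto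
          have h4 : (fun b : ℝ => χ'' (b • (x₁ + x₁))) =ᶠ[nhdsWithin (0:ℝ) (Set.Ioi 0)]
              fun b : ℝ => χ'' (b • x₁) * χ'' (b • x₁) :=
            eventually_mem_nhdsWithin.mono fun b hb => by
              show χ'' (b • (x₁ + x₁)) = χ'' (b • x₁) * χ'' (b • x₁)
              rw [hsmul_add b hb, harg.2.2.1]
          have h5 : Filter.Tendsto (fun b : ℝ => χ'' (b • (x₁ + x₁)))
              (nhdsWithin 0 (Set.Ioi 0)) (𝓝 (χ'' o)) :=
            (harg.2.2.2.2.tendsto o).comp (horigin _ hxx)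
          have heq : χ'' o * χ'' o = χ'' o := tendsto_nhds_unique t1 (h5.congr' h4)
          have hne0 : χ'' o ≠ 0 := by
            intro h
            have h6 := harg.1 o
            rw [h] at h6
            simp at h6
          have heq' : χ'' o * χ'' o = χ'' o * 1 := by rw [mul_one]; exact heq
          exact mul_left_cancel₀ hne0 heq'
        have hreal : χ₀ o = ((χ' o : ℝ) : ℂ) := by rw [hfac o, hargo, mul_one]
        have h01 := hmod.1 o
        have hRe : 1 + p * (χ' o - 1) = 0 := by
          rw [hreal] at hL0
          have h7 : ((1 + p * (χ' o - 1) : ℝ) : ℂ) = 0 := by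
            push_cast
            linear_combination hL0
          exact_mod_cast h7
        have hco : χ' o = 0 := by nlinarith [h01.1, h01.2]
        have hpe : p = 1 := by nlinarith
        have hμs : μ s = 1 := by
          have hne_top : μ s ≠ ⊤ := measure_ne_top μ s
          rw [← ENNReal.ofReal_toReal hne_top, ← hp_def, hpe]
          simp
        have haeo : ∀ᵐ ω ∂μ, ξ ω = o := by
          have h8 : μ sᶜ = 0 := (prob_compl_eq_zero_iff hs).mpr hμs
          rw [ae_iff]
          convert h8 using 2
          ext ω; simp [hs_def]
        have hzo : ∫ ω, χ₀ (ξ ω) ∂μ = χ₀ o := by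
          have h9 : (fun ω => χ₀ (ξ ω)) =ᶠ[MeasureTheory.ae μ] fun _ => χ₀ o :=
            haeo.mono fun ω h => by
              show χ₀ (ξ ω) = χ₀ o
              rw [h]
          rw [integral_congr_ae h9, integral_const]
          simp
        refine hproper χ₀ hχ₀ ?_
        rw [hzo, hreal, hco]
        simp
      · -- every nonzero element is 2-torsion
        push_neg at hT
        have hsq : ∀ x : K, χ₀ x * χ₀ x = 1 := by
          intro x
          by_cases hx : x = 0
          · rw [hx, (hC.1 χ₀ hχ₀).2.1, mul_one]
          · rw [← (hC.1 χ₀ hχ₀).2.2.1 x x, hT x hx, (hC.1 χ₀ hχ₀).2.1]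
        have hval : ∀ y : K, χ₀ y = 1 ∨ χ₀ y = -1 := fun y => mul_self_eq_one_iff.mp (hsq y)
        obtain ⟨χ', χ'', hmod, harg, hfac⟩ := hC.2.2.2.2.1 χ₀ hχ₀
        have habs : ∀ x : K, ‖χ₀ x‖ = 1 := by
          intro x
          rcases hval x with h | h <;> rw [h] <;> simp
        have hcont : ∀ x : K, χ₀ x = χ'' x := by
          intro x
          have h1 : ‖χ₀ x‖ = χ' x := by
            rw [hfac x, norm_mul, harg.1 x, mul_one, Complex.norm_real, Real.norm_eq_abs,
              abs_of_nonneg (hmod.1 x).1]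
          have h2 : χ' x = 1 := by rw [← h1, habs x]
          rw [hfac x, h2]
          simp
        have honex : ∀ x : K, x ≠ 0 → x ≠ o → χ₀ x = 1 := by
          intro x hx hxo
          have hcE : Filter.Tendsto (fun t : ℝ => χ₀ (t • x)) Filter.atTop (𝓝 1) := by
            have h3 := hE χ₀ hχ₀ x hxo hx
            rwa [if_neg ho0] at h3
          obtain ⟨T, hTball, hT1⟩ := ((hcE.eventually
            (Metric.ball_mem_nhds (1:ℂ) one_pos)).and (Filter.eventually_ge_atTop (1:ℝ))).exists
          have hcT : χ₀ (T • x) = 1 := by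
            rcases hval (T • x) with h | h
            · exact h
            · exfalso
              have h4 : dist (χ₀ (T • x)) (1:ℂ) < 1 := hTball
              rw [h] at h4
              rw [Complex.dist_eq] at h4
              norm_num at h4
          by_contra hx1
          have hxm : χ₀ x = -1 := (hval x).resolve_left hx1
          have hcont' : ContinuousOn (fun t : ℝ => (χ₀ (t • x)).re) (Set.Icc 1 T) := by
            have he : (fun t : ℝ => (χ₀ (t • x)).re) = fun t : ℝ => (χ'' (t • x)).re := by
              funext t
              rw [hcont]
            rw [he]
            exact Complex.continuous_re.comp_continuousOn
              (harg.2.2.2.2.comp_continuousOn ((hsmulx x).mono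
                (fun t ht => lt_of_lt_of_le one_pos ht.1)))
          have hIVT := intermediate_value_Icc hT1 hcont'
          have h0mem : (0:ℝ) ∈ Set.Icc ((χ₀ ((1:ℝ) • x)).re) ((χ₀ (T • x)).re) := by
            rw [hone_smul, hxm, hcT]
            norm_num
          obtain ⟨u, _, hu0⟩ := hIVT h0mem
          have hu1 : (χ₀ (u • x)).re = 0 := hu0
          rcases hval (u • x) with h | h <;> rw [h] at hu1 <;> norm_num at hu1
        have hz0 : ∫ ω, χ₀ (ξ ω) ∂μ = 0 := by
          have hzf : (fun ω => χ₀ (ξ ω)) = fun ω => (if ξ ω = o then χ₀ o else 1) := by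
            funext ω
            by_cases h1 : ξ ω = o
            · rw [if_pos h1, h1]
            · rw [if_neg h1]
              by_cases h2 : ξ ω = 0
              · rw [h2, (hC.1 χ₀ hχ₀).2.1]
              · exact honex _ h2 h1
          calc ∫ ω, χ₀ (ξ ω) ∂μ = ∫ ω, (if ξ ω = o then χ₀ o else 1) ∂μ := by rw [hzf]
            _ = 1 + (p:ℂ) * (χ₀ o - 1) := hIf χ₀
            _ = 0 := hL0
        exact hproper χ₀ hχ₀ hz0
    · -- the Laplace transform value is 1
      have hz1 : ∫ ω, χ₀ (ξ ω) ∂μ = 1 := by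
        have := sub_eq_zero.mp hz1'
        exact this.symm
      have hL1 : (1:ℂ) + (p:ℂ) * (χ₀ o - 1) = 1 := by
        have h2 := hLlim χ₀ hχ₀
        rw [hz1] at h2
        simp only [one_pow] at h2
        exact tendsto_nhds_unique h2 tendsto_const_nhds
      have hps : (p:ℂ) * (χ₀ o - 1) = 0 := by linear_combination hL1
      rcases mul_eq_zero.mp hps with hpz | hco
      · have hp : p = 0 := Complex.ofReal_eq_zero.mp hpz
        have hallone : ∀ χ ∈ Kt, ∫ ω, χ (ξ ω) ∂μ = 1 := by
          intro χ hχ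
          have h3 := hfix χ hχ
          rw [hp] at h3
          simpa using h3.symm
        exact hdone hallone
      · exact hχ₀o (sub_eq_zero.mp hco)
  · -- backward direction
    intro h0o
    by_contra hns
    have hαneg : α < 0 := lt_of_le_of_ne (not_lt.mp hns) hα
    -- the scaling sequence tends to 0 within (0,∞)
    have hscale : Filter.Tendsto (fun m : ℕ => ((m:ℝ) + 1) ^ (1/α)) Filter.atTop
        (nhdsWithin 0 (Set.Ioi 0)) := by
      rw [tendsto_nhdsWithin_iff]
      constructor
      · have hpos : (0:ℝ) < -(1/α) := by
          have : 1/α < 0 := div_neg_of_pos_of_neg one_pos hαneg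
          linarith
        have h1 : Filter.Tendsto (fun x : ℝ => x ^ (-(-(1/α)))) Filter.atTop (𝓝 0) :=
          tendsto_rpow_neg_atTop hpos
        rw [neg_neg] at h1
        have h2 : Filter.Tendsto (fun m : ℕ => (m:ℝ) + 1) Filter.atTop Filter.atTop :=
          tendsto_atTop_mono (fun m => le_add_of_nonneg_right zero_le_one)
            tendsto_natCast_atTop_atTop
        exact h1.comp h2
      · exact Filter.Eventually.of_forall fun m =>
          Real.rpow_pos_of_pos (by positivity) _
    have hall : ∀ χ ∈ Kt, ∫ ω, χ (ξ ω) ∂μ = 1 := by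
      intro χ hχ
      have hptw : ∀ ω, Filter.Tendsto (fun m : ℕ => χ ((((m:ℝ) + 1) ^ (1/α)) • ξ ω))
          Filter.atTop (𝓝 ((fun _ : Ω => (1:ℂ)) ω)) := by
        intro ω
        by_cases h2 : ξ ω = 0
        · have he : ∀ m : ℕ, χ ((((m:ℝ) + 1) ^ (1/α)) • ξ ω) = 1 := by
            intro m
            rw [h2, hsmul_e _ (Real.rpow_pos_of_pos (by positivity) _), (hC.1 χ hχ).2.1]
          simp only [he]
          exact tendsto_const_nhds
        · have hxo : ξ ω ≠ o := fun h => h2 (h.trans h0o.symm)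
          have hElim := hE χ hχ (ξ ω) hxo h2
          rw [if_pos h0o.symm] at hElim
          exact hElim.comp hscale
      have hlim := hDCT χ hχ _ hptw
      rw [integral_const] at hlim
      simp only [measure_univ, probReal_univ, ENNReal.toReal_one, one_smul] at hlim
      have := aux_fixed_point hlim
      -- 1 = z * 1
      simpa using this.symm
    exact hdone hall
end

section
/- Assume Condition (C) and the second distributivity law. Then: (i) every proper SαS random element in K has characteristic exponent α ≤ 2; (ii) if the involution on K is the identity map, then α ≤ 1. If in addition Condition (E) holds, then α > 0 in both cases. -/
open Filter Topology MeasureTheory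


private lemma aux_re_eq_one {z : ℂ} (hz : ‖z‖ ≤ 1) (hre : z.re = 1) : z = 1 := by
  have h2 : z.re ^ 2 + z.im ^ 2 ≤ 1 := by
    have := Complex.normSq_eq_norm_sq z
    have h3 : ‖z‖ ≤ 1 := by exact hz
    have h4 : Complex.normSq z ≤ 1 := by
      rw [this]; nlinarith [norm_nonneg z]
    simpa [Complex.normSq_apply, sq] using h4
  have him : z.im = 0 := by nlinarith
  apply Complex.ext <;> simp [hre, him]

private lemma aux_norm_pow_sub_one (z : ℂ) (hz : ‖z‖ ≤ 1) (n : ℕ) :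
    ‖z ^ n - 1‖ ≤ n * ‖z - 1‖ := by
  induction n with
  | zero => simp
  | succ n ih =>
    have h : z ^ (n + 1) - 1 = z ^ n * (z - 1) + (z ^ n - 1) := by ring
    rw [h]
    have h1 : ‖z ^ n * (z - 1)‖ ≤ 1 * ‖z - 1‖ := by
      rw [norm_mul]
      gcongr
      simpa using pow_le_one₀ (norm_nonneg z) hz
    calc ‖z ^ n * (z - 1) + (z ^ n - 1)‖ ≤ ‖z ^ n * (z - 1)‖ + ‖z ^ n - 1‖ := norm_add_le _ _
      _ ≤ 1 * ‖z - 1‖ + n * ‖z - 1‖ := by gcongr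
      _ = (n + 1 : ℕ) * ‖z - 1‖ := by push_cast; ring

private lemma aux_one_sub_re_pow (z : ℂ) (hz : ‖z‖ ≤ 1) (n : ℕ) :
    1 - (z ^ n).re ≤ (n : ℝ) ^ 2 * (1 - z.re) := by
  have hre : z.re ≤ 1 := le_trans (Complex.re_le_norm z) (by exact hz)
  have hsq : ‖z - 1‖ ^ 2 ≤ 2 * (1 - z.re) := by
    have h1 : Complex.normSq (z - 1) = ‖z - 1‖ ^ 2 := by
      rw [Complex.normSq_eq_norm_sq]
    have h2 : z.re ^ 2 + z.im ^ 2 ≤ 1 := by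
      have h4 : Complex.normSq z ≤ 1 := by
        rw [Complex.normSq_eq_norm_sq]
        nlinarith [norm_nonneg z, hz]
      simpa [Complex.normSq_apply, sq] using h4
    have h3 : Complex.normSq (z - 1) = z.re ^ 2 - 2 * z.re + 1 + z.im ^ 2 := by
      simp [Complex.normSq_apply]; ring
    nlinarith
  induction n with
  | zero => simp
  | succ n ih =>
    have key : (z ^ n).re - (z ^ (n + 1)).re ≤ (2 * n + 1) * (1 - z.re) := by
      have h1 : z ^ n - z ^ (n + 1) = (z ^ n - 1) * (1 - z) + (1 - z) := by ring
      have h2 : (z ^ n).re - (z ^ (n + 1)).re = ((z ^ n - 1) * (1 - z)).re + (1 - z).re := by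
        have := congrArg Complex.re h1
        simpa [Complex.sub_re] using this
      have h3 : ((z ^ n - 1) * (1 - z)).re ≤ n * ‖z - 1‖ ^ 2 := by
        calc ((z ^ n - 1) * (1 - z)).re ≤ ‖(z ^ n - 1) * (1 - z)‖ := by
              exact Complex.re_le_norm _
          _ = ‖z ^ n - 1‖ * ‖1 - z‖ := norm_mul _ _
          _ ≤ (n * ‖z - 1‖) * ‖1 - z‖ := by
              gcongr; exact aux_norm_pow_sub_one z hz n
          _ = n * ‖z - 1‖ ^ 2 := by rw [norm_sub_rev 1 z]; ring
      have h4 : (1 - z).re = 1 - z.re := by simp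
      nlinarith
    have : 1 - (z ^ (n + 1)).re = (1 - (z ^ n).re) + ((z ^ n).re - (z ^ (n + 1)).re) := by ring
    rw [this]
    push_cast
    nlinarith
private lemma aux_one_sub_pow_le (x : ℝ) (h0 : 0 ≤ x) (h1 : x ≤ 1) :
    ∀ n : ℕ, 1 - x ^ n ≤ n * (1 - x) := by
  intro n
  induction n with
  | zero => simp
  | succ n ih =>
    have hp : x ^ n ≤ 1 := pow_le_one₀ h0 h1
    have h2 : 1 - x ^ (n + 1) = (1 - x) + x * (1 - x ^ n) := by ring
    have h3 : x * (1 - x ^ n) ≤ 1 - x ^ n := by nlinarith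
    push_cast
    nlinarith

private lemma aux_one_sub_rpow_le {c : ℝ} (hc : 0 < c) (hc1 : c ≤ 1) {y : ℝ} (hy : 0 ≤ y) :
    1 - c ^ y ≤ y * (-Real.log c) := by
  have h1 : c ^ y = Real.exp (Real.log c * y) := Real.rpow_def_of_pos hc y
  have h2 : 1 + Real.log c * y ≤ Real.exp (Real.log c * y) := by
    have := Real.add_one_le_exp (Real.log c * y)
    linarith
  rw [h1]
  linarith

private lemma aux_iter (u : ℝ → ℝ)
    (hm : ∀ s t : ℝ, 0 < s → 0 < t → u (s + t) = u s * u t) :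
    ∀ (n : ℕ) (s : ℝ), 0 < s → u (((n : ℝ) + 1) * s) = u s ^ (n + 1) := by
  intro n
  induction n with
  | zero => intro s hs; simp
  | succ n ih =>
    intro s hs
    have h1 : ((n : ℝ) + 1 + 1) * s = ((n : ℝ) + 1) * s + s := by ring
    have h2 : (0 : ℝ) < ((n : ℝ) + 1) * s := by positivity
    rw [show (((n : ℕ) + 1 : ℕ) : ℝ) + 1 = ((n : ℝ) + 1 + 1) by push_cast; ring, h1,
      hm _ _ h2 hs, ih s hs]
    ring

private lemma aux_iter' (u : ℝ → ℝ)
    (hm : ∀ s t : ℝ, 0 < s → 0 < t → u (s + t) = u s * u t) :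
    ∀ (n : ℕ), 1 ≤ n → ∀ (s : ℝ), 0 < s → u ((n : ℝ) * s) = u s ^ n := by
  intro n hn s hs
  obtain ⟨k, rfl⟩ := Nat.exists_eq_add_of_le hn
  have := aux_iter u hm k s hs
  rw [show ((1 + k : ℕ) : ℝ) = (k : ℝ) + 1 by push_cast; ring, this]
  congr 1; omega

private lemma aux_additive_linear (v : ℝ → ℝ)
    (hva : ∀ s t : ℝ, 0 < s → 0 < t → v (s + t) = v s + v t)
    (hvnn : ∀ t : ℝ, 0 < t → 0 ≤ v t) :
    ∀ s : ℝ, 0 < s → v s = s * v 1 := by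
  have hvmono : ∀ s t : ℝ, 0 < s → s ≤ t → v s ≤ v t := by
    intro s t hs hst
    rcases hst.lt_or_eq with h | h
    · have h2 := hva s (t - s) hs (by linarith)
      rw [show s + (t - s) = t by ring] at h2
      have := hvnn (t - s) (by linarith)
      linarith
    · rw [h]
  have hvnat : ∀ n : ℕ, 1 ≤ n → ∀ t : ℝ, 0 < t → v ((n : ℝ) * t) = (n : ℝ) * v t := by
    intro n hn
    induction n with
    | zero => omega
    | succ n ih =>
      intro t ht
      rcases Nat.eq_or_lt_of_le hn with h | h
      · rw [← h]; simp
      · have hn1 : 1 ≤ n := by omega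
        have hnpos : (0 : ℝ) < (n : ℝ) := by exact_mod_cast Nat.pos_of_ne_zero (by omega)
        have h1 : ((n + 1 : ℕ) : ℝ) * t = (n : ℝ) * t + t := by push_cast; ring
        rw [h1, hva _ _ (mul_pos hnpos ht) ht, ih hn1 t ht]
        push_cast; ring
  have hvrat : ∀ m q : ℕ, 1 ≤ m → 1 ≤ q → v ((m : ℝ) / (q : ℝ)) = ((m : ℝ) / (q : ℝ)) * v 1 := by
    intro m q hmn hq
    have hq0 : (0 : ℝ) < (q : ℝ) := by exact_mod_cast Nat.pos_of_ne_zero (by omega)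
    have hiq : (0 : ℝ) < 1 / (q : ℝ) := by positivity
    have hq1 : v ((q : ℝ) * (1 / (q : ℝ))) = (q : ℝ) * v (1 / (q : ℝ)) := hvnat q hq _ hiq
    rw [show (q : ℝ) * (1 / (q : ℝ)) = 1 by field_simp] at hq1
    have hvq : v (1 / (q : ℝ)) = v 1 / (q : ℝ) := by
      field_simp at hq1 ⊢; linarith
    have := hvnat m hmn (1 / (q : ℝ)) hiq
    rw [hvq] at this
    rw [show (m : ℝ) / (q : ℝ) = (m : ℝ) * (1 / (q : ℝ)) by ring, this]
    ring
  intro s hs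
  have hv1 : 0 ≤ v 1 := hvnn 1 one_pos
  have hub : ∀ ε : ℝ, 0 < ε → v s ≤ s * v 1 + ε := by
    intro ε hε
    obtain ⟨q, hq⟩ := exists_nat_one_div_lt (show 0 < ε / (v 1 + 1) by positivity)
    have hQ0 : (0 : ℝ) < (q : ℝ) + 1 := by positivity
    set m : ℕ := ⌈s * ((q : ℝ) + 1)⌉₊ with hmdef
    have hm1 : 1 ≤ m := Nat.one_le_ceil_iff.mpr (by positivity)
    have hle : s * ((q : ℝ) + 1) ≤ (m : ℝ) := Nat.le_ceil _
    have hlt : (m : ℝ) < s * ((q : ℝ) + 1) + 1 := Nat.ceil_lt_add_one (by positivity)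
    have hs_le : s ≤ (m : ℝ) / ((q : ℝ) + 1) := by
      rw [le_div_iff₀ hQ0]; linarith
    have hmq_le : (m : ℝ) / ((q : ℝ) + 1) ≤ s + 1 / ((q : ℝ) + 1) := by
      rw [div_le_iff₀ hQ0]
      have : (s + 1 / ((q : ℝ) + 1)) * ((q : ℝ) + 1) = s * ((q : ℝ) + 1) + 1 := by
        field_simp
      rw [this]; linarith
    have h2 : v s ≤ v ((m : ℝ) / ((q : ℝ) + 1)) := hvmono s _ hs hs_le
    have h2' := hvrat m (q + 1) hm1 (by omega)
    rw [show ((q + 1 : ℕ) : ℝ) = (q : ℝ) + 1 by push_cast; ring] at h2'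
    rw [h2'] at h2
    have h3 : ((m : ℝ) / ((q : ℝ) + 1)) * v 1 ≤ (s + 1 / ((q : ℝ) + 1)) * v 1 :=
      mul_le_mul_of_nonneg_right hmq_le hv1
    have h4 : (1 / ((q : ℝ) + 1)) * v 1 ≤ ε := by
      have h5 : (1 / ((q : ℝ) + 1)) * v 1 ≤ (1 / ((q : ℝ) + 1)) * (v 1 + 1) := by
        apply mul_le_mul_of_nonneg_left (by linarith) (by positivity)
      have h6 : (1 / ((q : ℝ) + 1)) * (v 1 + 1) < (ε / (v 1 + 1)) * (v 1 + 1) :=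
        mul_lt_mul_of_pos_right hq (by positivity)
      rw [div_mul_cancel₀ _ (show v 1 + 1 ≠ 0 by positivity)] at h6
      linarith
    nlinarith
  have hlb : ∀ ε : ℝ, 0 < ε → s * v 1 ≤ v s + ε := by
    intro ε hε
    obtain ⟨q, hq⟩ := exists_nat_one_div_lt
      (show 0 < min (ε / (v 1 + 1)) s by positivity)
    have hQ0 : (0 : ℝ) < (q : ℝ) + 1 := by positivity
    have hq1 : 1 / ((q : ℝ) + 1) < ε / (v 1 + 1) := lt_of_lt_of_le hq (min_le_left _ _)
    have hq2 : 1 / ((q : ℝ) + 1) < s := lt_of_lt_of_le hq (min_le_right _ _)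
    have hsq1 : 1 < s * ((q : ℝ) + 1) := by
      rw [div_lt_iff₀ hQ0] at hq2; linarith
    set m : ℕ := ⌊s * ((q : ℝ) + 1)⌋₊ with hmdef
    have hm1 : 1 ≤ m := Nat.le_floor (by push_cast; linarith)
    have hle : (m : ℝ) ≤ s * ((q : ℝ) + 1) := Nat.floor_le (by positivity)
    have hgt : s * ((q : ℝ) + 1) < (m : ℝ) + 1 := Nat.lt_floor_add_one _
    have hs_ge : (m : ℝ) / ((q : ℝ) + 1) ≤ s := by
      rw [div_le_iff₀ hQ0]; linarith
    have hs_lt : s - 1 / ((q : ℝ) + 1) ≤ (m : ℝ) / ((q : ℝ) + 1) := by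
      rw [le_div_iff₀ hQ0]
      have : (s - 1 / ((q : ℝ) + 1)) * ((q : ℝ) + 1) = s * ((q : ℝ) + 1) - 1 := by
        field_simp
      rw [this]; linarith
    have hmpos : (0 : ℝ) < (m : ℝ) / ((q : ℝ) + 1) := by
      have : (0:ℝ) < (m:ℝ) := by exact_mod_cast Nat.pos_of_ne_zero (by omega)
      positivity
    have h2 : v ((m : ℝ) / ((q : ℝ) + 1)) ≤ v s := hvmono _ s hmpos hs_ge
    have h2' := hvrat m (q + 1) hm1 (by omega)
    rw [show ((q + 1 : ℕ) : ℝ) = (q : ℝ) + 1 by push_cast; ring] at h2'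
    rw [h2'] at h2
    have h4 : (1 / ((q : ℝ) + 1)) * v 1 ≤ ε := by
      have h5 : (1 / ((q : ℝ) + 1)) * v 1 ≤ (1 / ((q : ℝ) + 1)) * (v 1 + 1) := by
        apply mul_le_mul_of_nonneg_left (by linarith) (by positivity)
      have h6 : (1 / ((q : ℝ) + 1)) * (v 1 + 1) < (ε / (v 1 + 1)) * (v 1 + 1) :=
        mul_lt_mul_of_pos_right hq1 (by positivity)
      rw [div_mul_cancel₀ _ (show v 1 + 1 ≠ 0 by positivity)] at h6
      linarith
    nlinarith
  have h5 : v s ≤ s * v 1 := by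
    by_contra h
    push_neg at h
    have := hub ((v s - s * v 1) / 2) (by linarith)
    linarith
  have h6 : s * v 1 ≤ v s := by
    by_contra h
    push_neg at h
    have := hlb ((s * v 1 - v s) / 2) (by linarith)
    linarith
  linarith

private lemma aux_cauchy_rpow (u : ℝ → ℝ)
    (h0 : ∀ s : ℝ, 0 < s → 0 ≤ u s) (h1 : ∀ s : ℝ, 0 < s → u s ≤ 1)
    (hm : ∀ s t : ℝ, 0 < s → 0 < t → u (s + t) = u s * u t) :
    ∀ s : ℝ, 0 < s → u s = (u 1) ^ s := by
  have hposall : ∀ s t : ℝ, 0 < s → 0 < t → 0 < u s → 0 < u t := by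
    intro s t hs ht hus
    obtain ⟨n, hn⟩ := exists_nat_gt (t / s)
    have hlt : t < ((n : ℝ) + 1) * s := by
      have h2 : t / s < (n : ℝ) + 1 := lt_of_lt_of_le hn (by linarith)
      calc t = (t / s) * s := by field_simp
        _ < ((n : ℝ) + 1) * s := mul_lt_mul_of_pos_right h2 hs
    have hbig : 0 < u (((n : ℝ) + 1) * s) := by
      rw [aux_iter u hm n s hs]; positivity
    have hdiff : (0 : ℝ) < ((n : ℝ) + 1) * s - t := by linarith
    have heq := hm t (((n : ℝ) + 1) * s - t) ht hdiff
    rw [show t + (((n : ℝ) + 1) * s - t) = ((n : ℝ) + 1) * s by ring] at heq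
    rcases (h0 t ht).lt_or_eq with h | h
    · exact h
    · exfalso; rw [heq, ← h] at hbig; simp at hbig
  intro s hs
  by_cases hu1 : 0 < u 1
  · have hpos : ∀ t : ℝ, 0 < t → 0 < u t := fun t ht => hposall 1 t one_pos ht hu1
    have hva : ∀ s t : ℝ, 0 < s → 0 < t →
        -Real.log (u (s + t)) = -Real.log (u s) + -Real.log (u t) := by
      intro s t hs ht
      rw [hm s t hs ht, Real.log_mul (ne_of_gt (hpos s hs)) (ne_of_gt (hpos t ht))]
      ring
    have hvnn : ∀ t : ℝ, 0 < t → 0 ≤ -Real.log (u t) := by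
      intro t ht
      simp only [neg_nonneg]
      exact Real.log_nonpos (h0 t ht) (h1 t ht)
    have hlin := aux_additive_linear (fun t => -Real.log (u t)) hva hvnn s hs
    have hus : u s = Real.exp (-(s * -Real.log (u 1))) := by
      rw [← hlin, neg_neg, Real.exp_log (hpos s hs)]
    rw [hus, Real.rpow_def_of_pos hu1]
    congr 1
    ring
  · have hu0 : u 1 = 0 := by
      rcases (h0 1 one_pos).lt_or_eq with h | h
      · exact absurd h hu1
      · exact h.symm
    have h7 : u s = 0 := by
      by_contra h
      have h8 : 0 < u s := lt_of_le_of_ne (h0 s hs) (Ne.symm h)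
      have := hposall s 1 hs one_pos h8
      rw [hu0] at this; simp at this
    rw [h7, hu0, Real.zero_rpow (ne_of_gt hs)]

private lemma aux_integrable {Ω : Type*} [MeasurableSpace Ω] (μ : Measure Ω)
    [IsProbabilityMeasure μ] {E : Type*} [NormedAddCommGroup E] {f : Ω → E}
    (hf : AEStronglyMeasurable f μ) (hb : ∀ ω, ‖f ω‖ ≤ 1) : Integrable f μ :=
  Integrable.mono' (integrable_const 1) hf (ae_of_all _ hb)

private lemma aux_norm_int_le {Ω : Type*} [MeasurableSpace Ω] (μ : Measure Ω)
    [IsProbabilityMeasure μ] {f : Ω → ℂ} (hb : ∀ ω, ‖f ω‖ ≤ 1) :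
    ‖∫ ω, f ω ∂μ‖ ≤ 1 := by
  have := norm_integral_le_of_norm_le_const (μ := μ) (f := f) (C := 1) (ae_of_all _ hb)
  simpa using this

private lemma aux_charpow {K : Type*} [AddCommMonoid K] [SMul ℝ K]
    (hdistrib2 : ∀ a b : ℝ, 0 < a → 0 < b → ∀ x : K, (a + b) • x = a • x + b • x)
    {χ : K → ℂ} (hmul : ∀ x y : K, χ (x + y) = χ x * χ y) :
    ∀ (n : ℕ) (t : ℝ), 0 < t → ∀ x : K, χ ((((n : ℝ) + 1) * t) • x) = χ (t • x) ^ (n + 1) := by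
  intro n
  induction n with
  | zero => intro t ht x; norm_num
  | succ n ih =>
    intro t ht x
    have h2 : (0 : ℝ) < ((n : ℝ) + 1) * t := by positivity
    have h1 : (((n + 1 : ℕ) : ℝ) + 1) * t = ((n : ℝ) + 1) * t + t := by push_cast; ring
    rw [h1, hdistrib2 _ _ h2 ht, hmul, ih t ht x]
    ring

private lemma aux_charpow' {K : Type*} [AddCommMonoid K] [SMul ℝ K]
    (hdistrib2 : ∀ a b : ℝ, 0 < a → 0 < b → ∀ x : K, (a + b) • x = a • x + b • x)
    {χ : K → ℂ} (hmul : ∀ x y : K, χ (x + y) = χ x * χ y) :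
    ∀ (n : ℕ), 1 ≤ n → ∀ (t : ℝ), 0 < t → ∀ x : K, χ (((n : ℝ) * t) • x) = χ (t • x) ^ n := by
  intro n hn t ht x
  obtain ⟨k, rfl⟩ := Nat.exists_eq_add_of_le hn
  have := aux_charpow hdistrib2 hmul k t ht x
  rw [show ((1 + k : ℕ) : ℝ) = (k : ℝ) + 1 by push_cast; ring, this]
  congr 1; omega

private lemma aux_eq_one_of_re {z : ℂ} (hz : ‖z‖ ≤ 1) (hre : z.re = 1) : z = 1 := by
  have h4 : Complex.normSq z ≤ 1 := by
    rw [Complex.normSq_eq_norm_sq]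
    nlinarith [norm_nonneg z, hz]
  have h2 : z.re ^ 2 + z.im ^ 2 ≤ 1 := by simpa [Complex.normSq_apply, sq] using h4
  have him : z.im = 0 := by nlinarith
  apply Complex.ext <;> simp [hre, him]

private lemma aux_ae_const {Ω : Type*} [MeasurableSpace Ω] {μ : Measure Ω}
    [IsProbabilityMeasure μ] {g : Ω → ℂ} (hg : AEStronglyMeasurable g μ)
    (hb : ∀ ω, ‖g ω‖ ≤ 1) (hn : ‖∫ ω, g ω ∂μ‖ = 1) :
    ∀ᵐ ω ∂μ, g ω = ∫ ω', g ω' ∂μ := by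
  set c : ℂ := ∫ ω', g ω' ∂μ with hc
  have hgint : Integrable g μ := aux_integrable μ hg hb
  have hmul_int : Integrable (fun ω => (starRingEnd ℂ) c * g ω) μ :=
    aux_integrable μ (hg.const_mul _) (fun ω => by
      rw [norm_mul]
      calc ‖(starRingEnd ℂ) c‖ * ‖g ω‖ ≤ 1 * 1 := by
            apply mul_le_mul _ (hb ω) (norm_nonneg _) zero_le_one
            rw [RCLike.norm_conj]; rw [hn]
        _ = 1 := by norm_num)
  have hint2 : Integrable (fun ω => ((starRingEnd ℂ) c * g ω).re) μ := by
    have := (Complex.reCLM : ℂ →L[ℝ] ℝ).integrable_comp hmul_int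
    simpa using this
  have hzero : ∫ ω, (1 - ((starRingEnd ℂ) c * g ω).re) ∂μ = 0 := by
    rw [integral_sub (integrable_const 1) hint2]
    have h1 : ∫ ω, ((starRingEnd ℂ) c * g ω).re ∂μ = (((starRingEnd ℂ) c) * c).re := by
      have h0 : ∫ ω, (starRingEnd ℂ) c * g ω ∂μ = (starRingEnd ℂ) c * c := by
        rw [integral_const_mul]
      have h2 := (Complex.reCLM : ℂ →L[ℝ] ℝ).integral_comp_comm hmul_int
      simp only [Complex.reCLM_apply] at h2
      rw [h2, h0]
    rw [h1]
    have h3 : (starRingEnd ℂ) c * c = (Complex.normSq c : ℂ) := by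
      rw [mul_comm, Complex.mul_conj]
    rw [h3, Complex.ofReal_re, Complex.normSq_eq_norm_sq, hn]
    simp
  have hnonneg : ∀ ω, 0 ≤ 1 - ((starRingEnd ℂ) c * g ω).re := by
    intro ω
    have h1 : ((starRingEnd ℂ) c * g ω).re ≤ ‖(starRingEnd ℂ) c * g ω‖ :=
      Complex.re_le_norm _
    have h2 : ‖(starRingEnd ℂ) c * g ω‖ ≤ 1 := by
      rw [norm_mul, RCLike.norm_conj, hn, one_mul]; exact hb ω
    linarith
  have hae := (integral_eq_zero_iff_of_nonneg hnonneg
    ((integrable_const 1).sub hint2)).1 hzero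
  filter_upwards [hae] with ω hω
  simp only [Pi.zero_apply] at hω
  have hre : ((starRingEnd ℂ) c * g ω).re = 1 := by linarith
  have hnle : ‖(starRingEnd ℂ) c * g ω‖ ≤ 1 := by
    rw [norm_mul, RCLike.norm_conj, hn, one_mul]; exact hb ω
  have := aux_eq_one_of_re hnle hre
  -- c * (conj c * g ω) = c * 1
  have h5 := congrArg (fun z => c * z) this
  simp only [mul_one] at h5
  rw [← mul_assoc, mul_comm c ((starRingEnd ℂ) c), mul_comm ((starRingEnd ℂ) c) c,
    Complex.mul_conj, Complex.normSq_eq_norm_sq, hn] at h5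
  simpa using h5

private lemma aux_trivial {K : Type*} [MetricSpace K] [AddCommMonoid K]
    [MeasurableSpace K] [BorelSpace K]
    {Ω : Type*} [MeasurableSpace Ω] {μ : Measure Ω} [IsProbabilityMeasure μ]
    {ξ : Ω → K} (hξ : Measurable ξ)
    {C : Set (K → ℂ)} (hcount : C.Countable)
    (hsep : ∀ x y : K, x ≠ y →
      ∃ χ ∈ C, ∃ U ∈ 𝓝 x, ∃ V ∈ 𝓝 y, ∀ x' ∈ U, ∀ y' ∈ V, χ x' ≠ χ y')
    (honeC : ∀ χ ∈ C, χ 0 = 1)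
    (hae : ∀ χ ∈ C, ∀ᵐ ω ∂μ, χ (ξ ω) = 1) :
    μ {ω | ξ ω = (0 : K)} = 1 := by
  have hall : ∀ᵐ ω ∂μ, ∀ χ ∈ C, χ (ξ ω) = 1 := (ae_ball_iff hcount).2 hae
  have hae0 : ∀ᵐ ω ∂μ, ξ ω = 0 := by
    filter_upwards [hall] with ω hω
    by_contra hne
    obtain ⟨χ, hχC, U, hU, V, hV, hsep'⟩ := hsep (ξ ω) 0 hne
    exact hsep' (ξ ω) (mem_of_mem_nhds hU) 0 (mem_of_mem_nhds hV)
      (by rw [hω χ hχC, honeC χ hχC])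
  have h1 : μ {ω | ¬ (ξ ω = 0)} = 0 := hae0
  have h2 : {ω | ξ ω = (0:K)} = {ω | ¬ (ξ ω = 0)}ᶜ := by ext ω; simp
  rw [h2, measure_compl _ (ne_top_of_lt (measure_lt_top μ _)), h1]
  · simp
  · exact (hξ (measurableSet_singleton (0:K))).compl


set_option maxHeartbeats 4000000 in
/-- Assume Condition (C) and the second distributivity law.  Then
(i) every proper strictly `α`-stable random element in `K` has exponent `α ≤ 2`;
(ii) if the involution is the identity map then `α ≤ 1`; and if in addition `K` is
pointed with origin `o` and Condition (E) holds, then `α > 0`. -/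

theorem SaS_exponent_bounds_of_second_distributivity
    {K : Type*} [MetricSpace K] [PolishSpace K] [AddCommMonoid K] [SMul ℝ K]
    [MeasurableSpace K] [BorelSpace K]
    (hadd_cont : Continuous fun p : K × K => p.1 + p.2)
    (hsmul_cont : ContinuousOn (fun p : ℝ × K => p.1 • p.2)
      (Set.Ioi (0 : ℝ) ×ˢ (Set.univ : Set K)))
    (hsmul_add : ∀ a : ℝ, 0 < a → ∀ x y : K, a • (x + y) = a • x + a • y)
    (hsmul_assoc : ∀ a b : ℝ, 0 < a → 0 < b → ∀ x : K, a • (b • x) = (a * b) • x)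
    (hone_smul : ∀ x : K, (1 : ℝ) • x = x)
    (hsmul_e : ∀ a : ℝ, 0 < a → a • (0 : K) = (0 : K))
    (inv : K → K)
    (hinv_cont : Continuous inv)
    (hinv_add : ∀ x y : K, inv (x + y) = inv x + inv y)
    (hinv_invol : ∀ x : K, inv (inv x) = x)
    (hinv_smul : ∀ a : ℝ, 0 < a → ∀ x : K, inv (a • x) = a • inv x)
    (hdistrib2 : ∀ a b : ℝ, 0 < a → 0 < b → ∀ x : K, (a + b) • x = a • x + b • x)
    (Kt : Set (K → ℂ)) (hC : ConditionC inv Kt)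
    {Ω : Type*} [MeasurableSpace Ω] (μ : Measure Ω) [IsProbabilityMeasure μ]
    (ξ : Ω → K) (hξmeas : Measurable ξ)
    (hnontriv : μ {ω | ξ ω = (0 : K)} < 1)
    (hproper : ∀ χ ∈ Kt, ∫ ω, χ (ξ ω) ∂μ ≠ 0)
    (α : ℝ) (hα : α ≠ 0)
    (hSaS : ∀ a b : ℝ, 0 < a → 0 < b →
      Measure.map (fun p : K × K => (a ^ (1 / α)) • p.1 + (b ^ (1 / α)) • p.2)
          ((μ.map ξ).prod (μ.map ξ)) =
        Measure.map (fun x : K => ((a + b) ^ (1 / α)) • x) (μ.map ξ)) :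
    α ≤ 2 ∧
    ((∀ x : K, inv x = x) → α ≤ 1) ∧
    (∀ o : K, (∀ x : K, x ≠ 0 →
        Filter.Tendsto (fun a : ℝ => a • x) (nhdsWithin 0 (Set.Ioi 0)) (nhds o)) →
      ConditionE o Kt → 0 < α) := by
  classical
  obtain ⟨hKt, h1mem, hmulmem, hresc, hfac, Cs, hCsub, hCcount, hCsep⟩ := hC
  have hone : ∀ χ ∈ Kt, χ 0 = 1 := fun χ hχ => (hKt χ hχ).2.1
  have hmulKt : ∀ χ ∈ Kt, ∀ x y : K, χ (x + y) = χ x * χ y :=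
    fun χ hχ => (hKt χ hχ).2.2.1
  have hinvKt : ∀ χ ∈ Kt, ∀ x : K, χ (inv x) = (starRingEnd ℂ) (χ x) :=
    fun χ hχ => (hKt χ hχ).2.2.2
  -- continuity of scalar multiplication slices
  have hsmul_cont' : ∀ a : ℝ, 0 < a → Continuous fun x : K => a • x := by
    intro a ha
    rw [continuous_iff_continuousAt]
    intro x
    have hmem : ((a, x) : ℝ × K) ∈ Set.Ioi (0:ℝ) ×ˢ (Set.univ : Set K) :=
      ⟨ha, Set.mem_univ x⟩
    have hopen : IsOpen (Set.Ioi (0:ℝ) ×ˢ (Set.univ : Set K)) :=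
      isOpen_Ioi.prod isOpen_univ
    have hca : ContinuousAt (fun p : ℝ × K => p.1 • p.2) (a, x) :=
      hsmul_cont.continuousAt (hopen.mem_nhds hmem)
    exact hca.comp ((continuous_const.prodMk continuous_id).continuousAt)
  have hsmulx_cont : ∀ x : K, ContinuousOn (fun t : ℝ => t • x) (Set.Ioi 0) := by
    intro x t ht
    have hmem : ((t, x) : ℝ × K) ∈ Set.Ioi (0:ℝ) ×ˢ (Set.univ : Set K) :=
      ⟨ht, Set.mem_univ x⟩
    have hopen : IsOpen (Set.Ioi (0:ℝ) ×ˢ (Set.univ : Set K)) :=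
      isOpen_Ioi.prod isOpen_univ
    have hca : ContinuousAt (fun p : ℝ × K => p.1 • p.2) (t, x) :=
      hsmul_cont.continuousAt (hopen.mem_nhds hmem)
    have hg : ContinuousAt (fun t : ℝ => ((t, x) : ℝ × K)) t :=
      (continuous_id.prodMk continuous_const).continuousAt
    have hcc := ContinuousAt.comp (f := fun t : ℝ => ((t, x) : ℝ × K))
      (g := fun p : ℝ × K => p.1 • p.2) hca hg
    exact hcc.continuousWithinAt
  -- measurability of characters
  have hmeasχ : ∀ χ ∈ Kt, Measurable χ := by
    intro χ hχ
    obtain ⟨χ', χ'', hmod, harg, hfx⟩ := hfac χ hχ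
    have hm' : Measurable χ' := by
      rcases hmod.2.2.2.2 with h | h
      · exact h.measurable
      · exact h.measurable
    have : Measurable fun x => ((χ' x : ℂ) * χ'' x) :=
      (Complex.measurable_ofReal.comp hm').mul harg.2.2.2.2.measurable
    exact (funext hfx : χ = fun x => (χ' x : ℂ) * χ'' x) ▸ this
  have hbd : ∀ χ ∈ Kt, ∀ x : K, ‖χ x‖ ≤ 1 := by
    intro χ hχ x
    exact (hKt χ hχ).1 x
  have hprobν : IsProbabilityMeasure (μ.map ξ) :=
    Measure.isProbabilityMeasure_map hξmeas.aemeasurable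
  -- integrability helper
  have hintξ : ∀ (f : K → ℂ), Measurable f → (∀ x : K, ‖f x‖ ≤ 1) →
      Integrable (fun ω => f (ξ ω)) μ := by
    intro f hf hb
    exact aux_integrable μ ((hf.comp hξmeas).aestronglyMeasurable) (fun ω => hb (ξ ω))
  -- the key multiplicative identity for Laplace transforms
  have hK1 : ∀ χ ∈ Kt, ∀ a b : ℝ, 0 < a → 0 < b →
      (∫ ω, χ ((a + b) ^ (1 / α) • ξ ω) ∂μ)
        = (∫ ω, χ (a ^ (1 / α) • ξ ω) ∂μ) * ∫ ω, χ (b ^ (1 / α) • ξ ω) ∂μ := by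
    intro χ hχ a b ha hb
    have hχm : Measurable χ := hmeasχ χ hχ
    have hra : (0:ℝ) < a ^ (1/α) := Real.rpow_pos_of_pos ha _
    have hrb : (0:ℝ) < b ^ (1/α) := Real.rpow_pos_of_pos hb _
    have hrab : (0:ℝ) < (a + b) ^ (1/α) := Real.rpow_pos_of_pos (by linarith) _
    have hT : Measurable fun p : K × K => a ^ (1/α) • p.1 + b ^ (1/α) • p.2 :=
      (hadd_cont.comp (((hsmul_cont' _ hra).comp continuous_fst).prodMk
        ((hsmul_cont' _ hrb).comp continuous_snd))).measurable
    have hS : Measurable fun x : K => (a + b) ^ (1/α) • x := (hsmul_cont' _ hrab).measurable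
    have key := congrArg (fun m : Measure K => ∫ x, χ x ∂m) (hSaS a b ha hb)
    rw [integral_map hT.aemeasurable hχm.aestronglyMeasurable,
      integral_map hS.aemeasurable hχm.aestronglyMeasurable] at key
    simp only [hmulKt χ hχ] at key
    rw [MeasureTheory.integral_prod_mul (μ := μ.map ξ) (ν := μ.map ξ)
      (f := fun x => χ (a ^ (1/α) • x)) (g := fun y => χ (b ^ (1/α) • y))] at key
    have e1 : ∫ x, χ (a ^ (1/α) • x) ∂(μ.map ξ) = ∫ ω, χ (a ^ (1/α) • ξ ω) ∂μ :=
      integral_map hξmeas.aemeasurable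
        ((hχm.comp (hsmul_cont' _ hra).measurable).aestronglyMeasurable)
    have e2 : ∫ x, χ (b ^ (1/α) • x) ∂(μ.map ξ) = ∫ ω, χ (b ^ (1/α) • ξ ω) ∂μ :=
      integral_map hξmeas.aemeasurable
        ((hχm.comp (hsmul_cont' _ hrb).measurable).aestronglyMeasurable)
    have e3 : ∫ x, χ ((a + b) ^ (1/α) • x) ∂(μ.map ξ) = ∫ ω, χ ((a + b) ^ (1/α) • ξ ω) ∂μ :=
      integral_map hξmeas.aemeasurable ((hχm.comp hS).aestronglyMeasurable)
    rw [e1, e2, e3] at key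
    exact key.symm
  -- nonvanishing of the rescaled Laplace transforms
  have hFne : ∀ χ ∈ Kt, ∀ t : ℝ, 0 < t → (∫ ω, χ (t • ξ ω) ∂μ) ≠ 0 := by
    intro χ hχ t ht
    have := hproper _ (hresc t ht χ hχ)
    simpa using this
  -- rpow inverse identity
  have hrpinv : ∀ t : ℝ, 0 < t → (t ^ α) ^ (1/α) = t := by
    intro t ht
    rw [← Real.rpow_mul ht.le, mul_one_div, div_self hα, Real.rpow_one]
  -- normalization at 1
  have hF1 : ∀ χ : K → ℂ, (∫ ω, χ ((1:ℝ) ^ (1/α) • ξ ω) ∂μ) = ∫ ω, χ (ξ ω) ∂μ := by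
    intro χ
    simp only [Real.one_rpow, hone_smul]
  -- the modulus of the Laplace transform is an exact exponential
  have hnormF : ∀ χ ∈ Kt, ∀ s : ℝ, 0 < s →
      ‖∫ ω, χ (s ^ (1/α) • ξ ω) ∂μ‖ = ‖∫ ω, χ (ξ ω) ∂μ‖ ^ s := by
    intro χ hχ s hs
    have := aux_cauchy_rpow (fun s => ‖∫ ω, χ (s ^ (1/α) • ξ ω) ∂μ‖)
      (fun s _ => norm_nonneg _)
      (fun s _ => aux_norm_int_le μ (fun ω => hbd χ hχ _))
      (fun a b ha hb => by
        rw [hK1 χ hχ a b ha hb, norm_mul]) s hs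
    rw [this, hF1 χ]
  -- if all characters in the countable family are a.e. 1, contradiction
  have hμcontr : ¬ (∀ χ ∈ Cs, ∀ᵐ ω ∂μ, χ (ξ ω) = 1) := by
    intro h
    have := aux_trivial hξmeas hCcount hCsep (fun χ hχ => hone χ (hCsub hχ)) h
    rw [this] at hnontriv
    exact lt_irrefl _ hnontriv
  -- real part of integrals
  have hre_int : ∀ (f : Ω → ℂ), Integrable f μ →
      ∫ ω, (f ω).re ∂μ = (∫ ω, f ω ∂μ).re := by
    intro f hf
    have := (Complex.reCLM : ℂ →L[ℝ] ℝ).integral_comp_comm hf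
    simpa using this
  have him_int : ∀ (f : Ω → ℂ), Integrable f μ →
      ∫ ω, (f ω).im ∂μ = (∫ ω, f ω ∂μ).im := by
    intro f hf
    have := (Complex.imCLM : ℂ →L[ℝ] ℝ).integral_comp_comm hf
    simpa using this
  refine ⟨?_, ?_, ?_⟩
  · -- Part (i) : α ≤ 2
    by_contra hgt2
    push_neg at hgt2
    have hαpos : (0:ℝ) < α := lt_trans two_pos hgt2
    -- Step 1 : every character has Laplace transform of modulus one
    have hdeg : ∀ χ ∈ Kt, ‖∫ ω, χ (ξ ω) ∂μ‖ = 1 := by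
      intro χ hχ
      have hχm : Measurable χ := hmeasχ χ hχ
      have hWm : Measurable fun p : K × K => p.1 + inv p.2 :=
        (hadd_cont.comp (continuous_fst.prodMk (hinv_cont.comp continuous_snd))).measurable
      haveI : IsProbabilityMeasure ((μ.map ξ).prod (μ.map ξ)) := by infer_instance
      -- symmetrised Laplace transform
      have hsymm : ∀ t : ℝ, 0 < t →
          (∫ p, χ (t • (p.1 + inv p.2)) ∂((μ.map ξ).prod (μ.map ξ)))
            = (∫ ω, χ (t • ξ ω) ∂μ) * (starRingEnd ℂ) (∫ ω, χ (t • ξ ω) ∂μ) := by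
        intro t ht
        have hpt : ∀ p : K × K, χ (t • (p.1 + inv p.2))
            = χ (t • p.1) * (starRingEnd ℂ) (χ (t • p.2)) := by
          intro p
          rw [hsmul_add t ht, ← hinv_smul t ht, hmulKt χ hχ, hinvKt χ hχ]
        simp only [hpt]
        rw [MeasureTheory.integral_prod_mul (μ := μ.map ξ) (ν := μ.map ξ)
          (f := fun x => χ (t • x)) (g := fun y => (starRingEnd ℂ) (χ (t • y)))]
        have e1 : ∫ x, χ (t • x) ∂(μ.map ξ) = ∫ ω, χ (t • ξ ω) ∂μ :=
          integral_map hξmeas.aemeasurable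
            ((hχm.comp (hsmul_cont' t ht).measurable).aestronglyMeasurable)
        rw [integral_conj, e1]
      set c₁ : ℝ := ‖∫ ω, χ (ξ ω) ∂μ‖ with hc₁def
      have hc₁pos : 0 < c₁ := by
        rw [hc₁def, norm_pos_iff]
        have := hFne χ hχ 1 one_pos
        simpa [hone_smul] using this
      have hc₁le : c₁ ≤ 1 := aux_norm_int_le μ (fun ω => hbd χ hχ _)
      -- key estimate
      have hres : ∀ z : ℂ, (z * (starRingEnd ℂ) z).re = ‖z‖^2 := by
        intro z
        rw [Complex.mul_conj, Complex.ofReal_re, Complex.normSq_eq_norm_sq]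
      have hkey : ∀ n : ℕ, 1 - c₁^2
          ≤ ((n:ℝ)+1)^2 * (2 * (1/((n:ℝ)+1))^α * (-Real.log c₁)) := by
        intro n
        set t : ℝ := 1/((n:ℝ)+1) with htdef
        have ht : 0 < t := by positivity
        have hta : (0:ℝ) < t ^ α := Real.rpow_pos_of_pos ht _
        -- pointwise bound on the product space
        have hpt : ∀ p : K × K,
            1 - (χ ((1:ℝ) • (p.1 + inv p.2))).re
              ≤ ((n:ℝ)+1)^2 * (1 - (χ (t • (p.1 + inv p.2))).re) := by
          intro p
          have hz : ‖χ (t • (p.1 + inv p.2))‖ ≤ 1 := hbd χ hχ _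
          have hpow := aux_charpow hdistrib2 (hmulKt χ hχ) n t ht (p.1 + inv p.2)
          rw [show (((n:ℝ)+1) * t) = 1 by rw [htdef]; field_simp] at hpow
          rw [hpow]
          have := aux_one_sub_re_pow (χ (t • (p.1 + inv p.2))) hz (n+1)
          push_cast at this ⊢
          linarith
        -- integrate
        have hint1 : Integrable (fun p : K × K => (χ ((1:ℝ) • (p.1 + inv p.2))).re)
            ((μ.map ξ).prod (μ.map ξ)) := by
          have h5 : Integrable (fun p : K × K => χ ((1:ℝ) • (p.1 + inv p.2)))
              ((μ.map ξ).prod (μ.map ξ)) :=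
            aux_integrable _ ((hχm.comp ((hsmul_cont' 1 one_pos).measurable.comp
              hWm)).aestronglyMeasurable) (fun p => hbd χ hχ _)
          have := (Complex.reCLM : ℂ →L[ℝ] ℝ).integrable_comp h5
          simpa using this
        have hint2 : Integrable (fun p : K × K => (χ (t • (p.1 + inv p.2))).re)
            ((μ.map ξ).prod (μ.map ξ)) := by
          have h5 : Integrable (fun p : K × K => χ (t • (p.1 + inv p.2)))
              ((μ.map ξ).prod (μ.map ξ)) :=
            aux_integrable _ ((hχm.comp ((hsmul_cont' t ht).measurable.comp
              hWm)).aestronglyMeasurable) (fun p => hbd χ hχ _)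
          have := (Complex.reCLM : ℂ →L[ℝ] ℝ).integrable_comp h5
          simpa using this
        have hint1c : Integrable (fun p : K × K => χ ((1:ℝ) • (p.1 + inv p.2)))
            ((μ.map ξ).prod (μ.map ξ)) :=
          aux_integrable _ ((hχm.comp ((hsmul_cont' 1 one_pos).measurable.comp
            hWm)).aestronglyMeasurable) (fun p => hbd χ hχ _)
        have hint2c : Integrable (fun p : K × K => χ (t • (p.1 + inv p.2)))
            ((μ.map ξ).prod (μ.map ξ)) :=
          aux_integrable _ ((hχm.comp ((hsmul_cont' t ht).measurable.comp
            hWm)).aestronglyMeasurable) (fun p => hbd χ hχ _)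
        have hmono := integral_mono
          ((integrable_const 1).sub hint1)
          (((integrable_const 1).sub hint2).const_mul (((n:ℝ)+1)^2))
          hpt
        simp only [Pi.sub_apply] at hmono
        rw [integral_sub (integrable_const 1) hint1,
          MeasureTheory.integral_const_mul,
          integral_sub (integrable_const 1) hint2] at hmono
        simp only [integral_const, measure_univ, probReal_univ, ENNReal.toReal_one, smul_eq_mul,
          one_mul] at hmono
        have hre1 : ∫ p, (χ ((1:ℝ) • (p.1 + inv p.2))).re ∂((μ.map ξ).prod (μ.map ξ))
            = c₁ ^ 2 := by
          have h6 := (Complex.reCLM : ℂ →L[ℝ] ℝ).integral_comp_comm hint1c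
          simp only [Complex.reCLM_apply] at h6
          rw [h6, hsymm 1 one_pos, hres]
          simp only [hone_smul, hc₁def]
        have hre2 : ∫ p, (χ (t • (p.1 + inv p.2))).re ∂((μ.map ξ).prod (μ.map ξ))
            = c₁ ^ (2 * t ^ α) := by
          have h6 := (Complex.reCLM : ℂ →L[ℝ] ℝ).integral_comp_comm hint2c
          simp only [Complex.reCLM_apply] at h6
          rw [h6, hsymm t ht, hres]
          have h7 : ‖∫ ω, χ (t • ξ ω) ∂μ‖ = c₁ ^ (t ^ α) := by
            have h8 := hnormF χ hχ (t ^ α) hta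
            rw [hrpinv t ht] at h8
            rw [h8, hc₁def]
          rw [h7, ← Real.rpow_natCast (c₁ ^ (t^α)) 2, ← Real.rpow_mul (le_of_lt hc₁pos)]
          norm_num
          ring_nf
        rw [hre1, hre2] at hmono
        have hb2 : 1 - c₁ ^ (2 * t ^ α) ≤ (2 * t ^ α) * (-Real.log c₁) :=
          aux_one_sub_rpow_le hc₁pos hc₁le (by positivity)
        have hnn1 : (0:ℝ) ≤ ((n:ℝ)+1)^2 := by positivity
        calc 1 - c₁^2 ≤ ((n:ℝ)+1)^2 * (1 - c₁ ^ (2 * t ^ α)) := hmono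
          _ ≤ ((n:ℝ)+1)^2 * ((2 * t ^ α) * (-Real.log c₁)) :=
              mul_le_mul_of_nonneg_left hb2 hnn1
          _ = ((n:ℝ)+1)^2 * (2 * t ^ α * (-Real.log c₁)) := by ring
      -- the bound tends to zero
      have hlim : Tendsto (fun n : ℕ =>
          ((n:ℝ)+1)^2 * (2 * (1/((n:ℝ)+1))^α * (-Real.log c₁))) atTop (𝓝 0) := by
        have heq : ∀ n : ℕ, ((n:ℝ)+1)^2 * (2 * (1/((n:ℝ)+1))^α * (-Real.log c₁))
            = (2 * (-Real.log c₁)) * ((n:ℝ)+1) ^ (-(α - 2)) := by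
          intro n
          have hx : (0:ℝ) < (n:ℝ)+1 := by positivity
          rw [one_div, Real.inv_rpow hx.le, ← Real.rpow_neg hx.le]
          rw [show -(α - 2) = 2 + (-α) by ring, Real.rpow_add hx]
          rw [show ((n:ℝ)+1) ^ (2:ℝ) = ((n:ℝ)+1) ^ (2:ℕ) by
            rw [← Real.rpow_natCast ((n:ℝ)+1) 2]; norm_num]
          ring
        simp only [heq]
        have h1 : Tendsto (fun n : ℕ => ((n:ℝ)+1)) atTop atTop :=
          tendsto_atTop_add_const_right atTop 1 tendsto_natCast_atTop_atTop
        have h2 : Tendsto (fun x : ℝ => x ^ (-(α - 2))) atTop (𝓝 0) :=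
          tendsto_rpow_neg_atTop (by linarith)
        have h3 := (h2.comp h1).const_mul (2 * (-Real.log c₁))
        simpa using h3
      have hfin : 1 - c₁^2 ≤ 0 := ge_of_tendsto' hlim hkey
      have : c₁ = 1 := by nlinarith
      rw [hc₁def] at this
      exact this
    -- Step 2 : endgame, the random element is a.s. constant and scaling degenerates
    -- a.e. constancy of every character of the countable family
    have hconst : ∀ χ ∈ Kt, ∀ᵐ ω ∂μ, χ (ξ ω) = ∫ ω', χ (ξ ω') ∂μ := by
      intro χ hχ
      exact aux_ae_const (g := fun ω => χ (ξ ω))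
        ((hmeasχ χ hχ).comp hξmeas).aestronglyMeasurable
        (fun ω => hbd χ hχ _) (hdeg χ hχ)
    have hallC : ∀ᵐ ω ∂μ, ∀ χ ∈ Cs, χ (ξ ω) = ∫ ω', χ (ξ ω') ∂μ :=
      (ae_ball_iff hCcount).2 (fun χ hχC => hconst χ (hCsub hχC))
    -- positive probability of being nonzero
    have hne0 : μ {ω | ξ ω ≠ 0} ≠ 0 := by
      intro h
      have hae2 : ∀ᵐ ω ∂μ, ξ ω = 0 := by
        rw [ae_iff]
        simpa using h
      have h2 : {ω | ξ ω = (0:K)} = {ω | ¬ (ξ ω = 0)}ᶜ := by ext ω; simp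
      have h3 : μ {ω | ξ ω = (0:K)} = 1 := by
        rw [h2, measure_compl _ (ne_top_of_lt (measure_lt_top μ _))]
        · have h4 : μ {ω | ¬ (ξ ω = 0)} = 0 := hae2
          rw [h4]
          simp
        · exact (hξmeas (measurableSet_singleton (0:K))).compl
      rw [h3] at hnontriv
      exact lt_irrefl _ hnontriv
    -- pick a point realising the constants
    have hex : ∃ ω₀ : Ω, ξ ω₀ ≠ 0 ∧ ∀ χ ∈ Cs, χ (ξ ω₀) = ∫ ω', χ (ξ ω') ∂μ := by
      by_contra h
      push_neg at h
      apply hne0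
      refine measure_mono_null ?_
        (ae_iff.1 hallC : μ {ω | ¬ ∀ χ ∈ Cs, χ (ξ ω) = ∫ ω', χ (ξ ω') ∂μ} = 0)
      intro ω hω
      simp only [Set.mem_setOf_eq] at hω ⊢
      intro hP
      obtain ⟨χ, hχC, hne⟩ := h ω hω
      exact hne (hP χ hχC)
    obtain ⟨ω₀, hω₀ne, hω₀P⟩ := hex
    set x₀ : K := ξ ω₀ with hx₀def
    -- ξ is a.s. equal to x₀
    have haex : ∀ᵐ ω ∂μ, ξ ω = x₀ := by
      filter_upwards [hallC] with ω hω
      by_contra hne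
      obtain ⟨χ, hχC, U, hU, V, hV, hsep'⟩ := hCsep (ξ ω) x₀ hne
      exact hsep' (ξ ω) (mem_of_mem_nhds hU) x₀ (mem_of_mem_nhds hV)
        (by rw [hω χ hχC, hω₀P χ hχC])
    have hmap : μ.map ξ = Measure.dirac x₀ := by
      rw [Measure.map_congr (g := fun _ => x₀) haex, Measure.map_const]
      simp
    -- scaling degeneracy from stability
    have hdirac : ∀ t : ℝ, 0 < t → ((2:ℝ) * t) • x₀ = ((2:ℝ) ^ (1/α) * t) • x₀ := by
      intro t ht
      have hta : (0:ℝ) < t ^ α := Real.rpow_pos_of_pos ht α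
      have hmeq := hSaS (t ^ α) (t ^ α) hta hta
      rw [hmap] at hmeq
      have hr : (0:ℝ) < (t^α) ^ (1/α) := Real.rpow_pos_of_pos hta _
      have hr2 : (0:ℝ) < ((t^α) + (t^α)) ^ (1/α) := Real.rpow_pos_of_pos (by linarith) _
      have hT : Measurable fun p : K × K => (t ^ α) ^ (1/α) • p.1 + (t ^ α) ^ (1/α) • p.2 :=
        (hadd_cont.comp (((hsmul_cont' _ hr).comp continuous_fst).prodMk
          ((hsmul_cont' _ hr).comp continuous_snd))).measurable
      have hS : Measurable fun x : K => ((t^α) + (t^α)) ^ (1/α) • x :=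
        (hsmul_cont' _ hr2).measurable
      rw [MeasureTheory.Measure.dirac_prod_dirac, Measure.map_dirac' hT,
        Measure.map_dirac' hS] at hmeq
      have hpteq : (t^α)^(1/α) • x₀ + (t^α)^(1/α) • x₀ = ((t^α)+(t^α))^(1/α) • x₀ := by
        by_contra hne
        have h8 := congrArg (fun m : Measure K =>
          m {(t^α)^(1/α) • x₀ + (t^α)^(1/α) • x₀}) hmeq
        simp only at h8
        rw [Measure.dirac_apply' _ (measurableSet_singleton _),
          Measure.dirac_apply' _ (measurableSet_singleton _)] at h8
        have hne2 : ¬ (((t^α)+(t^α))^(1/α) • x₀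
            = (t^α)^(1/α) • x₀ + (t^α)^(1/α) • x₀) := fun hc => hne hc.symm
        simp only [Set.indicator_apply, Set.mem_singleton_iff, Pi.one_apply,
          if_true, hne2, if_false, if_neg hne2] at h8
        simp at h8
      rw [hrpinv t ht] at hpteq
      rw [show ((t^α) + (t^α)) = 2 * t^α by ring] at hpteq
      rw [show ((2:ℝ) * t^α) ^ (1/α) = (2:ℝ)^(1/α) * t by
        rw [Real.mul_rpow (by norm_num) (le_of_lt hta), hrpinv t ht]] at hpteq
      rw [show t • x₀ + t • x₀ = ((t + t):ℝ) • x₀ from (hdistrib2 t t ht ht x₀).symm,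
        show t + t = 2*t by ring] at hpteq
      exact hpteq
    set lam : ℝ := (2:ℝ)^(1 - (1:ℝ)/α) with hlamdef
    have hhalf : (1:ℝ)/α < 1/2 := by
      rw [div_lt_div_iff₀ hαpos two_pos]
      linarith
    have hlam1 : 1 < lam := by
      rw [hlamdef]
      have h0 : (0:ℝ) < 1 - 1/α := by linarith
      calc (1:ℝ) = (2:ℝ) ^ (0:ℝ) := by norm_num
        _ < (2:ℝ) ^ (1 - (1:ℝ)/α) := by
            apply Real.rpow_lt_rpow_left_iff one_lt_two |>.2 h0
    have hlam0 : 0 < lam := lt_trans one_pos hlam1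
    have hper : ∀ s : ℝ, 0 < s → (lam * s) • x₀ = s • x₀ := by
      intro s hs
      have h2α : (0:ℝ) < (2:ℝ)^((1:ℝ)/α) := Real.rpow_pos_of_pos two_pos _
      have ht : 0 < s / (2:ℝ)^((1:ℝ)/α) := by positivity
      have hd := hdirac (s / (2:ℝ)^((1:ℝ)/α)) ht
      rw [show (2:ℝ)^((1:ℝ)/α) * (s / (2:ℝ)^((1:ℝ)/α)) = s from mul_div_cancel₀ s (ne_of_gt h2α)] at hd
      rw [show (2:ℝ) * (s / (2:ℝ)^((1:ℝ)/α)) = lam * s by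
        rw [hlamdef, Real.rpow_sub two_pos, Real.rpow_one]
        field_simp] at hd
      exact hd
    -- a separating character at x₀
    obtain ⟨χ₀, hχ₀C, U, hU, V, hV, hsep0⟩ := hCsep x₀ 0 hω₀ne
    have hχ₀ : χ₀ ∈ Kt := hCsub hχ₀C
    have hc_ne : χ₀ x₀ ≠ 1 := by
      have := hsep0 x₀ (mem_of_mem_nhds hU) 0 (mem_of_mem_nhds hV)
      rwa [hone χ₀ hχ₀] at this
    have hφmul : ∀ s t : ℝ, 0 < s → 0 < t →
        χ₀ ((s + t) • x₀) = χ₀ (s • x₀) * χ₀ (t • x₀) := by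
      intro s t hs ht
      rw [hdistrib2 s t hs ht, hmulKt χ₀ hχ₀]
    have hφval : ∀ t : ℝ, 0 < t → (∫ ω, χ₀ (t • ξ ω) ∂μ) = χ₀ (t • x₀) := by
      intro t ht
      have hae2 : (fun ω => χ₀ (t • ξ ω)) =ᵐ[μ] (fun _ => χ₀ (t • x₀)) := by
        filter_upwards [haex] with ω hω
        rw [hω]
      rw [integral_congr_ae hae2, integral_const]
      simp
    have hφnorm : ∀ t : ℝ, 0 < t → ‖χ₀ (t • x₀)‖ = 1 := by
      intro t ht
      rw [← hφval t ht]
      have := hdeg (fun x => χ₀ (t • x)) (hresc t ht χ₀ hχ₀)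
      simpa using this
    have hφne : ∀ t : ℝ, 0 < t → χ₀ (t • x₀) ≠ 0 := by
      intro t ht h
      have := hφnorm t ht
      rw [h] at this
      simp at this
    -- continuity of t ↦ χ₀ (t • x₀) on (0, ∞)
    obtain ⟨χ', χ'', hmod, harg, hfx⟩ := hfac χ₀ hχ₀
    have hmod1 : ∀ t : ℝ, 0 < t → χ' (t • x₀) = 1 := by
      intro t ht
      have h1 := hφnorm t ht
      rw [hfx, norm_mul, harg.1, mul_one,
        Complex.norm_real, Real.norm_eq_abs, abs_of_nonneg (hmod.1 _).1] at h1
      exact h1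
    have hφeq'' : ∀ t : ℝ, 0 < t → χ₀ (t • x₀) = χ'' (t • x₀) := by
      intro t ht
      rw [hfx, hmod1 t ht]
      simp
    have hφcont : ContinuousOn (fun t : ℝ => χ₀ (t • x₀)) (Set.Ioi 0) := by
      exact ContinuousOn.congr ((harg.2.2.2.2).comp_continuousOn (hsmulx_cont x₀))
        (fun t ht => hφeq'' t ht)
    -- the set where χ₀ (· • x₀) = 1 is additively and λ-scaling stable
    have hφlamiter : ∀ m : ℕ, ∀ s : ℝ, 0 < s →
        χ₀ ((s / lam ^ m) • x₀) = χ₀ (s • x₀) := by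
      intro m
      induction m with
      | zero => intro s hs; norm_num
      | succ m ih =>
        intro s hs
        have h1 : s / lam ^ (m+1) = (s / lam ^ m) / lam := by
          rw [pow_succ]; ring
        have h2 : (0:ℝ) < s / lam ^ m := by positivity
        have h3 : χ₀ (((s / lam ^ m) / lam) • x₀) = χ₀ ((s / lam ^ m) • x₀) := by
          have h4 := hper ((s / lam ^ m)/lam) (by positivity)
          rw [show lam * ((s / lam^m)/lam) = s / lam^m by field_simp] at h4
          rw [h4]
        rw [h1, h3, ih s hs]
    have hbase : χ₀ ((lam - 1) • x₀) = 1 := by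
      have h1 : χ₀ (lam • x₀) = χ₀ ((1:ℝ) • x₀) := by
        have := hper 1 one_pos
        rw [mul_one] at this
        rw [this]
      have h2 := hφmul (lam - 1) 1 (by linarith) one_pos
      rw [show (lam - 1) + 1 = lam by ring, h1] at h2
      exact mul_right_cancel₀ (hφne 1 one_pos)
        (show χ₀ ((lam-1) • x₀) * χ₀ ((1:ℝ) • x₀) = 1 * χ₀ ((1:ℝ) • x₀) by
          rw [one_mul]; exact h2.symm)
    have hδ1 : ∀ m : ℕ, χ₀ (((lam - 1) / lam ^ m) • x₀) = 1 := by
      intro m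
      rw [hφlamiter m (lam - 1) (by linarith), hbase]
    have hnδ : ∀ m n : ℕ, χ₀ ((((n:ℝ)+1) * ((lam - 1) / lam ^ m)) • x₀) = 1 := by
      intro m n
      have hδpos : (0:ℝ) < (lam - 1) / lam ^ m := by
        have : (0:ℝ) < lam ^ m := by positivity
        have h5 : (0:ℝ) < lam - 1 := by linarith
        positivity
      rw [aux_charpow hdistrib2 (hmulKt χ₀ hχ₀) n _ hδpos x₀, hδ1 m]
      simp
    -- density: χ₀ (1 • x₀) = 1
    have hδpos : ∀ m : ℕ, (0:ℝ) < (lam - 1) / lam ^ m := by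
      intro m
      have h5 : (0:ℝ) < lam - 1 := by linarith
      have : (0:ℝ) < lam ^ m := by positivity
      positivity
    have hδtend : Tendsto (fun m : ℕ => (lam - 1) / lam ^ m) atTop (𝓝 0) := by
      have h1 : Tendsto (fun m : ℕ => lam ^ m) atTop atTop :=
        tendsto_pow_atTop_atTop_of_one_lt hlam1
      have h2 := h1.inv_tendsto_atTop
      have h3 := h2.const_mul (lam - 1)
      simpa [div_eq_mul_inv] using h3
    have hseq : Tendsto (fun m : ℕ =>
        ((⌈1/((lam - 1) / lam ^ m)⌉₊ : ℝ)) * ((lam - 1) / lam ^ m)) atTop (𝓝 1) := by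
      have hlow : ∀ m : ℕ, (1:ℝ) ≤ ((⌈1/((lam - 1) / lam ^ m)⌉₊ : ℝ)) * ((lam - 1) / lam ^ m) := by
        intro m
        have hδ := hδpos m
        have h5 : (1:ℝ)/((lam - 1) / lam ^ m) ≤ (⌈1/((lam - 1) / lam ^ m)⌉₊ : ℝ) :=
          Nat.le_ceil _
        calc (1:ℝ) = (1/((lam - 1) / lam ^ m)) * ((lam - 1) / lam ^ m) :=
              (one_div_mul_cancel (ne_of_gt hδ)).symm
          _ ≤ _ := mul_le_mul_of_nonneg_right h5 (le_of_lt hδ)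
      have hup : ∀ m : ℕ, ((⌈1/((lam - 1) / lam ^ m)⌉₊ : ℝ)) * ((lam - 1) / lam ^ m)
          ≤ 1 + ((lam - 1) / lam ^ m) := by
        intro m
        have hδ := hδpos m
        have h5 : (⌈1/((lam - 1) / lam ^ m)⌉₊ : ℝ) < 1/((lam - 1) / lam ^ m) + 1 :=
          Nat.ceil_lt_add_one (by positivity)
        have h6 : ((⌈1/((lam - 1) / lam ^ m)⌉₊ : ℝ)) * ((lam - 1) / lam ^ m)
            ≤ (1/((lam - 1) / lam ^ m) + 1) * ((lam - 1) / lam ^ m) :=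
          mul_le_mul_of_nonneg_right (le_of_lt h5) (le_of_lt hδ)
        calc ((⌈1/((lam - 1) / lam ^ m)⌉₊ : ℝ)) * ((lam - 1) / lam ^ m)
            ≤ (1/((lam - 1) / lam ^ m) + 1) * ((lam - 1) / lam ^ m) := h6
          _ = 1 + ((lam - 1) / lam ^ m) := by
              rw [add_mul, one_div, inv_mul_cancel₀ (ne_of_gt hδ), one_mul]
      have hhi : Tendsto (fun m : ℕ => 1 + ((lam - 1) / lam ^ m)) atTop (𝓝 1) := by
        have := hδtend.const_add (1:ℝ)
        simpa using this
      exact tendsto_of_tendsto_of_tendsto_of_le_of_le tendsto_const_nhds hhi hlow hup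
    have hφseq : Tendsto (fun m : ℕ =>
        χ₀ (((((⌈1/((lam - 1) / lam ^ m)⌉₊ : ℝ)) * ((lam - 1) / lam ^ m))) • x₀))
        atTop (𝓝 (χ₀ ((1:ℝ) • x₀))) := by
      have hca : ContinuousAt (fun t : ℝ => χ₀ (t • x₀)) 1 :=
        hφcont.continuousAt (isOpen_Ioi.mem_nhds (by norm_num))
      exact hca.tendsto.comp hseq
    have hφ1 : χ₀ ((1:ℝ) • x₀) = 1 := by
      have hconst2 : Tendsto (fun m : ℕ =>
          χ₀ (((((⌈1/((lam - 1) / lam ^ m)⌉₊ : ℝ)) * ((lam - 1) / lam ^ m))) • x₀))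
          atTop (𝓝 1) := by
        apply tendsto_const_nhds.congr
        intro m
        have hN1 : 1 ≤ ⌈1/((lam - 1) / lam ^ m)⌉₊ :=
          Nat.one_le_ceil_iff.mpr (by have := hδpos m; positivity)
        obtain ⟨n, hn⟩ := Nat.exists_eq_add_of_le hN1
        rw [hn]
        rw [show (((1 + n : ℕ) : ℝ)) = (n:ℝ) + 1 by push_cast; ring]
        exact (hnδ m n).symm
      exact tendsto_nhds_unique hφseq hconst2
    rw [hone_smul] at hφ1
    exact hc_ne hφ1
  · -- Part (ii) : involution identity → α ≤ 1
    intro hinvid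
    by_contra hgt
    push_neg at hgt
    apply hμcontr
    intro χ hχC
    have hχ : χ ∈ Kt := hCsub hχC
    have hχm : Measurable χ := hmeasχ χ hχ
    have hχint : Integrable (fun ω => χ (ξ ω)) μ := hintξ χ hχm (hbd χ hχ)
    have hreal : ∀ x : K, (χ x).im = 0 := by
      intro x
      have h := hinvKt χ hχ x
      rw [hinvid] at h
      exact Complex.conj_eq_iff_im.1 h.symm
    have hnn : ∀ x : K, 0 ≤ (χ x).re := by
      intro x
      have hx : ((1:ℝ)/2 + 1/2) • x = (1/2 : ℝ) • x + (1/2 : ℝ) • x :=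
        hdistrib2 _ _ (by norm_num) (by norm_num) x
      have hx2 : χ x = χ ((1/2 : ℝ) • x) * χ ((1/2 : ℝ) • x) := by
        have h9 : ((1:ℝ)/2 + 1/2) = (1:ℝ) := by norm_num
        rw [← hmulKt χ hχ, ← hx, h9, hone_smul]
      have := congrArg Complex.re hx2
      rw [Complex.mul_re, hreal ((1/2 : ℝ) • x)] at this
      nlinarith [this]
    have hre_le1 : ∀ x : K, (χ x).re ≤ 1 := by
      intro x
      have := Complex.re_le_norm (χ x)
      exact le_trans this (hbd χ hχ x)
    have hint_t : ∀ t : ℝ, 0 < t → Integrable (fun ω => χ (t • ξ ω)) μ := by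
      intro t ht
      exact hintξ (fun x => χ (t • x)) (hχm.comp (hsmul_cont' t ht).measurable)
        (fun x => hbd χ hχ _)
    have hint_re : ∀ t : ℝ, 0 < t → Integrable (fun ω => (χ (t • ξ ω)).re) μ := by
      intro t ht
      have := (Complex.reCLM : ℂ →L[ℝ] ℝ).integrable_comp (hint_t t ht)
      simpa using this
    have hIm : ∀ a : ℝ, 0 < a → (∫ ω, χ (a ^ (1/α) • ξ ω) ∂μ).im = 0 := by
      intro a ha
      rw [← him_int _ (hint_t _ (Real.rpow_pos_of_pos ha _))]
      simp [hreal]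
    have hmulRe : ∀ a b : ℝ, 0 < a → 0 < b →
        (∫ ω, χ ((a + b) ^ (1/α) • ξ ω) ∂μ).re
          = (∫ ω, χ (a ^ (1/α) • ξ ω) ∂μ).re * (∫ ω, χ (b ^ (1/α) • ξ ω) ∂μ).re := by
      intro a b ha hb
      have h := congrArg Complex.re (hK1 χ hχ a b ha hb)
      rw [Complex.mul_re, hIm a ha, hIm b hb] at h
      simpa using h
    have hre_nn : ∀ a : ℝ, 0 < a → 0 ≤ (∫ ω, χ (a ^ (1/α) • ξ ω) ∂μ).re := by
      intro a ha
      rw [← hre_int _ (hint_t _ (Real.rpow_pos_of_pos ha _))]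
      exact integral_nonneg (fun ω => hnn _)
    have hre_le : ∀ a : ℝ, 0 < a → (∫ ω, χ (a ^ (1/α) • ξ ω) ∂μ).re ≤ 1 := by
      intro a ha
      have h1 := Complex.re_le_norm (∫ ω, χ (a ^ (1/α) • ξ ω) ∂μ)
      exact le_trans h1 (aux_norm_int_le μ (fun ω => hbd χ hχ _))
    have hrpow := aux_cauchy_rpow (fun a => (∫ ω, χ (a ^ (1/α) • ξ ω) ∂μ).re)
      hre_nn hre_le hmulRe
    have hu1 : (∫ ω, χ ((1:ℝ) ^ (1/α) • ξ ω) ∂μ).re = (∫ ω, χ (ξ ω) ∂μ).re := by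
      rw [hF1 χ]
    set c₀ : ℝ := (∫ ω, χ (ξ ω) ∂μ).re with hc₀
    have hc₀pos : 0 < c₀ := by
      have hne := hproper χ hχ
      have him0 : (∫ ω, χ (ξ ω) ∂μ).im = 0 := by
        have := hIm 1 one_pos
        rwa [hF1 χ] at this
      have hnn0 : 0 ≤ c₀ := by
        have := hre_nn 1 one_pos
        rwa [hu1] at this
      rcases hnn0.lt_or_eq with h | h
      · exact h
      · exfalso
        apply hne
        apply Complex.ext
        · rw [Complex.zero_re, ← hc₀, ← h]
        · rw [him0, Complex.zero_im]
    have hc₀le : c₀ ≤ 1 := by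
      have := hre_le 1 one_pos
      rwa [hu1] at this
    -- key estimate for each n
    have hkey : ∀ n : ℕ, 1 - c₀ ≤ ((n:ℝ)+1) * ((1/((n:ℝ)+1)) ^ α * (-Real.log c₀)) := by
      intro n
      set t : ℝ := 1/((n:ℝ)+1) with htdef
      have ht : 0 < t := by positivity
      have hta : (0:ℝ) < t ^ α := Real.rpow_pos_of_pos ht _
      have hts : (t ^ α) ^ (1/α) = t := hrpinv t ht
      -- pointwise bound
      have hpt : ∀ ω, 1 - (χ (ξ ω)).re ≤ ((n:ℝ)+1) * (1 - (χ (t • ξ ω)).re) := by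
        intro ω
        have hz1 : ‖χ (t • ξ ω)‖ ≤ 1 := hbd χ hχ _
        have hz0 : 0 ≤ (χ (t • ξ ω)).re := hnn _
        have hzle : (χ (t • ξ ω)).re ≤ 1 := hre_le1 _
        have hpow : χ (ξ ω) = χ (t • ξ ω) ^ (n + 1) := by
          have h := aux_charpow hdistrib2 (hmulKt χ hχ) n t ht (ξ ω)
          rw [show (((n:ℝ)+1) * t) = 1 by rw [htdef]; field_simp, hone_smul] at h
          exact h
        have hzreal : χ (t • ξ ω) = ((χ (t • ξ ω)).re : ℂ) := by
          apply Complex.ext <;> simp [hreal]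
        obtain ⟨r, hr, hrval⟩ : ∃ r : ℝ, χ (t • ξ ω) = (r:ℂ) ∧ r = (χ (t • ξ ω)).re :=
          ⟨(χ (t • ξ ω)).re, hzreal, rfl⟩
        have hrepow : (χ (ξ ω)).re = ((χ (t • ξ ω)).re) ^ (n+1) := by
          rw [hpow, hr]
          simp [← Complex.ofReal_pow]
        rw [hrepow]
        have := aux_one_sub_pow_le ((χ (t • ξ ω)).re) hz0 hzle (n+1)
        push_cast at this ⊢
        linarith
      -- integrate
      have hint1 : Integrable (fun ω => (χ (ξ ω)).re) μ := by
        have := (Complex.reCLM : ℂ →L[ℝ] ℝ).integrable_comp hχint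
        simpa using this
      have hmono := integral_mono
        ((integrable_const 1).sub hint1)
        (((integrable_const 1).sub (hint_re t ht)).const_mul (((n:ℝ)+1)))
        hpt
      simp only [Pi.sub_apply] at hmono
      rw [integral_sub (integrable_const 1) hint1] at hmono
      rw [MeasureTheory.integral_const_mul] at hmono
      rw [integral_sub (integrable_const 1) (hint_re t ht)] at hmono
      simp only [integral_const, measure_univ, probReal_univ, ENNReal.toReal_one, smul_eq_mul, one_mul] at hmono
      rw [hre_int _ hχint, hre_int _ (hint_t t ht)] at hmono
      -- identify ∫ χ (t • ξ) with the value at t ^ α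
      have hid : (∫ ω, χ (t • ξ ω) ∂μ).re = c₀ ^ (t ^ α) := by
        have h2 := hrpow (t ^ α) hta
        rw [hts] at h2
        rw [h2, hu1]
      rw [hid] at hmono
      have hb2 : 1 - c₀ ^ (t ^ α) ≤ (t ^ α) * (-Real.log c₀) :=
        aux_one_sub_rpow_le hc₀pos hc₀le (le_of_lt hta)
      have hnn1 : (0:ℝ) ≤ (n:ℝ)+1 := by positivity
      calc 1 - c₀ ≤ ((n:ℝ)+1) * (1 - c₀ ^ (t ^ α)) := hmono
        _ ≤ ((n:ℝ)+1) * ((t ^ α) * (-Real.log c₀)) := by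
            apply mul_le_mul_of_nonneg_left hb2 hnn1
    -- the right-hand side tends to 0
    have hlim : Tendsto (fun n : ℕ => ((n:ℝ)+1) * ((1/((n:ℝ)+1)) ^ α * (-Real.log c₀)))
        atTop (𝓝 0) := by
      have heq : ∀ n : ℕ, ((n:ℝ)+1) * ((1/((n:ℝ)+1)) ^ α * (-Real.log c₀))
          = (-Real.log c₀) * ((n:ℝ)+1) ^ (-(α - 1)) := by
        intro n
        have hx : (0:ℝ) < (n:ℝ)+1 := by positivity
        rw [one_div, Real.inv_rpow hx.le, ← Real.rpow_neg hx.le]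
        rw [show -(α - 1) = 1 + (-α) by ring, Real.rpow_add hx, Real.rpow_one]
        ring
      simp only [heq]
      have h1 : Tendsto (fun n : ℕ => ((n:ℝ)+1)) atTop atTop :=
        tendsto_atTop_add_const_right atTop 1 tendsto_natCast_atTop_atTop
      have h2 : Tendsto (fun x : ℝ => x ^ (-(α - 1))) atTop (𝓝 0) :=
        tendsto_rpow_neg_atTop (by linarith)
      have h3 := (h2.comp h1).const_mul (-Real.log c₀)
      simpa using h3
    have hfin : 1 - c₀ ≤ 0 := ge_of_tendsto' hlim hkey
    have hc₀1 : c₀ = 1 := le_antisymm hc₀le (by linarith)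
    -- conclude a.e. equality with 1
    have hzero : ∫ ω, (1 - (χ (ξ ω)).re) ∂μ = 0 := by
      have hint1 : Integrable (fun ω => (χ (ξ ω)).re) μ := by
        have := (Complex.reCLM : ℂ →L[ℝ] ℝ).integrable_comp hχint
        simpa using this
      rw [integral_sub (integrable_const 1) hint1]
      simp only [integral_const, measure_univ, probReal_univ, ENNReal.toReal_one, smul_eq_mul, one_mul]
      rw [hre_int _ hχint, ← hc₀]
      rw [hc₀1]; ring
    have hint1 : Integrable (fun ω => (χ (ξ ω)).re) μ := by
      have := (Complex.reCLM : ℂ →L[ℝ] ℝ).integrable_comp hχint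
      simpa using this
    have hae := (integral_eq_zero_iff_of_nonneg
      (fun ω => by
        simp only [Pi.sub_apply, Pi.zero_apply, Pi.one_apply]
        have := hre_le1 (ξ ω); linarith)
      ((integrable_const 1).sub hint1)).1 (by
        rw [← hzero]
        congr 1)
    filter_upwards [hae] with ω hω
    simp only [Pi.sub_apply, Pi.one_apply, Pi.zero_apply] at hω
    exact aux_eq_one_of_re (hbd χ hχ _) (by linarith)
  · -- Part (iii) : pointed + condition E → 0 < α
    intro o ho hE
    by_contra hcon
    push_neg at hcon
    have hneg : α < 0 := lt_of_le_of_ne hcon hα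
    have h1α : 1/α < 0 := div_neg_of_pos_of_neg one_pos hneg
    have hrt : Tendsto (fun x : ℝ => x ^ (1/α)) atTop (𝓝 0) := by
      have := tendsto_rpow_neg_atTop (y := -(1/α)) (by linarith)
      simpa [neg_neg] using this
    -- a nonzero point in the range of ξ
    have hx1 : ∃ ω₁ : Ω, ξ ω₁ ≠ 0 := by
      by_contra h
      push_neg at h
      have h2 : {ω | ξ ω = (0:K)} = Set.univ := by ext ω; simp [h ω]
      rw [h2, measure_univ] at hnontriv
      exact lt_irrefl _ hnontriv
    obtain ⟨ω₁, hω₁⟩ := hx1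
    -- the origin is absorbed by addition : o + x₁ = x₁
    have hox : o + ξ ω₁ = ξ ω₁ := by
      have h1 : Tendsto (fun a : ℝ => (a + 1) • (ξ ω₁)) (𝓝[>] (0:ℝ)) (𝓝 (o + ξ ω₁)) := by
        have h3 := ho (ξ ω₁) hω₁
        have h4 : ContinuousAt (fun p : K × K => p.1 + p.2) (o, ξ ω₁) :=
          hadd_cont.continuousAt
        have h2 : Tendsto (fun a : ℝ => a • (ξ ω₁) + ξ ω₁) (𝓝[>] (0:ℝ)) (𝓝 (o + ξ ω₁)) := by
          have h5 : Tendsto (fun a : ℝ => ((a • ξ ω₁, ξ ω₁) : K × K)) (𝓝[>] (0:ℝ))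
              (𝓝 ((o, ξ ω₁) : K × K)) := h3.prodMk_nhds tendsto_const_nhds
          exact h4.tendsto.comp h5
        apply h2.congr'
        filter_upwards [self_mem_nhdsWithin] with a ha
        rw [hdistrib2 a 1 ha one_pos, hone_smul]
      have h5 : Tendsto (fun a : ℝ => (a + 1) • (ξ ω₁)) (𝓝[>] (0:ℝ)) (𝓝 (ξ ω₁)) := by
        have hca : ContinuousAt (fun p : ℝ × K => p.1 • p.2) ((1:ℝ), ξ ω₁) :=
          hsmul_cont.continuousAt ((isOpen_Ioi.prod isOpen_univ).mem_nhds
            (Set.mem_prod.mpr ⟨Set.mem_Ioi.mpr one_pos, Set.mem_univ _⟩))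
        have h6 : Tendsto (fun a : ℝ => (((a + 1 : ℝ), ξ ω₁) : ℝ × K)) (𝓝[>] (0:ℝ))
            (𝓝 (((1:ℝ), ξ ω₁) : ℝ × K)) := by
          apply Tendsto.mono_left _ nhdsWithin_le_nhds
          have h7 : Tendsto (fun a : ℝ => a + 1) (𝓝 (0:ℝ)) (𝓝 (1:ℝ)) := by
            have := (continuous_add_right (1:ℝ)).tendsto (0:ℝ)
            simpa using this
          exact h7.prodMk_nhds tendsto_const_nhds
        have h7 := hca.tendsto.comp h6
        simp only [Function.comp] at h7
        rw [hone_smul] at h7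
        exact h7
      exact tendsto_nhds_unique h1 h5
    apply hμcontr
    intro χ hχC
    have hχ : χ ∈ Kt := hCsub hχC
    have hχm : Measurable χ := hmeasχ χ hχ
    obtain ⟨χ', χ'', hmod, harg, hfx⟩ := hfac χ hχ
    have hm' : Measurable χ' := by
      rcases hmod.2.2.2.2 with h | h
      · exact h.measurable
      · exact h.measurable
    have hcont'' : Continuous χ'' := harg.2.2.2.2
    have hχ''o : χ'' o = 1 := by
      have h1 := harg.2.2.1 o (ξ ω₁)
      rw [hox] at h1
      have h2 : χ'' (ξ ω₁) ≠ 0 := by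
        intro h3
        have := harg.1 (ξ ω₁)
        rw [h3] at this
        simp at this
      exact mul_right_cancel₀ (b := χ'' (ξ ω₁)) h2
        (show χ'' o * χ'' (ξ ω₁) = 1 * χ'' (ξ ω₁) by rw [one_mul]; exact h1.symm)
    have hmodpow : ∀ x : K, ∀ s : ℝ, 0 < s → χ' (s • x) = (χ' x) ^ s := by
      intro x s hs
      have := aux_cauchy_rpow (fun s => χ' (s • x))
        (fun t ht => (hmod.1 (t • x)).1)
        (fun t ht => (hmod.1 (t • x)).2)
        (fun a b ha hb => by
          rw [hdistrib2 a b ha hb, hmod.2.2.1]) s hs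
      simp only [hone_smul] at this
      exact this
    -- the limit of the Laplace transform along sequences growing to infinity
    have hmeas_s : MeasurableSet {ω | χ' (ξ ω) ≠ 0} := by
      have h1 : {ω | χ' (ξ ω) ≠ 0} = (fun ω => χ' (ξ ω)) ⁻¹' ({0}ᶜ) := by
        ext ω; simp
      rw [h1]
      exact (hm'.comp hξmeas) (measurableSet_singleton 0).compl
    have hgint : ∫ ω, (if χ' (ξ ω) = 0 then (0:ℂ) else 1) ∂μ
        = ((μ {ω | χ' (ξ ω) ≠ 0}).toReal : ℂ) := by
      have hgeq : (fun ω => if χ' (ξ ω) = 0 then (0:ℂ) else 1)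
          = Set.indicator {ω | χ' (ξ ω) ≠ 0} (fun _ => (1:ℂ)) := by
        funext ω
        by_cases h : χ' (ξ ω) = 0 <;> simp [Set.indicator, h]
      rw [hgeq, integral_indicator_const _ hmeas_s]
      simp [Complex.real_smul, Measure.real]
    have hlimq : ∀ (a : ℕ → ℝ), (∀ n, 0 < a n) → Tendsto a atTop atTop →
        Tendsto (fun n => ∫ ω, χ ((a n) ^ (1/α) • ξ ω) ∂μ) atTop
          (𝓝 (((μ {ω | χ' (ξ ω) ≠ 0}).toReal : ℂ))) := by
      intro a hapos hatop
      have hs : ∀ n, 0 < (a n) ^ (1/α) := fun n => Real.rpow_pos_of_pos (hapos n) _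
      have hstend0 : Tendsto (fun n => (a n) ^ (1/α)) atTop (𝓝 0) := hrt.comp hatop
      have hstendW : Tendsto (fun n => (a n) ^ (1/α)) atTop (𝓝[>] (0:ℝ)) := by
        rw [tendsto_nhdsWithin_iff]
        exact ⟨hstend0, Filter.Eventually.of_forall (fun n => hs n)⟩
      have hFmeas : ∀ n : ℕ, AEStronglyMeasurable (fun ω => χ ((a n) ^ (1/α) • ξ ω)) μ :=
        fun n => ((hχm.comp (hsmul_cont' _ (hs n)).measurable).comp
          hξmeas).aestronglyMeasurable
      have hbnd : ∀ n : ℕ, ∀ᵐ ω ∂μ, ‖χ ((a n) ^ (1/α) • ξ ω)‖ ≤ (1:ℝ) :=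
        fun n => ae_of_all _ (fun ω => hbd χ hχ _)
      have hptw : ∀ᵐ ω ∂μ, Tendsto (fun n => χ ((a n) ^ (1/α) • ξ ω)) atTop
          (𝓝 (if χ' (ξ ω) = 0 then (0:ℂ) else 1)) := by
        apply ae_of_all
        intro ω
        by_cases hξ0 : ξ ω = 0
        · have heq : ∀ n : ℕ, χ ((a n) ^ (1/α) • ξ ω) = 1 := by
            intro n
            rw [hξ0, hsmul_e _ (hs n), hone χ hχ]
          have hg1 : (if χ' (ξ ω) = 0 then (0:ℂ) else 1) = 1 := by
            rw [if_neg]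
            rw [hξ0, hmod.2.1]
            norm_num
          rw [hg1]
          exact tendsto_const_nhds.congr (fun n => (heq n).symm)
        · by_cases h0' : χ' (ξ ω) = 0
          · have heq : ∀ n : ℕ, χ ((a n) ^ (1/α) • ξ ω) = 0 := by
              intro n
              rw [hfx, hmodpow (ξ ω) _ (hs n), h0', Real.zero_rpow (ne_of_gt (hs n))]
              simp
            rw [if_pos h0']
            exact tendsto_const_nhds.congr (fun n => (heq n).symm)
          · have hc : 0 < χ' (ξ ω) := lt_of_le_of_ne (hmod.1 (ξ ω)).1 (Ne.symm h0')
            have hsm : Tendsto (fun n => (a n) ^ (1/α) • ξ ω) atTop (𝓝 o) :=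
              (ho (ξ ω) hξ0).comp hstendW
            have h2 : Tendsto (fun n => χ'' ((a n) ^ (1/α) • ξ ω)) atTop (𝓝 1) := by
              have := (hcont''.tendsto o).comp hsm
              rwa [hχ''o] at this
            have h1 : Tendsto (fun n => ((χ' (ξ ω) ^ ((a n) ^ (1/α)) : ℝ) : ℂ)) atTop
                (𝓝 1) := by
              have hlog : Tendsto (fun n => Real.log (χ' (ξ ω)) * (a n) ^ (1/α)) atTop
                  (𝓝 0) := by
                have := hstend0.const_mul (Real.log (χ' (ξ ω)))
                simpa using this
              have hexp := (Real.continuous_exp.tendsto 0).comp hlog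
              rw [Real.exp_zero] at hexp
              have heq2 : ∀ n : ℕ, Real.exp (Real.log (χ' (ξ ω)) * (a n) ^ (1/α))
                  = χ' (ξ ω) ^ ((a n) ^ (1/α)) :=
                fun n => (Real.rpow_def_of_pos hc _).symm
              have h4 := hexp.congr heq2
              have h5 := (Complex.continuous_ofReal.tendsto 1).comp h4
              exact h5
            have hmulT := h1.mul h2
            rw [one_mul] at hmulT
            have heq : ∀ n : ℕ, χ ((a n) ^ (1/α) • ξ ω)
                = ((χ' (ξ ω) ^ ((a n) ^ (1/α)) : ℝ) : ℂ) * χ'' ((a n) ^ (1/α) • ξ ω) := by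
              intro n
              rw [hfx, hmodpow (ξ ω) _ (hs n)]
            rw [if_neg h0']
            exact hmulT.congr (fun n => (heq n).symm)
      have hDCT := MeasureTheory.tendsto_integral_of_dominated_convergence
        (F := fun n ω => χ ((a n) ^ (1/α) • ξ ω))
        (f := fun ω => if χ' (ξ ω) = 0 then (0:ℂ) else 1)
        (bound := fun _ => (1:ℝ)) hFmeas (integrable_const 1) hbnd hptw
      rwa [hgint] at hDCT
    -- q is nonzero
    have hqne : (((μ {ω | χ' (ξ ω) ≠ 0}).toReal : ℂ)) ≠ 0 := by
      intro h
      have h0 : (μ {ω | χ' (ξ ω) ≠ 0}).toReal = 0 := by exact_mod_cast h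
      have hfin : μ {ω | χ' (ξ ω) ≠ 0} ≠ ⊤ := measure_ne_top μ _
      have hμ0 : μ {ω | χ' (ξ ω) ≠ 0} = 0 := by
        rcases (ENNReal.toReal_eq_zero_iff _).1 h0 with h | h
        · exact h
        · exact absurd h hfin
      have hae0 : ∀ᵐ ω ∂μ, χ (ξ ω) = 0 := by
        have h3 : ∀ᵐ ω ∂μ, ¬ (χ' (ξ ω) ≠ 0) := by
          rw [ae_iff]
          simpa [not_not] using hμ0
        filter_upwards [h3] with ω hω
        push_neg at hω
        rw [hfx (ξ ω), hω]
        simp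
      have h4 : ∫ ω, χ (ξ ω) ∂μ = 0 := by
        rw [integral_congr_ae hae0, integral_zero]
      exact hproper χ hχ h4
    -- the Laplace transform is identically one
    have hnat : Tendsto (fun n : ℕ => (n:ℝ)+1) atTop atTop :=
      tendsto_atTop_add_const_right atTop 1 tendsto_natCast_atTop_atTop
    have hlim1 := hlimq (fun n => (n:ℝ)+1) (fun n => by positivity) hnat
    have hFone : (∫ ω, χ ((1:ℝ) ^ (1/α) • ξ ω) ∂μ) = 1 := by
      have hlim2 := hlimq (fun n => 1 + ((n:ℝ)+1)) (fun n => by positivity)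
        (tendsto_atTop_add_const_left atTop 1 hnat)
      have hmul : ∀ n : ℕ, (∫ ω, χ ((1 + ((n:ℝ)+1)) ^ (1/α) • ξ ω) ∂μ)
          = (∫ ω, χ ((1:ℝ) ^ (1/α) • ξ ω) ∂μ) * (∫ ω, χ (((n:ℝ)+1) ^ (1/α) • ξ ω) ∂μ) :=
        fun n => hK1 χ hχ 1 _ one_pos (by positivity)
      have hlim3 : Tendsto (fun n : ℕ => (∫ ω, χ ((1 + ((n:ℝ)+1)) ^ (1/α) • ξ ω) ∂μ))
          atTop (𝓝 ((∫ ω, χ ((1:ℝ) ^ (1/α) • ξ ω) ∂μ)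
            * ((μ {ω | χ' (ξ ω) ≠ 0}).toReal : ℂ))) := by
        have := tendsto_const_nhds (x := ∫ ω, χ ((1:ℝ) ^ (1/α) • ξ ω) ∂μ)
          (f := atTop (α := ℕ)) |>.mul hlim1
        exact this.congr (fun n => (hmul n).symm)
      have huniq := tendsto_nhds_unique hlim3 hlim2
      exact mul_right_cancel₀ hqne (by rw [huniq, one_mul])
    rw [hF1 χ] at hFone
    have hconst := aux_ae_const ((hχm.comp hξmeas).aestronglyMeasurable)
      (fun ω => hbd χ hχ _)
      (by show ‖∫ ω, χ (ξ ω) ∂μ‖ = 1; rw [hFone]; norm_num)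
    filter_upwards [hconst] with ω hω
    simp only [Function.comp] at hω
    rw [hω]
    exact hFone
end
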